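/- arXiv:1211.1498 — 3 statements merged into one kernel-verified Lean document; each statement's English description precedes it below -/
import Mathlib

section
/- Let r ≥ 1 be an integer, p a real number with 1 ≤ p < ∞, K > 0, A > 0, and λ : ℤ → ℝ a strictly increasing sequence with λ_n → ±∞ as n → ±∞ and λ_{n+1} − λ_n ≤ K for all n. Let T assign to each f : ℤ → ℂ a function Tf : ℝ → ℂ, and suppose that for every f with ‖f‖_{L^r_p|Λ} < ∞, Tf is an admissible r-extension of f (with associated r-th derivative (Tf)^{(r)}) satisfying (∫_ℝ |(Tf)^{(r)}|^p)^{1/p} ≤ A ‖f‖_{L^r_p|Λ}. Then there is a constant B depending only on r, K, A such that for every f with ‖f‖_{W^r_p|Λ} < ∞ one has (∫_ℝ |Tf|^p + ∫_ℝ |(Tf)^{(r)}|^p)^{1/p} ≤ B ‖f‖_{W^r_p|Λ}. -/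
open MeasureTheory
open scoped ENNReal NNReal

/-- `lam` is a strictly increasing sequence tending to `-∞` at `-∞` and `+∞` at `+∞`. -/
def GoodSeq (lam : ℤ → ℝ) : Prop :=
  StrictMono lam ∧ Filter.Tendsto lam Filter.atBot Filter.atBot ∧
    Filter.Tendsto lam Filter.atTop Filter.atTop

/-- `F` is an admissible `r`-extension of `f : ℤ → ℂ`, with associated `r`-th derivative `G`:
`F` is `(r-1)` times continuously differentiable, `G` is locally integrable,
`F^{(r-1)}(b) - F^{(r-1)}(a) = ∫_a^b G` for all `a ≤ b`, and `F (lam n) = f n` for all `n`. -/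
def AdmissibleExt (r : ℕ) (lam : ℤ → ℝ) (f : ℤ → ℂ) (F G : ℝ → ℂ) : Prop :=
  ContDiff ℝ (r - 1 : ℕ) F ∧ MeasureTheory.LocallyIntegrable G volume ∧
  (∀ a b : ℝ, a ≤ b →
      iteratedDeriv (r - 1) F b - iteratedDeriv (r - 1) F a = ∫ t in a..b, G t) ∧
  (∀ n : ℤ, F (lam n) = f n)

/-- Homogeneous trace seminorm `‖f‖_{L^r_p|Λ}`, valued in `[0,∞]`. -/
noncomputable def traceL (r : ℕ) (p : ℝ) (lam : ℤ → ℝ) (f : ℤ → ℂ) : ℝ≥0∞ :=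
  ⨅ (F : ℝ → ℂ) (G : ℝ → ℂ) (_ : AdmissibleExt r lam f F G),
    (∫⁻ t, ENNReal.ofReal (‖G t‖ ^ p)) ^ (1 / p)

/-- Trace norm `‖f‖_{W^r_p|Λ}`, valued in `[0,∞]`. -/
noncomputable def traceW (r : ℕ) (p : ℝ) (lam : ℤ → ℝ) (f : ℤ → ℂ) : ℝ≥0∞ :=
  ⨅ (F : ℝ → ℂ) (G : ℝ → ℂ) (_ : AdmissibleExt r lam f F G),
    ((∫⁻ t, ENNReal.ofReal (‖F t‖ ^ p)) +
      (∫⁻ t, ENNReal.ofReal (‖G t‖ ^ p))) ^ (1 / p)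

/-- First order divided difference `f[λ_n, λ_{n+1}]`. -/
noncomputable def dd1 (lam : ℤ → ℝ) (f : ℤ → ℂ) (n : ℤ) : ℂ :=
  (f (n + 1) - f n) / ((lam (n + 1) - lam n : ℝ) : ℂ)

/-- Second order divided difference `f[λ_n, λ_{n+1}, λ_{n+2}]`. -/
noncomputable def dd2 (lam : ℤ → ℝ) (f : ℤ → ℂ) (n : ℤ) : ℂ :=
  (dd1 lam f (n + 1) - dd1 lam f n) / ((lam (n + 2) - lam n : ℝ) : ℂ)

/-- Divided difference `f[λ_n, …, λ_{n+k}]` of order `k`. -/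
noncomputable def ddiv (lam : ℤ → ℝ) (f : ℤ → ℂ) (n : ℤ) (k : ℕ) : ℂ :=
  ∑ i ∈ Finset.range (k + 1),
    f (n + (i : ℤ)) /
      ∏ j ∈ (Finset.range (k + 1)).erase i,
        ((lam (n + (i : ℤ)) - lam (n + (j : ℤ)) : ℝ) : ℂ)

/-- Divided difference of values `v` at (distinct) points `x`. -/
noncomputable def ddPts {m : ℕ} (x : Fin m → ℝ) (v : Fin m → ℂ) : ℂ :=
  ∑ i, v i / ∏ j ∈ Finset.univ.erase i, ((x i - x j : ℝ) : ℂ)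

/-- `F` is of class `W^r` on `[a,b]` with `r`-th derivative `G`. -/
def ClassW (r : ℕ) (a b : ℝ) (F G : ℝ → ℂ) : Prop :=
  ContDiffOn ℝ (r - 1 : ℕ) F (Set.Icc a b) ∧ MeasureTheory.IntegrableOn G (Set.Icc a b) ∧
  ∀ x y : ℝ, a ≤ x → x ≤ y → y ≤ b →
    iteratedDerivWithin (r - 1) F (Set.Icc a b) y -
      iteratedDerivWithin (r - 1) F (Set.Icc a b) x = ∫ t in x..y, G t

/-- `‖f‖_{eq,L}^p`, valued in `[0,∞]`. -/
noncomputable def eqLp (r : ℕ) (p : ℝ) (lam : ℤ → ℝ) (f : ℤ → ℂ) : ℝ≥0∞ :=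
  ∑' n : ℤ, ENNReal.ofReal ((lam (n + (r : ℤ)) - lam n) * ‖ddiv lam f n r‖ ^ p)

/-- `‖f‖_{eq,W}^p`, valued in `[0,∞]`. -/
noncomputable def eqWp (r : ℕ) (p : ℝ) (lam : ℤ → ℝ) (f : ℤ → ℂ) : ℝ≥0∞ :=
  eqLp r p lam f +
    ∑ j ∈ Finset.range r, ∑' n : ℤ,
      ENNReal.ofReal ((lam (n + (r : ℤ)) - lam n) ^ ((j : ℝ) * p + 1) *
        ‖ddiv lam f n j‖ ^ p)

/-- The cubic `q(x) = 4(x² - x³)`. -/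
noncomputable def qcub : ℝ → ℝ := fun x => 4 * (x ^ 2 - x ^ 3)

/-- `α_n(f) = (h_n f[λ_{n-1},λ_n] + h_{n-1} f[λ_n,λ_{n+1}])/(h_{n-1}+h_n)`. -/
noncomputable def alphaN (lam : ℤ → ℝ) (f : ℤ → ℂ) (n : ℤ) : ℂ :=
  (((lam (n + 1) - lam n : ℝ) : ℂ) * dd1 lam f (n - 1) +
      ((lam n - lam (n - 1) : ℝ) : ℂ) * dd1 lam f n) /
    ((lam (n + 1) - lam (n - 1) : ℝ) : ℂ)

/-- The formula for `Φ₁ f` on `[λ_n, λ_{n+1}]`. -/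
noncomputable def phi1P (lam : ℤ → ℝ) (f : ℤ → ℂ) (n : ℤ) (x : ℝ) : ℂ :=
  f n * (((lam (n + 1) - x) / (lam (n + 1) - lam n) : ℝ) : ℂ) +
    f (n + 1) * (((x - lam n) / (lam (n + 1) - lam n) : ℝ) : ℂ)

/-- The formula for `Φ₂ f` on `[μ_{n-1}, λ_n]`. -/
noncomputable def phi2L (lam : ℤ → ℝ) (f : ℤ → ℂ) (n : ℤ) (x : ℝ) : ℂ :=
  f n + alphaN lam f n * ((x - lam n : ℝ) : ℂ) +
    (((lam n - lam (n - 1)) ^ 2 : ℝ) : ℂ) * dd2 lam f (n - 1) *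
      ((qcub ((lam n - x) / (lam n - lam (n - 1))) : ℝ) : ℂ)

/-- The formula for `Φ₂ f` on `[λ_n, μ_n]`. -/
noncomputable def phi2R (lam : ℤ → ℝ) (f : ℤ → ℂ) (n : ℤ) (x : ℝ) : ℂ :=
  f n + alphaN lam f n * ((x - lam n : ℝ) : ℂ) +
    (((lam (n + 1) - lam n) ^ 2 : ℝ) : ℂ) * dd2 lam f (n - 1) *
      ((qcub ((x - lam n) / (lam (n + 1) - lam n)) : ℝ) : ℂ)


private lemma gap_bound {lam : ℤ → ℝ} {K : ℝ} (hgap : ∀ n : ℤ, lam (n + 1) - lam n ≤ K)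
    {a b : ℤ} (hab : a ≤ b) : lam b - lam a ≤ ((b - a : ℤ) : ℝ) * K := by
  refine Int.le_induction (motive := fun b _ => lam b - lam a ≤ ((b - a : ℤ) : ℝ) * K) (by simp)
    (fun n hn ih => ?_) b hab
  have h := hgap n
  have he : ((n + 1 - a : ℤ) : ℝ) = ((n - a : ℤ) : ℝ) + 1 := by push_cast; ring
  rw [he]
  linarith

private lemma exists_bracket {lam : ℤ → ℝ} (hmono : StrictMono lam)
    (hbot : Filter.Tendsto lam Filter.atBot Filter.atBot)
    (htop : Filter.Tendsto lam Filter.atTop Filter.atTop) (x : ℝ) :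
    ∃ n : ℤ, lam n ≤ x ∧ x ≤ lam (n + 1) := by
  classical
  obtain ⟨M, hM⟩ : ∃ M : ℤ, x < lam M := (htop.eventually_gt_atTop x).exists
  obtain ⟨m, hm⟩ : ∃ m : ℤ, lam m ≤ x := by
    obtain ⟨m, hm⟩ := (hbot.eventually_lt_atBot x).exists
    exact ⟨m, hm.le⟩
  obtain ⟨lb, hlb, hmin⟩ := Int.exists_least_of_bdd (P := fun k => x < lam k)
    ⟨m, fun z hz => by
      by_contra h
      push_neg at h
      exact absurd hz (not_lt.2 ((hmono h).le.trans hm))⟩ ⟨M, hM⟩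
  refine ⟨lb - 1, ?_, by simpa using hlb.le⟩
  by_contra h
  push_neg at h
  have := hmin _ h
  omega

private lemma key_bound (r' : ℕ) {K : ℝ} (hK : 0 < K) {lam : ℤ → ℝ} (hmono : StrictMono lam)
    (hbot : Filter.Tendsto lam Filter.atBot Filter.atBot)
    (htop : Filter.Tendsto lam Filter.atTop Filter.atTop)
    (hgap : ∀ n : ℤ, lam (n + 1) - lam n ≤ K)
    {u g : ℝ → ℝ} (hu : ContDiff ℝ (r' : ℕ) u)
    (hgi : ∀ a b : ℝ, IntegrableOn g (Set.Icc a b) volume)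
    (hz : ∀ n : ℤ, u (lam n) = 0)
    (hftc : ∀ a b : ℝ, a ≤ b →
      iteratedDeriv r' u b - iteratedDeriv r' u a = ∫ t in a..b, g t) (x : ℝ) :
    |u x| ≤ (2 ^ r' * K) ^ r' *
      ∫ t in Set.Icc (x - ((r' : ℝ) + 1) * (2 ^ r' * K)) (x + ((r' : ℝ) + 1) * (2 ^ r' * K)),
        |g t| := by
  set L : ℝ := 2 ^ r' * K with hLdef
  have h2 : (1 : ℝ) ≤ 2 ^ r' := one_le_pow₀ one_le_two
  have hL : 0 < L := by positivity
  have hKL : K ≤ L := by nlinarith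
  -- a chain of zeros of the iterated derivatives
  have zeros : ∀ k : ℕ, k ≤ r' → ∀ n : ℤ, ∃ ξ : ℝ,
      lam n ≤ ξ ∧ ξ ≤ lam (n + (2 ^ k - 1)) ∧ iteratedDeriv k u ξ = 0 := by
    intro k
    induction k with
    | zero =>
        intro _ n
        exact ⟨lam n, le_rfl, by norm_num, by simpa using hz n⟩
    | succ k ih =>
        intro hk n
        have hk' : k ≤ r' := Nat.le_of_succ_le hk
        obtain ⟨ξ₁, h11, h12, h13⟩ := ih hk' n
        obtain ⟨ξ₂, h21, h22, h23⟩ := ih hk' (n + 2 ^ k)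
        have he : n + 2 ^ k + (2 ^ k - 1) = n + (2 ^ (k + 1) - 1) := by ring
        rw [he] at h22
        have hlt : ξ₁ < ξ₂ :=
          lt_of_le_of_lt h12 (lt_of_lt_of_le (hmono (by omega)) h21)
        have hcont : ContinuousOn (iteratedDeriv k u) (Set.Icc ξ₁ ξ₂) :=
          (hu.continuous_iteratedDeriv k (by exact_mod_cast hk')).continuousOn
        obtain ⟨c, hc, hc0⟩ := exists_deriv_eq_zero hlt hcont (by rw [h13, h23])
        refine ⟨c, le_trans h11 hc.1.le, le_trans hc.2.le h22, ?_⟩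
        rw [iteratedDeriv_succ]
        exact hc0
  -- a zero of the k-th derivative within distance L of any point
  have nearzero : ∀ k : ℕ, k ≤ r' → ∀ y : ℝ, ∃ ξ : ℝ,
      |ξ - y| ≤ L ∧ iteratedDeriv k u ξ = 0 := by
    intro k hk y
    obtain ⟨n, hn1, hn2⟩ := exists_bracket hmono hbot htop y
    obtain ⟨ξ, hξ1, hξ2, hξ0⟩ := zeros k hk (n + 1 - (2 ^ k - 1))
    have he : n + 1 - (2 ^ k - 1) + (2 ^ k - 1) = n + 1 := by ring
    rw [he] at hξ2
    have hgap1 : lam (n + 1) - lam n ≤ K := hgap n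
    have hgapc : lam (n + 1) - lam (n + 1 - (2 ^ k - 1)) ≤ ((2 : ℝ) ^ k - 1) * K := by
      have h1 : (1 : ℤ) ≤ 2 ^ k := one_le_pow₀ (by norm_num)
      have := gap_bound hgap (a := n + 1 - (2 ^ k - 1)) (b := n + 1) (by omega)
      have he2 : ((n + 1 - (n + 1 - (2 ^ k - 1)) : ℤ) : ℝ) = (2 : ℝ) ^ k - 1 := by
        push_cast
        ring
      rwa [he2] at this
    have h2k : (2 : ℝ) ^ k ≤ 2 ^ r' := by
      apply pow_le_pow_right₀ one_le_two hk
    refine ⟨ξ, abs_sub_le_iff.2 ⟨?_, ?_⟩, hξ0⟩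
    · nlinarith
    · nlinarith
  -- monotonicity of window integrals
  have Imono : ∀ {a b a' b' : ℝ}, a' ≤ a → b ≤ b' →
      (∫ t in Set.Icc a b, |g t|) ≤ ∫ t in Set.Icc a' b', |g t| := by
    intro a b a' b' ha hb
    exact setIntegral_mono_set ((hgi a' b').abs)
      (Filter.Eventually.of_forall fun t => abs_nonneg _)
      (HasSubset.Subset.eventuallyLE (Set.Icc_subset_Icc ha hb))
  have Inonneg : ∀ a b : ℝ, 0 ≤ ∫ t in Set.Icc a b, |g t| := fun a b =>
    setIntegral_nonneg measurableSet_Icc fun t _ => abs_nonneg _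
  -- the downward induction
  have claim : ∀ j : ℕ, j ≤ r' → ∀ y : ℝ, |iteratedDeriv (r' - j) u y| ≤
      L ^ j * ∫ t in Set.Icc (y - ((j : ℝ) + 1) * L) (y + ((j : ℝ) + 1) * L), |g t| := by
    intro j
    induction j with
    | zero =>
        intro _ y
        obtain ⟨ξ, hξL, hξ0⟩ := nearzero r' le_rfl y
        rw [abs_sub_le_iff] at hξL
        have key : ∀ a b : ℝ, a ≤ b → y - L ≤ a → b ≤ y + L →
            |iteratedDeriv r' u b - iteratedDeriv r' u a| ≤
              ∫ t in Set.Icc (y - (0 + 1 : ℝ) * L) (y + (0 + 1 : ℝ) * L), |g t| := by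
          intro a b hab ha hb
          rw [hftc a b hab, intervalIntegral.integral_of_le hab, ← Real.norm_eq_abs]
          calc ‖∫ t in Set.Ioc a b, g t‖ ≤ ∫ t in Set.Ioc a b, ‖g t‖ :=
                norm_integral_le_integral_norm _
            _ ≤ ∫ t in Set.Icc (y - (0 + 1 : ℝ) * L) (y + (0 + 1 : ℝ) * L), |g t| := by
                simp only [Real.norm_eq_abs]
                refine setIntegral_mono_set ((hgi _ _).abs)
                  (Filter.Eventually.of_forall fun t => abs_nonneg _)
                  (HasSubset.Subset.eventuallyLE ?_)
                refine (Set.Ioc_subset_Icc_self).trans (Set.Icc_subset_Icc ?_ ?_) <;> linarith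
        rcases le_total ξ y with h | h
        · have := key ξ y h (by linarith) (by linarith)
          rw [hξ0, sub_zero] at this
          simpa using this
        · have := key y ξ h (by linarith) (by linarith)
          rw [hξ0, zero_sub, abs_neg] at this
          simpa using this
    | succ j ih =>
        intro hj y
        have hjr : j ≤ r' := Nat.le_of_succ_le hj
        set m : ℕ := r' - (j + 1) with hm
        have hm1 : m + 1 = r' - j := by omega
        have hmlt : m < r' := by omega
        obtain ⟨ξ, hξL, hξ0⟩ := nearzero m (by omega) y
        rw [abs_sub_le_iff] at hξL
        have hdiff : Differentiable ℝ (iteratedDeriv m u) :=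
          hu.differentiable_iteratedDeriv m (by exact_mod_cast hmlt)
        have hcont : Continuous (iteratedDeriv (m + 1) u) :=
          hu.continuous_iteratedDeriv (m + 1) (by exact_mod_cast (by omega : m + 1 ≤ r'))
        -- FTC between ξ and y
        have hFTC : ∀ a b : ℝ, ∫ t in a..b, iteratedDeriv (m + 1) u t =
            iteratedDeriv m u b - iteratedDeriv m u a := by
          intro a b
          rw [iteratedDeriv_succ]
          exact intervalIntegral.integral_deriv_eq_sub (fun t _ => hdiff t)
            (by rw [← iteratedDeriv_succ]; exact hcont.intervalIntegrable _ _)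
        set Cb : ℝ := L ^ j *
          ∫ t in Set.Icc (y - ((j : ℝ) + 2) * L) (y + ((j : ℝ) + 2) * L), |g t| with hCb
        have hCb0 : 0 ≤ Cb := mul_nonneg (by positivity) (Inonneg _ _)
        have hbd : ∀ t ∈ Set.uIoc ξ y, ‖iteratedDeriv (m + 1) u t‖ ≤ Cb := by
          intro t ht
          rw [Set.mem_uIoc] at ht
          have hty : y - L ≤ t ∧ t ≤ y + L := by
            rcases ht with ⟨h1, h2⟩ | ⟨h1, h2⟩ <;> constructor <;> linarith
          have := ih hjr t
          rw [← hm1] at this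
          rw [Real.norm_eq_abs]
          refine this.trans ?_
          rw [hCb]
          refine mul_le_mul_of_nonneg_left (Imono ?_ ?_) (by positivity) <;> · push_cast; linarith
        have hintbd : ‖∫ t in ξ..y, iteratedDeriv (m + 1) u t‖ ≤ Cb * |y - ξ| :=
          intervalIntegral.norm_integral_le_of_norm_le_const hbd
        have habs : |ξ - y| ≤ L := abs_sub_le_iff.2 hξL
        have : |iteratedDeriv m u y| ≤ Cb * L := by
          have h1 := hFTC ξ y
          have h2 : iteratedDeriv m u y = ∫ t in ξ..y, iteratedDeriv (m + 1) u t := by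
            rw [h1, hξ0, sub_zero]
          rw [h2, ← Real.norm_eq_abs]
          refine hintbd.trans ?_
          have : |y - ξ| ≤ L := by rw [abs_sub_comm]; exact habs
          exact mul_le_mul_of_nonneg_left this hCb0
        refine this.trans (le_of_eq ?_)
        have hc : ((j : ℝ) + 1 + 1) = (j : ℝ) + 2 := by ring
        push_cast
        rw [hc, hCb]
        ring
  have := claim r' le_rfl x
  rw [Nat.sub_self, iteratedDeriv_zero] at this
  exact this


private lemma holder_pow {s : Set ℝ} {h : ℝ → ℝ≥0∞}
    (hm : AEMeasurable h (volume.restrict s)) {p : ℝ} (hp : 1 ≤ p) :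
    (∫⁻ t in s, h t) ^ p ≤ (volume s) ^ (p - 1) * ∫⁻ t in s, h t ^ p := by
  rcases eq_or_lt_of_le hp with rfl | hp1
  · simp
  have hp0 : (0 : ℝ) < p := lt_trans zero_lt_one hp1
  have hpq : p.HolderConjugate (Real.conjExponent p) := Real.HolderConjugate.conjExponent hp1
  have H := ENNReal.lintegral_mul_le_Lp_mul_Lq (volume.restrict s) hpq hm
    (aemeasurable_const (b := (1 : ℝ≥0∞)))
  simp only [Pi.mul_apply, mul_one, ENNReal.one_rpow, setLIntegral_one] at H
  have H2 := ENNReal.rpow_le_rpow H hp0.le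
  rw [ENNReal.mul_rpow_of_nonneg _ _ hp0.le, ← ENNReal.rpow_mul, ← ENNReal.rpow_mul,
    one_div_mul_cancel hp0.ne', ENNReal.rpow_one] at H2
  have hq : (1 / Real.conjExponent p) * p = p - 1 := by
    rw [Real.conjExponent]
    field_simp
  rw [hq] at H2
  exact H2.trans (le_of_eq (mul_comm _ _))

private lemma lintegral_window {c : ℝ → ℝ≥0∞} (hc : AEMeasurable c volume) {R : ℝ} :
    ∫⁻ x, ∫⁻ t in Set.Icc (x - R) (x + R), c t = (∫⁻ t, c t) * ENNReal.ofReal (2 * R) := by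
  have hset : MeasurableSet {q : ℝ × ℝ | |q.1 - q.2| ≤ R} :=
    (isClosed_le (by fun_prop) continuous_const).measurableSet
  set S : Set (ℝ × ℝ) := {q : ℝ × ℝ | |q.1 - q.2| ≤ R} with hS
  set H : ℝ × ℝ → ℝ≥0∞ := S.indicator (fun q => c q.2) with hHdef
  have hH : AEMeasurable H (volume.prod volume) :=
    AEMeasurable.indicator (hc.comp_quasiMeasurePreserving Measure.quasiMeasurePreserving_snd) hset
  have step1 : ∀ x : ℝ, ∫⁻ t in Set.Icc (x - R) (x + R), c t = ∫⁻ t, H (x, t) := by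
    intro x
    rw [← lintegral_indicator measurableSet_Icc]
    congr 1
    funext t
    rw [hHdef, Set.indicator_apply, Set.indicator_apply]
    congr 1
    simp only [hS, Set.mem_setOf_eq, Set.mem_Icc, abs_le, eq_iff_iff]
    constructor <;> intro hh <;> constructor <;> linarith [hh.1, hh.2]
  have step3 : ∀ t : ℝ, ∫⁻ x, H (x, t) = c t * ENNReal.ofReal (2 * R) := by
    intro t
    have : (fun x => H (x, t)) = (Set.Icc (t - R) (t + R)).indicator (fun _ => c t) := by
      funext x
      rw [hHdef, Set.indicator_apply, Set.indicator_apply]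
      congr 1
      simp only [hS, Set.mem_setOf_eq, Set.mem_Icc, abs_le, eq_iff_iff]
      constructor <;> intro hh <;> constructor <;> linarith [hh.1, hh.2]
    rw [this, lintegral_indicator measurableSet_Icc, setLIntegral_const, Real.volume_Icc]
    congr 2
    ring
  calc ∫⁻ x, ∫⁻ t in Set.Icc (x - R) (x + R), c t = ∫⁻ x, ∫⁻ t, H (x, t) := by
        simp_rw [step1]
    _ = ∫⁻ t, ∫⁻ x, H (x, t) := lintegral_lintegral_swap hH
    _ = ∫⁻ t, c t * ENNReal.ofReal (2 * R) := by simp_rw [step3]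
    _ = (∫⁻ t, c t) * ENNReal.ofReal (2 * R) := lintegral_mul_const'' _ hc

private lemma mink {w u v : ℝ → ℂ} (hu : AEMeasurable u volume) (hv : AEMeasurable v volume)
    (hw : ∀ t, ‖w t‖ ≤ ‖u t‖ + ‖v t‖) {p : ℝ} (hp : 1 ≤ p) :
    (∫⁻ t, ENNReal.ofReal (‖w t‖ ^ p)) ^ (1 / p) ≤
      (∫⁻ t, ENNReal.ofReal (‖u t‖ ^ p)) ^ (1 / p) +
      (∫⁻ t, ENNReal.ofReal (‖v t‖ ^ p)) ^ (1 / p) := by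
  have hp0 : (0 : ℝ) < p := lt_of_lt_of_le zero_lt_one hp
  set fu : ℝ → ℝ≥0∞ := fun t => ENNReal.ofReal (‖u t‖) with hfu
  set fv : ℝ → ℝ≥0∞ := fun t => ENNReal.ofReal (‖v t‖) with hfv
  have hfum : AEMeasurable fu volume := by
    have := hu.norm
    simpa [hfu] using this.ennreal_ofReal
  have hfvm : AEMeasurable fv volume := by
    have := hv.norm
    simpa [hfv] using this.ennreal_ofReal
  have h1 : ∀ t, ENNReal.ofReal (‖w t‖ ^ p) ≤ ((fu + fv) t) ^ p := by
    intro t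
    rw [← ENNReal.ofReal_rpow_of_nonneg (by positivity) hp0.le]
    refine ENNReal.rpow_le_rpow ?_ hp0.le
    calc ENNReal.ofReal (‖w t‖) ≤
        ENNReal.ofReal (‖u t‖ + ‖v t‖) := ENNReal.ofReal_le_ofReal (hw t)
      _ = fu t + fv t := ENNReal.ofReal_add (by positivity) (by positivity)
  calc (∫⁻ t, ENNReal.ofReal (‖w t‖ ^ p)) ^ (1 / p) ≤
      (∫⁻ t, ((fu + fv) t) ^ p) ^ (1 / p) :=
        ENNReal.rpow_le_rpow (lintegral_mono h1) (by positivity)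
    _ ≤ (∫⁻ t, fu t ^ p) ^ (1 / p) + (∫⁻ t, fv t ^ p) ^ (1 / p) :=
        ENNReal.lintegral_Lp_add_le hfum hfvm hp
    _ = (∫⁻ t, ENNReal.ofReal (‖u t‖ ^ p)) ^ (1 / p) +
        (∫⁻ t, ENNReal.ofReal (‖v t‖ ^ p)) ^ (1 / p) := by
        simp_rw [hfu, hfv, ENNReal.ofReal_rpow_of_nonneg (norm_nonneg _) hp0.le]

private lemma iteratedDeriv_re {n i : ℕ} (hi : i ≤ n) {f : ℝ → ℂ} (hf : ContDiff ℝ (n : ℕ) f)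
    (x : ℝ) : iteratedDeriv i (fun y => (f y).re) x = (iteratedDeriv i f x).re := by
  have h := Complex.reCLM.iteratedFDeriv_comp_left (𝕜 := ℝ) (hf.contDiffAt (x := x)) (i := i) (by exact_mod_cast hi)
  rw [iteratedDeriv_eq_iteratedFDeriv, iteratedDeriv_eq_iteratedFDeriv]
  have he : (fun y => (f y).re) = ⇑Complex.reCLM ∘ f := rfl
  rw [he, h]
  rfl

private lemma iteratedDeriv_im {n i : ℕ} (hi : i ≤ n) {f : ℝ → ℂ} (hf : ContDiff ℝ (n : ℕ) f)
    (x : ℝ) : iteratedDeriv i (fun y => (f y).im) x = (iteratedDeriv i f x).im := by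
  have h := Complex.imCLM.iteratedFDeriv_comp_left (𝕜 := ℝ) (hf.contDiffAt (x := x)) (i := i) (by exact_mod_cast hi)
  rw [iteratedDeriv_eq_iteratedFDeriv, iteratedDeriv_eq_iteratedFDeriv]
  have he : (fun y => (f y).im) = ⇑Complex.imCLM ∘ f := rfl
  rw [he, h]
  rfl



private lemma traceL_le_traceW (r : ℕ) {p : ℝ} (hp : 0 < p) (lam : ℤ → ℝ) (f : ℤ → ℂ) :
    traceL r p lam f ≤ traceW r p lam f := by
  refine iInf_mono fun F => iInf_mono fun G => iInf_mono fun _ => ?_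
  exact ENNReal.rpow_le_rpow le_add_self (by positivity)



/-- if `T` assigns to each `f` with finite `L^r_p` trace seminorm an admissible
`r`-extension `Tf` (with `r`-th derivative `T'f`) with `(∫|(Tf)^{(r)}|^p)^{1/p} ≤ A ‖f‖_{L^r_p|Λ}`,
then there is `B` depending only on `r, K, A` with
`(∫|Tf|^p + ∫|(Tf)^{(r)}|^p)^{1/p} ≤ B ‖f‖_{W^r_p|Λ}` whenever `‖f‖_{W^r_p|Λ} < ∞`. -/
theorem stmt9 (r : ℕ) (hr : 1 ≤ r) (K A : ℝ) (hK : 0 < K) (hA : 0 < A) :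
    ∃ B : ℝ, 0 < B ∧
      ∀ p : ℝ, 1 ≤ p → ∀ lam : ℤ → ℝ, GoodSeq lam →
        (∀ n : ℤ, lam (n + 1) - lam n ≤ K) →
        ∀ T T' : (ℤ → ℂ) → ℝ → ℂ,
        (∀ f : ℤ → ℂ, traceL r p lam f < ⊤ →
          AdmissibleExt r lam f (T f) (T' f) ∧
          (∫⁻ t, ENNReal.ofReal (‖T' f t‖ ^ p)) ^ (1 / p) ≤
            ENNReal.ofReal A * traceL r p lam f) →
        ∀ f : ℤ → ℂ, traceW r p lam f < ⊤ →
          ((∫⁻ t, ENNReal.ofReal (‖T f t‖ ^ p)) +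
              ∫⁻ t, ENNReal.ofReal (‖T' f t‖ ^ p)) ^ (1 / p) ≤
            ENNReal.ofReal B * traceW r p lam f := by
  classical
  set L : ℝ := 2 ^ (r - 1) * K with hLdef
  set R : ℝ := (((r - 1 : ℕ) : ℝ) + 1) * L with hRdef
  set C : ℝ := 2 * L ^ (r - 1) with hCdef
  have hLpos : 0 < L := by positivity
  have hRpos : 0 < R := by positivity
  have hCpos : 0 < C := by positivity
  refine ⟨(C * (2 * R) + 1) * (A + 1), by positivity, ?_⟩
  intro p hp lam hgood hgapK T T' hT f hfin
  obtain ⟨hmono, hbot, htop⟩ := hgood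
  have hp0 : (0 : ℝ) < p := lt_of_lt_of_le zero_lt_one hp
  have hp0' : p ≠ 0 := hp0.ne'
  have hip : (0 : ℝ) ≤ 1 / p := by positivity
  have hfinL : traceL r p lam f < ⊤ := lt_of_le_of_lt (traceL_le_traceW r hp0 lam f) hfin
  obtain ⟨⟨hTcd, hT'loc, hTftc, hTval⟩, hTbd⟩ := hT f hfinL
  refine ENNReal.le_of_forall_pos_le_add fun ε' hε' _ => ?_
  set CC : ℝ≥0∞ := ENNReal.ofReal (C * (2 * R)) with hCC
  have hCCnt : CC + 1 ≠ ⊤ := by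
    simp [hCC]
  set ε : ℝ≥0∞ := (ε' : ℝ≥0∞) / (CC + 1) with hε
  have hεpos : 0 < ε := ENNReal.div_pos (by exact_mod_cast hε'.ne') hCCnt
  -- near-optimal extension
  have hex : ∃ F₀ G₀ : ℝ → ℂ, AdmissibleExt r lam f F₀ G₀ ∧
      ((∫⁻ t, ENNReal.ofReal (‖F₀ t‖ ^ p)) +
        (∫⁻ t, ENNReal.ofReal (‖G₀ t‖ ^ p))) ^ (1 / p) <
        traceW r p lam f + ε := by
    by_contra hcon
    push_neg at hcon
    have hle : traceW r p lam f + ε ≤ traceW r p lam f := by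
      rw [traceW]
      exact le_iInf fun F => le_iInf fun G => le_iInf fun hadm => hcon F G hadm
    exact absurd hle (not_le.2 (ENNReal.lt_add_right hfin.ne hεpos.ne'))
  obtain ⟨F₀, G₀, ⟨h₀cd, h₀loc, h₀ftc, h₀val⟩, hS⟩ := hex
  have hSF : (∫⁻ t, ENNReal.ofReal (‖F₀ t‖ ^ p)) ^ (1 / p) ≤
      traceW r p lam f + ε := le_trans (ENNReal.rpow_le_rpow le_self_add hip) hS.le
  have hSG : (∫⁻ t, ENNReal.ofReal (‖G₀ t‖ ^ p)) ^ (1 / p) ≤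
      traceW r p lam f + ε := le_trans (ENNReal.rpow_le_rpow le_add_self hip) hS.le
  -- the difference D and its r-th derivative Gc
  set D : ℝ → ℂ := fun t => T f t - F₀ t with hDdef
  set Gc : ℝ → ℂ := fun t => T' f t - G₀ t with hGcdef
  have hDcd : ContDiff ℝ ((r - 1 : ℕ) : ℕ) D := hTcd.sub h₀cd
  have hGcInt : ∀ a b : ℝ, IntegrableOn Gc (Set.Icc a b) volume := fun a b =>
    (hT'loc.integrableOn_isCompact isCompact_Icc).sub (h₀loc.integrableOn_isCompact isCompact_Icc)
  have hsub : ∀ y : ℝ, iteratedDeriv (r - 1) D y =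
      iteratedDeriv (r - 1) (T f) y - iteratedDeriv (r - 1) F₀ y := by
    intro y
    have h := iteratedDerivWithin_sub (Set.mem_univ y) uniqueDiffOn_univ
      (hTcd.contDiffWithinAt) (h₀cd.contDiffWithinAt)
    simp only [iteratedDerivWithin_univ] at h
    exact h
  have hDftc : ∀ a b : ℝ, a ≤ b →
      iteratedDeriv (r - 1) D b - iteratedDeriv (r - 1) D a = ∫ t in a..b, Gc t := by
    intro a b hab
    have h1 := hTftc a b hab
    have h2 := h₀ftc a b hab
    have h3 : ∫ t in a..b, Gc t = (∫ t in a..b, T' f t) - ∫ t in a..b, G₀ t :=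
      intervalIntegral.integral_sub
        ((hT'loc.integrableOn_isCompact isCompact_uIcc).intervalIntegrable)
        ((h₀loc.integrableOn_isCompact isCompact_uIcc).intervalIntegrable)
    rw [hsub, hsub, h3, ← h1, ← h2]
    ring
  -- pointwise bound on D
  have habsD : ∀ x : ℝ, ‖D x‖ ≤
      C * ∫ t in Set.Icc (x - R) (x + R), ‖Gc t‖ := by
    intro x
    have hIntRe : ∀ a b : ℝ, IntegrableOn (fun t => (Gc t).re) (Set.Icc a b) volume := by
      intro a b
      have := (hGcInt a b).re
      simpa [RCLike.re_to_complex, IntegrableOn] using this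
    have hIntIm : ∀ a b : ℝ, IntegrableOn (fun t => (Gc t).im) (Set.Icc a b) volume := by
      intro a b
      have := (hGcInt a b).im
      simpa [RCLike.im_to_complex, IntegrableOn] using this
    have hftcRe : ∀ a b : ℝ, a ≤ b →
        iteratedDeriv (r - 1) (fun y => (D y).re) b -
          iteratedDeriv (r - 1) (fun y => (D y).re) a = ∫ t in a..b, (Gc t).re := by
      intro a b hab
      rw [iteratedDeriv_re le_rfl hDcd, iteratedDeriv_re le_rfl hDcd, ← Complex.sub_re,
        hDftc a b hab, intervalIntegral.integral_of_le hab, intervalIntegral.integral_of_le hab]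
      have := integral_re (μ := volume.restrict (Set.Ioc a b)) (f := Gc)
        ((hGcInt a b).mono_set Set.Ioc_subset_Icc_self)
      simpa [RCLike.re_to_complex] using this.symm
    have hftcIm : ∀ a b : ℝ, a ≤ b →
        iteratedDeriv (r - 1) (fun y => (D y).im) b -
          iteratedDeriv (r - 1) (fun y => (D y).im) a = ∫ t in a..b, (Gc t).im := by
      intro a b hab
      rw [iteratedDeriv_im le_rfl hDcd, iteratedDeriv_im le_rfl hDcd, ← Complex.sub_im,
        hDftc a b hab, intervalIntegral.integral_of_le hab, intervalIntegral.integral_of_le hab]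
      have := integral_im (μ := volume.restrict (Set.Ioc a b)) (f := Gc)
        ((hGcInt a b).mono_set Set.Ioc_subset_Icc_self)
      simpa [RCLike.im_to_complex] using this.symm
    have hre := key_bound (r - 1) hK hmono hbot htop hgapK
      (u := fun y => (D y).re) (g := fun t => (Gc t).re)
      (Complex.reCLM.contDiff.comp hDcd) hIntRe
      (fun n => by simp [hDdef, hTval n, h₀val n]) hftcRe x
    have him := key_bound (r - 1) hK hmono hbot htop hgapK
      (u := fun y => (D y).im) (g := fun t => (Gc t).im)
      (Complex.imCLM.contDiff.comp hDcd) hIntIm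
      (fun n => by simp [hDdef, hTval n, h₀val n]) hftcIm x
    have hmonoRe : (∫ t in Set.Icc (x - R) (x + R), |(Gc t).re|) ≤
        ∫ t in Set.Icc (x - R) (x + R), ‖Gc t‖ := by
      refine integral_mono ((hIntRe _ _).abs) ?_ fun t => Complex.abs_re_le_norm (Gc t)
      have := (hGcInt (x - R) (x + R)).norm
      simpa using this
    have hmonoIm : (∫ t in Set.Icc (x - R) (x + R), |(Gc t).im|) ≤
        ∫ t in Set.Icc (x - R) (x + R), ‖Gc t‖ := by
      refine integral_mono ((hIntIm _ _).abs) ?_ fun t => Complex.abs_im_le_norm (Gc t)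
      have := (hGcInt (x - R) (x + R)).norm
      simpa using this
    calc ‖D x‖ ≤ |(D x).re| + |(D x).im| := Complex.norm_le_abs_re_add_abs_im _
      _ ≤ L ^ (r - 1) * (∫ t in Set.Icc (x - R) (x + R), |(Gc t).re|) +
          L ^ (r - 1) * ∫ t in Set.Icc (x - R) (x + R), |(Gc t).im| := add_le_add hre him
      _ ≤ L ^ (r - 1) * (∫ t in Set.Icc (x - R) (x + R), ‖Gc t‖) +
          L ^ (r - 1) * ∫ t in Set.Icc (x - R) (x + R), ‖Gc t‖ := by
          gcongr
      _ = C * ∫ t in Set.Icc (x - R) (x + R), ‖Gc t‖ := by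
          rw [hCdef]; ring
  -- measurability facts
  have hGcae : AEMeasurable Gc volume :=
    ((hT'loc.aestronglyMeasurable).sub (h₀loc.aestronglyMeasurable)).aemeasurable
  have habsae : AEMeasurable (fun t => ENNReal.ofReal (‖Gc t‖)) volume := by
    have := hGcae.norm.ennreal_ofReal
    simpa using this
  set ν : ℝ → ℝ≥0∞ := fun t => ENNReal.ofReal (‖Gc t‖ ^ p) with hν
  have hνeq : (fun t => (ENNReal.ofReal (‖Gc t‖)) ^ p) = ν := by
    funext t
    exact ENNReal.ofReal_rpow_of_nonneg (by positivity) hp0.le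
  have hνae : AEMeasurable ν volume := by
    rw [← hνeq]
    exact habsae.pow_const p
  set JJ : ℝ≥0∞ := ∫⁻ t, ν t with hJJ
  have h2R : ENNReal.ofReal (2 * R) ≠ ⊤ := ENNReal.ofReal_ne_top
  have h2R0 : ENNReal.ofReal (2 * R) ≠ 0 := by
    rw [ne_eq, ENNReal.ofReal_eq_zero, not_le]
    positivity
  have hmain : ∀ x : ℝ, ENNReal.ofReal (‖D x‖ ^ p) ≤
      ((ENNReal.ofReal C) ^ p * (ENNReal.ofReal (2 * R)) ^ (p - 1)) *
        ∫⁻ t in Set.Icc (x - R) (x + R), ν t := by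
    intro x
    have hI : ENNReal.ofReal (∫ t in Set.Icc (x - R) (x + R), ‖Gc t‖) =
        ∫⁻ t in Set.Icc (x - R) (x + R), ENNReal.ofReal (‖Gc t‖) := by
      refine ofReal_integral_eq_lintegral_ofReal ?_
        (Filter.Eventually.of_forall fun t => by positivity)
      have := (hGcInt (x - R) (x + R)).norm
      simpa using this
    have hhold := holder_pow (s := Set.Icc (x - R) (x + R))
      (h := fun t => ENNReal.ofReal (‖Gc t‖)) habsae.restrict hp
    have hvol : volume (Set.Icc (x - R) (x + R)) = ENNReal.ofReal (2 * R) := by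
      rw [Real.volume_Icc]
      congr 1
      ring
    calc ENNReal.ofReal (‖D x‖ ^ p)
        = (ENNReal.ofReal (‖D x‖)) ^ p :=
          (ENNReal.ofReal_rpow_of_nonneg (by positivity) hp0.le).symm
      _ ≤ (ENNReal.ofReal (C * ∫ t in Set.Icc (x - R) (x + R), ‖Gc t‖)) ^ p :=
          ENNReal.rpow_le_rpow (ENNReal.ofReal_le_ofReal (habsD x)) hp0.le
      _ = (ENNReal.ofReal C) ^ p *
            (∫⁻ t in Set.Icc (x - R) (x + R), ENNReal.ofReal (‖Gc t‖)) ^ p := by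
          rw [ENNReal.ofReal_mul hCpos.le, ENNReal.mul_rpow_of_nonneg _ _ hp0.le, hI]
      _ ≤ (ENNReal.ofReal C) ^ p * ((ENNReal.ofReal (2 * R)) ^ (p - 1) *
            ∫⁻ t in Set.Icc (x - R) (x + R), (ENNReal.ofReal (‖Gc t‖)) ^ p) := by
          refine mul_le_mul_right ?_ _
          rwa [hvol] at hhold
      _ = ((ENNReal.ofReal C) ^ p * (ENNReal.ofReal (2 * R)) ^ (p - 1)) *
            ∫⁻ t in Set.Icc (x - R) (x + R), ν t := by
          rw [← mul_assoc]
          congr 1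
          exact lintegral_congr fun t => congrFun hνeq t
  have hc1t : (ENNReal.ofReal C) ^ p ≠ ⊤ :=
    ENNReal.rpow_ne_top_of_nonneg hp0.le ENNReal.ofReal_ne_top
  have hc2t : (ENNReal.ofReal (2 * R)) ^ (p - 1) ≠ ⊤ :=
    ENNReal.rpow_ne_top_of_nonneg (by linarith) ENNReal.ofReal_ne_top
  have hDlint : (∫⁻ x, ENNReal.ofReal (‖D x‖ ^ p)) ≤
      (ENNReal.ofReal C) ^ p * (ENNReal.ofReal (2 * R)) ^ p * JJ := by
    calc (∫⁻ x, ENNReal.ofReal (‖D x‖ ^ p))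
        ≤ ∫⁻ x, ((ENNReal.ofReal C) ^ p * (ENNReal.ofReal (2 * R)) ^ (p - 1)) *
            ∫⁻ t in Set.Icc (x - R) (x + R), ν t := lintegral_mono hmain
      _ = ((ENNReal.ofReal C) ^ p * (ENNReal.ofReal (2 * R)) ^ (p - 1)) *
            ∫⁻ x, ∫⁻ t in Set.Icc (x - R) (x + R), ν t :=
          lintegral_const_mul' _ _ (ENNReal.mul_ne_top hc1t hc2t)
      _ = ((ENNReal.ofReal C) ^ p * (ENNReal.ofReal (2 * R)) ^ (p - 1)) *
            (JJ * ENNReal.ofReal (2 * R)) := by rw [lintegral_window hνae]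
      _ = (ENNReal.ofReal C) ^ p * (ENNReal.ofReal (2 * R)) ^ p * JJ := by
          rw [show (ENNReal.ofReal (2 * R)) ^ p =
              (ENNReal.ofReal (2 * R)) ^ (p - 1) * (ENNReal.ofReal (2 * R)) ^ (1 : ℝ) by
            rw [← ENNReal.rpow_add _ _ h2R0 h2R]; norm_num]
          rw [ENNReal.rpow_one]
          ring
  have hDlp : (∫⁻ x, ENNReal.ofReal (‖D x‖ ^ p)) ^ (1 / p) ≤ CC * JJ ^ (1 / p) := by
    have h := ENNReal.rpow_le_rpow hDlint hip
    rw [ENNReal.mul_rpow_of_nonneg _ _ hip, ENNReal.mul_rpow_of_nonneg _ _ hip,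
      ← ENNReal.rpow_mul, ← ENNReal.rpow_mul, mul_one_div_cancel hp0', ENNReal.rpow_one,
      ENNReal.rpow_one] at h
    refine h.trans (le_of_eq ?_)
    rw [hCC, ENNReal.ofReal_mul hCpos.le]
  -- Minkowski splits
  have hDae : AEMeasurable D volume := (hDcd.continuous).aemeasurable
  have hF₀ae : AEMeasurable F₀ volume := (h₀cd.continuous).aemeasurable
  have hT'ae : AEMeasurable (T' f) volume := hT'loc.aestronglyMeasurable.aemeasurable
  have hG₀ae : AEMeasurable G₀ volume := h₀loc.aestronglyMeasurable.aemeasurable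
  have hTsplit := mink (w := T f) (u := D) (v := F₀) hDae hF₀ae (fun t => by
    have he : T f t = D t + F₀ t := by simp [hDdef]
    rw [he]
    exact norm_add_le _ _) hp
  have hGsplit : JJ ^ (1 / p) ≤ (∫⁻ t, ENNReal.ofReal (‖T' f t‖ ^ p)) ^ (1 / p) +
      (∫⁻ t, ENNReal.ofReal (‖G₀ t‖ ^ p)) ^ (1 / p) := by
    have h := mink (w := Gc) (u := T' f) (v := fun t => -G₀ t) hT'ae hG₀ae.neg (fun t => by
      have he : Gc t = T' f t + -G₀ t := by simp [hGcdef, sub_eq_add_neg]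
      rw [he]
      exact norm_add_le _ _) hp
    simpa [norm_neg] using h
  have hP' : (∫⁻ t, ENNReal.ofReal (‖T' f t‖ ^ p)) ^ (1 / p) ≤
      ENNReal.ofReal A * traceW r p lam f :=
    hTbd.trans (mul_le_mul_right (traceL_le_traceW r hp0 lam f) _)
  -- final assembly
  have hsum : ((∫⁻ t, ENNReal.ofReal (‖T f t‖ ^ p)) +
      ∫⁻ t, ENNReal.ofReal (‖T' f t‖ ^ p)) ^ (1 / p) ≤
      (∫⁻ t, ENNReal.ofReal (‖T f t‖ ^ p)) ^ (1 / p) +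
      (∫⁻ t, ENNReal.ofReal (‖T' f t‖ ^ p)) ^ (1 / p) :=
    ENNReal.rpow_add_le_add_rpow _ _ hip (by rw [div_le_one hp0]; exact hp)
  set W := traceW r p lam f with hWdef
  have hX : (∫⁻ t, ENNReal.ofReal (‖T f t‖ ^ p)) ^ (1 / p) ≤
      CC * (ENNReal.ofReal A * W + (W + ε)) + (W + ε) := by
    refine hTsplit.trans (add_le_add ?_ hSF)
    refine hDlp.trans (mul_le_mul_right ?_ _)
    exact hGsplit.trans (add_le_add hP' hSG)
  calc ((∫⁻ t, ENNReal.ofReal (‖T f t‖ ^ p)) +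
      ∫⁻ t, ENNReal.ofReal (‖T' f t‖ ^ p)) ^ (1 / p)
      ≤ (∫⁻ t, ENNReal.ofReal (‖T f t‖ ^ p)) ^ (1 / p) +
        (∫⁻ t, ENNReal.ofReal (‖T' f t‖ ^ p)) ^ (1 / p) := hsum
    _ ≤ (CC * (ENNReal.ofReal A * W + (W + ε)) + (W + ε)) + ENNReal.ofReal A * W :=
        add_le_add hX hP'
    _ = (CC + 1) * (ENNReal.ofReal A + 1) * W + (CC + 1) * ε := by ring
    _ ≤ ENNReal.ofReal ((C * (2 * R) + 1) * (A + 1)) * W + ε' := by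
        refine add_le_add (mul_le_mul_left (le_of_eq ?_) _) ?_
        · have hoe : ENNReal.ofReal ((C * (2 * R) + 1) * (A + 1)) =
              (ENNReal.ofReal (C * (2 * R)) + 1) * (ENNReal.ofReal A + 1) := by
            rw [ENNReal.ofReal_mul (by positivity),
              ENNReal.ofReal_add (by positivity) zero_le_one,
              ENNReal.ofReal_add hA.le zero_le_one, ENNReal.ofReal_one]
          rw [hCC, hoe]
        · rw [hε]
          exact ENNReal.mul_div_le
end

section
/- Let r ≥ 1 be an integer and K > 0. There is a constant C₁ > 0 depending only on r and K such that the following holds for every real p with 1 ≤ p < ∞. Let λ : ℤ → ℝ be strictly increasing with λ_n → ±∞ as n → ±∞ and λ_{n+1} − λ_n ≤ K for all n, and let F : ℝ → ℂ be an admissible r-extension of f : ℤ → ℂ. Then ∫_ℝ |F(t)|^p dt ≤ C₁^p [ ∫_ℝ |F^{(r)}(t)|^p dt + ‖f‖_{eq,W}^p ]. -/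
open MeasureTheory
open scoped ENNReal NNReal

open Finset in

lemma newton_eval (y : ℕ → ℂ) (hy : Function.Injective y) (v : ℕ → ℂ) (k : ℕ) :
    ∑ j ∈ range (k + 1),
      (∑ i ∈ range (j + 1), v i / ∏ l ∈ (range (j + 1)).erase i, (y i - y l)) *
        ∏ l ∈ range j, (y k - y l) = v k := by
  set T : ℕ → ℕ → ℂ := fun i j =>
    (∏ l ∈ range j, (y k - y l)) / (∏ l ∈ (range (j + 1)).erase i, (y i - y l)) with hT
  set A : ℕ → ℕ → ℂ := fun i j =>
    (∏ l ∈ (range (j + 1)).erase i, (y k - y l)) /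
      (∏ l ∈ (range (j + 1)).erase i, (y i - y l)) with hA
  have hden : ∀ i j, (∏ l ∈ (range (j + 1)).erase i, (y i - y l)) ≠ 0 := by
    intro i j
    refine Finset.prod_ne_zero_iff.2 fun l hl => ?_
    have : l ≠ i := (Finset.mem_erase.1 hl).1
    exact sub_ne_zero.2 fun h => this (hy h).symm
  -- rewrite LHS with T
  have lhs_eq : ∑ j ∈ range (k + 1),
      (∑ i ∈ range (j + 1), v i / ∏ l ∈ (range (j + 1)).erase i, (y i - y l)) *
        ∏ l ∈ range j, (y k - y l)
      = ∑ j ∈ range (k + 1), ∑ i ∈ range (j + 1), v i * T i j := by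
    refine Finset.sum_congr rfl fun j _ => ?_
    rw [Finset.sum_mul]
    refine Finset.sum_congr rfl fun i _ => ?_
    simp only [hT]
    rw [div_mul_eq_mul_div, mul_div_assoc]
  rw [lhs_eq]
  -- swap sums
  have swap : ∑ j ∈ range (k + 1), ∑ i ∈ range (j + 1), v i * T i j
      = ∑ i ∈ range (k + 1), ∑ j ∈ Ico i (k + 1), v i * T i j := by
    have h1 : ∀ j ∈ range (k + 1), ∑ i ∈ range (j + 1), v i * T i j
        = ∑ i ∈ range (k + 1), if i ≤ j then v i * T i j else 0 := by
      intro j hj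
      rw [Finset.mem_range] at hj
      rw [Finset.sum_congr rfl (g := fun i => if i ≤ j then v i * T i j else 0)
        (fun i hi => by
          rw [Finset.mem_range] at hi
          exact (if_pos (by omega : i ≤ j)).symm)]
      refine Finset.sum_subset (by intro i hi; rw [Finset.mem_range] at *; omega) ?_
      intro i _ hi
      rw [Finset.mem_range] at hi
      rw [if_neg (by omega)]
    rw [Finset.sum_congr rfl h1, Finset.sum_comm]
    refine Finset.sum_congr rfl fun i _ => ?_
    rw [← Finset.sum_filter]
    refine Finset.sum_congr ?_ fun _ _ => rfl
    ext j
    simp only [Finset.mem_filter, Finset.mem_range, Finset.mem_Ico]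
    omega
  rw [swap]
  -- telescoping
  have hTi : ∀ i, T i i = A i i := by
    intro i
    simp only [hT, hA]
    congr 2 <;>
    · rw [Finset.range_add_one, Finset.erase_insert (by simp)]
  have hstep : ∀ i j, i ≤ j → A i (j + 1) - A i j = T i (j + 1) := by
    intro i j hij
    have hkey : (range (j + 1 + 1)).erase i = insert (j + 1) ((range (j + 1)).erase i) := by
      rw [Finset.range_add_one, Finset.erase_insert_of_ne (by omega)]
    have hnotmem : (j + 1) ∉ (range (j + 1)).erase i := by simp
    have himem : i ∈ range (j + 1) := by rw [Finset.mem_range]; omega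
    have hPi : (∏ l ∈ (range (j + 1)).erase i, (y i - y l)) ≠ 0 := hden i j
    have h1 : (y i - y (j + 1)) ≠ 0 :=
      sub_ne_zero.2 fun h => by have := hy h; omega
    simp only [hT, hA, hkey]
    rw [Finset.prod_insert hnotmem, Finset.prod_insert hnotmem,
      show (∏ l ∈ range (j + 1), (y k - y l))
        = (y k - y i) * ∏ l ∈ (range (j + 1)).erase i, (y k - y l) from
        (Finset.mul_prod_erase _ _ himem).symm]
    field_simp
    ring
  have htel : ∀ i, i ≤ k → ∑ j ∈ Ico i (k + 1), T i j = A i k := by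
    intro i hik
    have key : ∀ m, i ≤ m → ∑ j ∈ Ico i (m + 1), T i j = A i m := by
      intro m him
      induction m, him using Nat.le_induction with
      | base =>
        rw [Finset.sum_Ico_succ_top (le_refl i)]
        simp [hTi i]
      | succ m him ih =>
        rw [Finset.sum_Ico_succ_top (by omega), ih, ← hstep i m him]
        ring
    exact key k hik
  have hAk : ∀ i, i ≤ k → A i k = if i = k then 1 else 0 := by
    intro i hik
    by_cases hik' : i = k
    · subst hik'
      simp only [if_pos rfl, hA]
      exact div_self (hden i i)
    · rw [if_neg hik']
      have hkmem : k ∈ (range (k + 1)).erase i := by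
        rw [Finset.mem_erase, Finset.mem_range]
        exact ⟨fun h => hik' h.symm, by omega⟩
      simp only [hA]
      rw [Finset.prod_eq_zero hkmem (by ring), zero_div]
  calc ∑ i ∈ range (k + 1), ∑ j ∈ Ico i (k + 1), v i * T i j
      = ∑ i ∈ range (k + 1), v i * (if i = k then 1 else 0) := by
        refine Finset.sum_congr rfl fun i hi => ?_
        rw [Finset.mem_range] at hi
        rw [← Finset.mul_sum, htel i (by omega), hAk i (by omega)]
    _ = v k := by
        simp [mul_ite, Finset.sum_ite_eq' (range (k + 1)) k v]


open Finset Polynomial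

noncomputable def evalR (Q : Polynomial ℂ) : ℝ → ℂ := fun t => Q.eval (t : ℂ)

lemma deriv_evalR (Q : Polynomial ℂ) :
    deriv (evalR Q) = evalR (Polynomial.derivative Q) :=
  funext fun t => ((Q.hasDerivAt (t : ℂ)).comp_ofReal).deriv

lemma contDiff_evalR (m : ℕ) (Q : Polynomial ℂ) : ContDiff ℝ (m : ℕ) (evalR Q) := by
  induction m generalizing Q with
  | zero =>
    exact contDiff_zero.2 (Q.continuous.comp Complex.continuous_ofReal)
  | succ m ih =>
    rw [show ((m + 1 : ℕ) : WithTop ℕ∞) = (m : ℕ) + 1 by push_cast; rfl,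
      contDiff_succ_iff_deriv]
    refine ⟨fun t => ((Q.hasDerivAt (t : ℂ)).comp_ofReal).differentiableAt, by simp, ?_⟩
    rw [deriv_evalR]; exact ih _

lemma iteratedDeriv_evalR (k : ℕ) (Q : Polynomial ℂ) :
    iteratedDeriv k (evalR Q) = evalR (Polynomial.derivative^[k] Q) := by
  induction k generalizing Q with
  | zero => simp [iteratedDeriv_zero]
  | succ k ih =>
    rw [iteratedDeriv_succ', deriv_evalR, ih, ← Function.iterate_succ_apply]

lemma iteratedDeriv_evalR_const {d : ℕ} {Q : Polynomial ℂ} (hQ : Q.natDegree ≤ d) :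
    ∃ c : ℂ, iteratedDeriv d (evalR Q) = fun _ => c := by
  have h1 : (Polynomial.derivative^[d] Q).natDegree ≤ 0 :=
    (Q.natDegree_iterate_derivative d).trans (by omega)
  refine ⟨(Polynomial.derivative^[d] Q).coeff 0, ?_⟩
  rw [iteratedDeriv_evalR]
  funext t
  rw [Polynomial.eq_C_of_natDegree_le_zero h1]
  simp [evalR]


open Set in

lemma core_rolle : ∀ (m : ℕ) (a b : ℝ) (R : ℝ → ℝ), ContDiff ℝ (m : ℕ) R →
    ∀ t : Fin (m + 1) → ℝ, StrictMono t → (∀ i, t i ∈ Icc a b) → (∀ i, R (t i) = 0) →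
    ∀ M : ℝ, (∀ x ∈ Icc a b, ∀ y ∈ Icc a b,
        |iteratedDeriv m R y - iteratedDeriv m R x| ≤ M) →
    ∀ x ∈ Icc a b, |R x| ≤ (b - a) ^ m * M := by
  intro m
  induction m with
  | zero =>
    intro a b R _ t _ htmem hz M hM x hx
    have := hM (t 0) (htmem 0) x hx
    simpa [hz 0] using this
  | succ m ih =>
    intro a b R hR t ht htmem hz M hM x hx
    have hab : a ≤ b := le_trans (htmem 0).1 (htmem 0).2
    have hR' : Differentiable ℝ R ∧ ContDiff ℝ (m : ℕ) (deriv R) := by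
      rw [show ((m + 1 : ℕ) : WithTop ℕ∞) = (m : ℕ) + 1 by push_cast; rfl,
        contDiff_succ_iff_deriv] at hR
      exact ⟨hR.1, hR.2.2⟩
    -- Rolle between consecutive zeros
    have hroll : ∀ i : Fin (m + 1), ∃ c ∈ Ioo (t i.castSucc) (t i.succ), deriv R c = 0 := by
      intro i
      refine exists_deriv_eq_zero (ht i.castSucc_lt_succ) ?_ ?_
      · exact (hR'.1.continuous).continuousOn
      · rw [hz, hz]
    choose s hs1 hs2 using hroll
    have hsmono : StrictMono s := by
      intro i j hij
      have h1 : s i < t i.succ := (hs1 i).2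
      have h2 : t j.castSucc < s j := (hs1 j).1
      have h3 : t i.succ ≤ t j.castSucc := by
        apply ht.monotone
        rw [Fin.le_def]
        simp only [Fin.val_succ, Fin.coe_castSucc]
        exact hij
      linarith
    have hsmem : ∀ i, s i ∈ Icc a b := fun i =>
      ⟨le_trans (htmem i.castSucc).1 (le_of_lt (hs1 i).1),
       le_trans (le_of_lt (hs1 i).2) (htmem i.succ).2⟩
    have hM' : ∀ x ∈ Icc a b, ∀ y ∈ Icc a b,
        |iteratedDeriv m (deriv R) y - iteratedDeriv m (deriv R) x| ≤ M := by
      intro x hx y hy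
      have := hM x hx y hy
      rwa [iteratedDeriv_succ'] at this
    have hbound := ih a b (deriv R) hR'.2 s hsmono hsmem hs2 M hM'
    -- now integrate up
    have hM0 : 0 ≤ M := le_trans (abs_nonneg _) (hM x hx x hx)
    have hC0 : 0 ≤ (b - a) ^ m * M :=
      mul_nonneg (pow_nonneg (by linarith) m) hM0
    have key : |R x - R (t 0)| ≤ ((b - a) ^ m * M) * |x - t 0| := by
      have := (convex_Icc a b).norm_image_sub_le_of_norm_deriv_le
        (f := R)
        (fun y _ => hR'.1.differentiableAt)
        (fun y hy => by simpa [Real.norm_eq_abs] using hbound y hy) (htmem 0) hx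
      simpa [Real.norm_eq_abs] using this
    have h4 : |x - t 0| ≤ b - a := by
      rw [abs_le]
      constructor
      · have := (htmem 0).2; have := hx.1; linarith
      · have := (htmem 0).1; have := hx.2; linarith
    calc |R x| = |R x - R (t 0)| := by rw [hz 0, sub_zero]
      _ ≤ ((b - a) ^ m * M) * |x - t 0| := key
      _ ≤ ((b - a) ^ m * M) * (b - a) := by
          exact mul_le_mul_of_nonneg_left h4 hC0
      _ = (b - a) ^ (m + 1) * M := by ring


open Finset Polynomial Set MeasureTheory in
lemma newton_eval_full (y : ℕ → ℂ) (hy : Function.Injective y) (v : ℕ → ℂ) {r k : ℕ}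
    (hk : k < r) :
    ∑ j ∈ Finset.range r,
      (∑ i ∈ Finset.range (j + 1), v i / ∏ l ∈ (Finset.range (j + 1)).erase i, (y i - y l)) *
        ∏ l ∈ Finset.range j, (y k - y l) = v k := by
  rw [← Finset.sum_subset (Finset.range_subset_range.2 (by omega : k + 1 ≤ r))
    (fun j _ hj' => ?_)]
  · exact newton_eval y hy v k
  · rw [Finset.mem_range] at hj'
    have hkj : k ∈ Finset.range j := by rw [Finset.mem_range]; omega
    rw [Finset.prod_eq_zero hkj (by ring), mul_zero]

lemma iteratedDeriv_sub' {n : ℕ} {f g : ℝ → ℂ} (hf : ContDiff ℝ (n : ℕ) f)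
    (hg : ContDiff ℝ (n : ℕ) g) :
    iteratedDeriv n (fun t => f t - g t) = fun t => iteratedDeriv n f t - iteratedDeriv n g t := by
  funext t
  simp only [iteratedDeriv_eq_iteratedFDeriv]
  have hgneg : ContDiff ℝ (n : ℕ) (-g) := hg.neg
  have h1 : (fun t => f t - g t) = f + (-g) := by
    funext s; simp [sub_eq_add_neg]
  rw [h1, iteratedFDeriv_add_apply hf.contDiffAt hgneg.contDiffAt, iteratedFDeriv_neg_apply]
  simp [sub_eq_add_neg]

lemma iteratedDeriv_clm_comp {m : ℕ} (g : ℂ →L[ℝ] ℝ) (u : ℝ → ℂ)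
    (hu : ContDiff ℝ (m : ℕ) u) :
    ∀ j ≤ m, iteratedDeriv j (fun t => g (u t)) = fun t => g (iteratedDeriv j u t) := by
  intro j
  induction j with
  | zero => intro _; simp [iteratedDeriv_zero]
  | succ j ih =>
    intro hj
    rw [iteratedDeriv_succ, ih (by omega), iteratedDeriv_succ]
    funext t
    have hdiff : DifferentiableAt ℝ (iteratedDeriv j u) t := by
      have h2 : ContDiff ℝ ((j + 1 : ℕ) : WithTop ℕ∞) u := hu.of_le (by exact_mod_cast hj)
      exact (ContDiff.differentiable_iteratedDeriv' j h2).differentiableAt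
    exact (g.hasFDerivAt.comp_hasDerivAt t hdiff.hasDerivAt).deriv

open Finset Polynomial Set MeasureTheory in
/-- Key pointwise bound on `[λ_n, λ_{n+r}]`. -/
lemma sup_bound (r : ℕ) (hr : 1 ≤ r) (lam : ℤ → ℝ) (hmono : StrictMono lam)
    (f : ℤ → ℂ) (F G : ℝ → ℂ)
    (hF : ContDiff ℝ ((r - 1 : ℕ) : ℕ) F)
    (hFG : ∀ a b : ℝ, a ≤ b →
      iteratedDeriv (r - 1) F b - iteratedDeriv (r - 1) F a = ∫ t in a..b, G t)
    (hval : ∀ k : ℤ, F (lam k) = f k)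
    (n : ℤ)
    (hGint : IntegrableOn G (Icc (lam n) (lam (n + (r : ℤ)))))
    (x : ℝ) (hx : x ∈ Icc (lam n) (lam (n + (r : ℤ)))) :
    ‖F x‖ ≤
      (∑ j ∈ Finset.range r, ‖ddiv lam f n j‖ * (lam (n + (r : ℤ)) - lam n) ^ j)
        + 2 * (lam (n + (r : ℤ)) - lam n) ^ (r - 1) *
          ∫ t in (lam n)..(lam (n + (r : ℤ))), ‖G t‖ := by
  set a := lam n with ha
  set b := lam (n + (r : ℤ)) with hb
  have hab : a ≤ b := le_of_lt (hmono (by omega))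
  have hh0 : (0 : ℝ) ≤ b - a := by linarith
  set M := ∫ t in a..b, ‖G t‖ with hM
  set y : ℕ → ℂ := fun l => ((lam (n + (l : ℤ)) : ℝ) : ℂ) with hy
  have hyinj : Function.Injective y := by
    intro l1 l2 hl
    have h1 : lam (n + (l1 : ℤ)) = lam (n + (l2 : ℤ)) := Complex.ofReal_inj.1 hl
    have := hmono.injective h1
    omega
  set c : ℕ → ℂ := fun j => ddiv lam f n j with hc
  set v : ℕ → ℂ := fun i => f (n + (i : ℤ)) with hv
  have hcdd : ∀ j, c j = ∑ i ∈ Finset.range (j + 1),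
      v i / ∏ l ∈ (Finset.range (j + 1)).erase i, (y i - y l) := by
    intro j
    simp only [hc, ddiv, hv, hy]
    refine Finset.sum_congr rfl fun i _ => ?_
    congr 1
    exact Finset.prod_congr rfl fun l _ => by push_cast; ring
  set Q : Polynomial ℂ := ∑ j ∈ Finset.range r, C (c j) * ∏ l ∈ Finset.range j, (X - C (y l))
    with hQ
  set P : ℝ → ℂ := evalR Q with hP
  have hPeval : ∀ t : ℝ, P t = ∑ j ∈ Finset.range r, c j * ∏ l ∈ Finset.range j,
      ((t : ℂ) - y l) := by
    intro t
    simp [hP, evalR, hQ, eval_finset_sum, eval_prod]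
  have hinterp : ∀ k : ℕ, k < r → P (lam (n + (k : ℤ))) = f (n + (k : ℤ)) := by
    intro k hk
    rw [hPeval]
    rw [show (f (n + (k : ℤ))) = v k from rfl]
    calc ∑ j ∈ Finset.range r, c j * ∏ l ∈ Finset.range j, (((lam (n + (k : ℤ)) : ℝ) : ℂ) - y l)
        = ∑ j ∈ Finset.range r,
            (∑ i ∈ Finset.range (j + 1), v i / ∏ l ∈ (Finset.range (j + 1)).erase i,
              (y i - y l)) * ∏ l ∈ Finset.range j, (y k - y l) := by
          refine Finset.sum_congr rfl fun j _ => ?_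
          rw [hcdd j]
      _ = v k := newton_eval_full y hyinj v hk
  have hQdeg : Q.natDegree ≤ r - 1 := by
    refine (Polynomial.natDegree_sum_le_of_forall_le _ _ fun j hj => ?_)
    rw [Finset.mem_range] at hj
    refine (Polynomial.natDegree_C_mul_le _ _).trans ?_
    refine (Polynomial.natDegree_prod_le _ _).trans ?_
    have h1 : ∀ l ∈ Finset.range j, (X - C (y l)).natDegree ≤ 1 :=
      fun l _ => Polynomial.natDegree_X_sub_C_le _
    have h2 := Finset.sum_le_sum h1
    simp only [Finset.sum_const, Finset.card_range, smul_eq_mul, mul_one] at h2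
    omega
  obtain ⟨cc, hcc⟩ := iteratedDeriv_evalR_const hQdeg
  set R : ℝ → ℂ := fun t => F t - P t with hR
  have hPsm : ∀ m : ℕ, ContDiff ℝ (m : ℕ) P := fun m => contDiff_evalR m Q
  have hRc : ContDiff ℝ ((r - 1 : ℕ) : ℕ) R := hF.sub (hPsm _)
  have hRd : iteratedDeriv (r - 1) R = fun t => iteratedDeriv (r - 1) F t - cc := by
    rw [hR, iteratedDeriv_sub' hF (hPsm _), hP, hcc]
  have hdiffM : ∀ u ∈ Icc a b, ∀ w ∈ Icc a b,
      ‖iteratedDeriv (r - 1) R w - iteratedDeriv (r - 1) R u‖ ≤ M := by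
    intro u hu w hw
    rw [hRd]
    rw [show (fun t => iteratedDeriv (r - 1) F t - cc) w
        - (fun t => iteratedDeriv (r - 1) F t - cc) u
        = iteratedDeriv (r - 1) F w - iteratedDeriv (r - 1) F u by
      simp only []; ring]
    have hnorm : IntegrableOn (fun t => ‖G t‖) (Icc a b) := hGint.norm
    have key : ∀ u w : ℝ, u ∈ Icc a b → w ∈ Icc a b → u ≤ w →
        ‖iteratedDeriv (r - 1) F w - iteratedDeriv (r - 1) F u‖ ≤ M := by
      intro u w hu hw huw
      rw [hFG u w huw]
      rw [show (‖∫ t in u..w, G t‖) = ‖∫ t in u..w, G t‖ from rfl]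
      refine (intervalIntegral.norm_integral_le_integral_norm huw).trans ?_
      refine intervalIntegral.integral_mono_interval hu.1 huw hw.2 ?_ ?_
      · filter_upwards with t using norm_nonneg _
      · exact (hnorm.mono_set (by rw [Set.uIcc_of_le hab])).intervalIntegrable
    rcases le_total u w with huw | hwu
    · exact key u w hu hw huw
    · rw [← norm_neg, neg_sub]
      exact key w u hw hu hwu
  set tt : Fin (r - 1 + 1) → ℝ := fun i => lam (n + ((i : ℕ) : ℤ)) with htt
  have httmono : StrictMono tt := by
    intro i j hij
    refine hmono ?_
    have h1 : (i : ℕ) < (j : ℕ) := hij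
    omega
  have httmem : ∀ i, tt i ∈ Icc a b := by
    intro i
    have hi : (i : ℕ) < r := by have := i.isLt; omega
    exact ⟨hmono.monotone (by omega), hmono.monotone (by omega)⟩
  have httz : ∀ i : Fin (r - 1 + 1), R (tt i) = 0 := by
    intro i
    have hi : (i : ℕ) < r := by have := i.isLt; omega
    simp only [hR, htt]
    rw [hval (n + ((i : ℕ) : ℤ)), hinterp (i : ℕ) hi, sub_self]
  have habs : ∀ g : ℂ →L[ℝ] ℝ, (∀ w : ℂ, |g w| ≤ ‖w‖) →
      |g (R x)| ≤ (b - a) ^ (r - 1) * M := by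
    intro g hgabs
    have hgc : ContDiff ℝ ((r - 1 : ℕ) : ℕ) (fun t => g (R t)) := g.contDiff.comp hRc
    have hgd := iteratedDeriv_clm_comp g R hRc (r - 1) (le_refl _)
    refine core_rolle (r - 1) a b (fun t => g (R t)) hgc tt httmono httmem
      (fun i => by show g (R (tt i)) = 0; rw [httz i, map_zero]) M ?_ x hx
    intro u hu w hw
    rw [hgd]
    calc |(fun t => g (iteratedDeriv (r - 1) R t)) w
          - (fun t => g (iteratedDeriv (r - 1) R t)) u|
        = |g (iteratedDeriv (r - 1) R w - iteratedDeriv (r - 1) R u)| := by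
          simp only []; rw [map_sub]
      _ ≤ ‖iteratedDeriv (r - 1) R w - iteratedDeriv (r - 1) R u‖ := hgabs _
      _ ≤ M := hdiffM u hu w hw
  have hre := habs Complex.reCLM (fun w => Complex.abs_re_le_norm w)
  have him := habs Complex.imCLM (fun w => Complex.abs_im_le_norm w)
  have hRb : ‖R x‖ ≤ 2 * (b - a) ^ (r - 1) * M := by
    calc ‖R x‖ ≤ |(R x).re| + |(R x).im| := Complex.norm_le_abs_re_add_abs_im _
      _ ≤ (b - a) ^ (r - 1) * M + (b - a) ^ (r - 1) * M := add_le_add hre him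
      _ = 2 * (b - a) ^ (r - 1) * M := by ring
  have hPb : ‖P x‖ ≤ ∑ j ∈ Finset.range r, ‖c j‖ * (b - a) ^ j := by
    rw [hPeval]
    refine (norm_sum_le _ _).trans ?_
    refine Finset.sum_le_sum fun j hj => ?_
    rw [Finset.mem_range] at hj
    rw [norm_mul]
    refine mul_le_mul_of_nonneg_left ?_ (norm_nonneg _)
    rw [norm_prod]
    calc ∏ l ∈ Finset.range j, ‖(x : ℂ) - y l‖
        ≤ ∏ l ∈ Finset.range j, (b - a) := by
          refine Finset.prod_le_prod (fun l _ => norm_nonneg _) fun l hl => ?_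
          rw [Finset.mem_range] at hl
          have h1 : ((x : ℂ) - y l) = ((x - lam (n + (l : ℤ)) : ℝ) : ℂ) := by
            simp [hy]
          rw [h1, Complex.norm_real, Real.norm_eq_abs]
          have h2 : lam (n + (l : ℤ)) ∈ Icc a b :=
            ⟨hmono.monotone (by omega), hmono.monotone (by omega)⟩
          rw [abs_le]
          constructor
          · have := hx.1; have := h2.2; linarith
          · have := hx.2; have := h2.1; linarith
      _ = (b - a) ^ j := by rw [Finset.prod_const, Finset.card_range]
  have hFx : F x = P x + R x := by simp [hR]
  calc ‖F x‖ = ‖P x + R x‖ := by rw [hFx]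
    _ ≤ ‖P x‖ + ‖R x‖ := norm_add_le _ _
    _ ≤ (∑ j ∈ Finset.range r, ‖c j‖ * (b - a) ^ j)
          + 2 * (b - a) ^ (r - 1) * M := add_le_add hPb hRb

open MeasureTheory in
lemma sum_rpow_le {ι : Type*} (s : Finset ι) (w : ι → ℝ) (hw : ∀ i ∈ s, 0 ≤ w i) {p : ℝ}
    (hp : 1 ≤ p) :
    (∑ i ∈ s, w i) ^ p ≤ (s.card : ℝ) ^ p * ∑ i ∈ s, w i ^ p := by
  rcases s.eq_empty_or_nonempty with rfl | hne
  · simp [Real.zero_rpow (by positivity : p ≠ 0)]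
  obtain ⟨i0, hi0, hmax⟩ := s.exists_max_image w hne
  have hw0 : 0 ≤ w i0 := hw i0 hi0
  calc (∑ i ∈ s, w i) ^ p ≤ ((s.card : ℝ) * w i0) ^ p := by
        refine Real.rpow_le_rpow (Finset.sum_nonneg hw) ?_ (by linarith)
        calc ∑ i ∈ s, w i ≤ ∑ _i ∈ s, w i0 := Finset.sum_le_sum fun i hi => hmax i hi
          _ = s.card * w i0 := by rw [Finset.sum_const, nsmul_eq_mul]
    _ = (s.card : ℝ) ^ p * w i0 ^ p := Real.mul_rpow (by positivity) hw0
    _ ≤ (s.card : ℝ) ^ p * ∑ i ∈ s, w i ^ p := by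
        refine mul_le_mul_of_nonneg_left ?_ (by positivity)
        exact Finset.single_le_sum (fun i hi => Real.rpow_nonneg (hw i hi) p) hi0

lemma gap_le (lam : ℤ → ℝ) (K : ℝ) (hstep : ∀ n : ℤ, lam (n + 1) - lam n ≤ K) (n : ℤ) :
    ∀ k : ℕ, lam (n + (k : ℤ)) - lam n ≤ (k : ℝ) * K := by
  intro k
  induction k with
  | zero => simp
  | succ k ih =>
    have h1 := hstep (n + (k : ℤ))
    have h2 : (n + (k : ℤ)) + 1 = n + ((k + 1 : ℕ) : ℤ) := by push_cast; ring
    rw [h2] at h1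
    push_cast at h1 ih ⊢
    linarith

open Set Filter MeasureTheory in
lemma iUnion_Ico_eq_univ (lam : ℤ → ℝ) (hg : GoodSeq lam) :
    (⋃ n : ℤ, Set.Ico (lam n) (lam (n + 1))) = Set.univ := by
  refine Set.eq_univ_of_forall fun x => ?_
  obtain ⟨hmono, hbot, htop⟩ := hg
  obtain ⟨N, hN⟩ := (Filter.eventually_atTop).1 (htop.eventually_gt_atTop x)
  obtain ⟨N', hN'⟩ := (Filter.eventually_atBot).1 (hbot.eventually_lt_atBot x)
  have hbdd : ∃ b : ℤ, ∀ z : ℤ, lam z ≤ x → z ≤ b := by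
    refine ⟨N, fun z hz => ?_⟩
    by_contra hcon
    exact absurd hz (not_le.2 (hN z (by omega)))
  have hinh : ∃ z : ℤ, lam z ≤ x := ⟨N', le_of_lt (hN' N' le_rfl)⟩
  obtain ⟨lb, hlb1, hlb2⟩ := Int.exists_greatest_of_bdd hbdd hinh
  have hx2 : x < lam (lb + 1) := by
    by_contra hcon
    have := hlb2 (lb + 1) (not_lt.1 hcon)
    omega
  exact Set.mem_iUnion.2 ⟨lb, hlb1, hx2⟩

open Set MeasureTheory in
lemma pairwise_disjoint_Ico (lam : ℤ → ℝ) (hmono : StrictMono lam) :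
    Pairwise (Function.onFun Disjoint fun n : ℤ => Set.Ico (lam n) (lam (n + 1))) := by
  intro m n hmn
  rcases lt_or_gt_of_ne hmn with h | h
  · refine Set.Ico_disjoint_Ico.2 ?_
    have : lam (m + 1) ≤ lam n := hmono.monotone (by omega)
    exact le_trans (min_le_left _ _) (le_trans this (le_max_right _ _))
  · refine Set.Ico_disjoint_Ico.2 ?_
    have : lam (n + 1) ≤ lam m := hmono.monotone (by omega)
    exact le_trans (min_le_right _ _) (le_trans this (le_max_left _ _))

open Set MeasureTheory in
lemma lintegral_partition (lam : ℤ → ℝ) (hg : GoodSeq lam) (g : ℝ → ℝ≥0∞) :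
    ∫⁻ t, g t = ∑' n : ℤ, ∫⁻ t in Set.Ico (lam n) (lam (n + 1)), g t := by
  rw [← lintegral_iUnion (fun n => measurableSet_Ico) (pairwise_disjoint_Ico lam hg.1) g,
    iUnion_Ico_eq_univ lam hg, Measure.restrict_univ]

open Set MeasureTheory in
lemma lintegral_Icc_eq_Ico (a b : ℝ) (g : ℝ → ℝ≥0∞) :
    ∫⁻ t in Set.Icc a b, g t = ∫⁻ t in Set.Ico a b, g t := by
  rw [Measure.restrict_congr_set Ico_ae_eq_Icc]

open Set MeasureTheory in
lemma lintegral_icc_cover_le (lam : ℤ → ℝ) (hmono : StrictMono lam) (g : ℝ → ℝ≥0∞) (n : ℤ) :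
    ∀ k : ℕ, ∫⁻ t in Set.Icc (lam n) (lam (n + (k : ℤ))), g t ≤
      ∑ i ∈ Finset.range k, ∫⁻ t in Set.Icc (lam (n + (i : ℤ))) (lam (n + (i : ℤ) + 1)), g t := by
  intro k
  induction k with
  | zero =>
    simp only [Nat.cast_zero, add_zero, Finset.range_zero, Finset.sum_empty]
    rw [setLIntegral_measure_zero _ _ (by simp [Set.Icc_self])]
  | succ k ih =>
    have hsplit : Set.Icc (lam n) (lam (n + ((k + 1 : ℕ) : ℤ))) ⊆
        Set.Icc (lam n) (lam (n + (k : ℤ))) ∪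
          Set.Icc (lam (n + (k : ℤ))) (lam (n + (k : ℤ) + 1)) := by
      rw [Set.Icc_union_Icc_eq_Icc (hmono.monotone (by omega)) (hmono.monotone (by omega))]
      have : n + ((k + 1 : ℕ) : ℤ) = n + (k : ℤ) + 1 := by push_cast; ring
      rw [this]
    calc ∫⁻ t in Set.Icc (lam n) (lam (n + ((k + 1 : ℕ) : ℤ))), g t
        ≤ ∫⁻ t in Set.Icc (lam n) (lam (n + (k : ℤ))) ∪
            Set.Icc (lam (n + (k : ℤ))) (lam (n + (k : ℤ) + 1)), g t :=
          lintegral_mono_set hsplit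
      _ ≤ (∫⁻ t in Set.Icc (lam n) (lam (n + (k : ℤ))), g t) +
            ∫⁻ t in Set.Icc (lam (n + (k : ℤ))) (lam (n + (k : ℤ) + 1)), g t :=
          lintegral_union_le _ _ _
      _ ≤ _ := by
          rw [Finset.sum_range_succ]
          exact add_le_add ih (le_refl _)

open Set MeasureTheory in
lemma tsum_icc_pieces (lam : ℤ → ℝ) (hg : GoodSeq lam) (g : ℝ → ℝ≥0∞) (i : ℕ) :
    ∑' n : ℤ, ∫⁻ t in Set.Icc (lam (n + (i : ℤ))) (lam (n + (i : ℤ) + 1)), g t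
      = ∫⁻ t, g t := by
  calc ∑' n : ℤ, ∫⁻ t in Set.Icc (lam (n + (i : ℤ))) (lam (n + (i : ℤ) + 1)), g t
      = ∑' m : ℤ, ∫⁻ t in Set.Icc (lam m) (lam (m + 1)), g t := by
        exact (Equiv.addRight (i : ℤ)).tsum_eq fun m => ∫⁻ t in Set.Icc (lam m) (lam (m + 1)), g t
    _ = ∑' m : ℤ, ∫⁻ t in Set.Ico (lam m) (lam (m + 1)), g t := by
        refine tsum_congr fun m => lintegral_Icc_eq_Ico _ _ _
    _ = ∫⁻ t, g t := (lintegral_partition lam hg g).symm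

open Set MeasureTheory in
/-- Hölder step. -/
lemma holder_M {p : ℝ} (hp : 1 ≤ p) (a b : ℝ) (hab : a ≤ b) (G : ℝ → ℂ)
    (hGint : IntegrableOn G (Set.Icc a b)) :
    ENNReal.ofReal ((∫ t in a..b, ‖G t‖) ^ p) ≤
      (ENNReal.ofReal (b - a)) ^ (p - 1) *
        ∫⁻ t in Set.Icc a b, ENNReal.ofReal (‖G t‖ ^ p) := by
  set M := ∫ t in a..b, ‖G t‖ with hM
  have hM0 : 0 ≤ M := intervalIntegral.integral_nonneg hab fun t _ => norm_nonneg _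
  have hMeq : M = ∫ t in Set.Icc a b, ‖G t‖ := by
    rw [hM, intervalIntegral.integral_of_le hab, integral_Icc_eq_integral_Ioc]
  have hGnorm : IntegrableOn (fun t => ‖G t‖) (Set.Icc a b) := hGint.norm
  have hofM : ENNReal.ofReal M = ∫⁻ t in Set.Icc a b, ENNReal.ofReal ‖G t‖ := by
    rw [hMeq, ofReal_integral_norm_eq_lintegral_enorm hGint]
    refine lintegral_congr fun t => (ofReal_norm _).symm
  have hmeas : AEMeasurable (fun t => ENNReal.ofReal ‖G t‖)
      (volume.restrict (Set.Icc a b)) := by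
    have := hGint.aestronglyMeasurable.norm.aemeasurable
    exact this.ennreal_ofReal
  have hpow : ∀ t : ℝ, (ENNReal.ofReal ‖G t‖) ^ p = ENNReal.ofReal (‖G t‖ ^ p) := fun t =>
    ENNReal.ofReal_rpow_of_nonneg (norm_nonneg _) (by linarith)
  rw [show ENNReal.ofReal (M ^ p) = (ENNReal.ofReal M) ^ p from
    (ENNReal.ofReal_rpow_of_nonneg hM0 (by linarith)).symm]
  rcases eq_or_lt_of_le hp with hp1 | hp1
  · rw [← hp1]
    simp only [ENNReal.rpow_one, sub_self, ENNReal.rpow_zero, one_mul, Real.rpow_one]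
    exact le_of_eq hofM
  · have hq : Real.HolderConjugate p (p / (p - 1)) := (Real.holderConjugate_iff_eq_conjExponent hp1).2 rfl
    have hhold := ENNReal.lintegral_mul_le_Lp_mul_Lq (volume.restrict (Set.Icc a b)) hq
      hmeas aemeasurable_const (g := fun _ => (1 : ℝ≥0∞))
    simp only [Pi.mul_apply, mul_one] at hhold
    have hone : ∫⁻ _t in Set.Icc a b, (1 : ℝ≥0∞) ^ (p / (p - 1)) = ENNReal.ofReal (b - a) := by
      simp [ENNReal.one_rpow, Real.volume_Icc]
    rw [hone] at hhold
    rw [hofM]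
    calc (∫⁻ t in Set.Icc a b, ENNReal.ofReal ‖G t‖) ^ p
        ≤ (((∫⁻ t in Set.Icc a b, (ENNReal.ofReal ‖G t‖) ^ p) ^ (1 / p)) *
            (ENNReal.ofReal (b - a)) ^ (1 / (p / (p - 1)))) ^ p :=
          ENNReal.rpow_le_rpow hhold (by linarith)
      _ = (∫⁻ t in Set.Icc a b, (ENNReal.ofReal ‖G t‖) ^ p) *
            (ENNReal.ofReal (b - a)) ^ (p - 1) := by
          rw [ENNReal.mul_rpow_of_nonneg _ _ (by linarith : (0:ℝ) ≤ p),
            ← ENNReal.rpow_mul, ← ENNReal.rpow_mul]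
          congr 1
          · rw [one_div_mul_cancel (by linarith : p ≠ 0), ENNReal.rpow_one]
          · congr 1
            field_simp
      _ = (ENNReal.ofReal (b - a)) ^ (p - 1) *
            ∫⁻ t in Set.Icc a b, ENNReal.ofReal (‖G t‖ ^ p) := by
          rw [mul_comm]
          congr 1
          exact lintegral_congr fun t => hpow t

open Set MeasureTheory in
lemma interval_est (r : ℕ) (hr : 1 ≤ r) (K : ℝ) (hK : 0 < K) {p : ℝ} (hp : 1 ≤ p)
    (lam : ℤ → ℝ) (hg : GoodSeq lam) (hstep : ∀ n : ℤ, lam (n + 1) - lam n ≤ K)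
    (f : ℤ → ℂ) (F G : ℝ → ℂ) (hadm : AdmissibleExt r lam f F G) (n : ℤ) :
    ∫⁻ t in Set.Ico (lam n) (lam (n + 1)), ENNReal.ofReal (‖F t‖ ^ p) ≤
      ENNReal.ofReal (((r : ℝ) + 1) ^ p) *
        ((∑ j ∈ Finset.range r,
            ENNReal.ofReal ((lam (n + (r : ℤ)) - lam n) ^ ((j : ℝ) * p + 1) *
              ‖ddiv lam f n j‖ ^ p)) +
          ENNReal.ofReal ((2 * max 1 ((r : ℝ) * K) ^ r) ^ p) *
            ∫⁻ t in Set.Icc (lam n) (lam (n + (r : ℤ))), ENNReal.ofReal (‖G t‖ ^ p)) := by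
  obtain ⟨hF, hGloc, hFG, hval⟩ := hadm
  have hmono := hg.1
  set a := lam n with ha
  set b := lam (n + (r : ℤ)) with hb
  have hab : a < b := hmono (by omega)
  set h := b - a with hh
  have hh0 : 0 < h := by simp only [hh]; linarith
  have hGint : IntegrableOn G (Set.Icc a b) := hGloc.integrableOn_isCompact isCompact_Icc
  set M := ∫ t in a..b, ‖G t‖ with hM
  have hM0 : 0 ≤ M := intervalIntegral.integral_nonneg hab.le fun t _ => norm_nonneg _
  set X := max 1 ((r : ℝ) * K) with hX
  have hX1 : (1 : ℝ) ≤ X := le_max_left _ _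
  have hhX : h ≤ X := by
    have := gap_le lam K hstep n r
    have h2 : (r : ℝ) * K ≤ X := le_max_right _ _
    simp only [hh, hb, ha]
    linarith
  set Δ := lam (n + 1) - lam n with hΔ
  have hΔ0 : 0 ≤ Δ := by
    have : lam n ≤ lam (n + 1) := hmono.monotone (by omega)
    simp only [hΔ]; linarith
  have hΔh : Δ ≤ h := by
    have : lam (n + 1) ≤ b := hmono.monotone (by omega)
    simp only [hΔ, hh, ha]; linarith
  set c : ℕ → ℝ := fun j => ‖ddiv lam f n j‖ with hc
  have hc0 : ∀ j, 0 ≤ c j := fun j => norm_nonneg _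
  set S := (∑ j ∈ Finset.range r, c j * h ^ j) + 2 * h ^ (r - 1) * M with hS
  set J := ∫⁻ t in Set.Icc a b, ENNReal.ofReal (‖G t‖ ^ p) with hJ
  -- pointwise bound
  have hptS : ∀ t ∈ Set.Ico a (lam (n + 1)), ‖F t‖ ≤ S := by
    intro t ht
    have htmem : t ∈ Set.Icc a b := ⟨ht.1, le_trans ht.2.le (hmono.monotone (by omega))⟩
    exact sup_bound r hr lam hmono f F G hF hFG hval n hGint t htmem
  -- sum of powers bound
  set W := (∑ j ∈ Finset.range r, (c j * h ^ j) ^ p) + (2 * h ^ (r - 1) * M) ^ p with hW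
  have hW0 : 0 ≤ W := by
    refine add_nonneg (Finset.sum_nonneg fun j _ => Real.rpow_nonneg (by positivity) _) ?_
    exact Real.rpow_nonneg (by positivity) _
  have hSp : S ^ p ≤ ((r : ℝ) + 1) ^ p * W := by
    set w : ℕ → ℝ := fun i => if i = r then 2 * h ^ (r - 1) * M else c i * h ^ i with hw
    have hw0 : ∀ i ∈ Finset.range (r + 1), 0 ≤ w i := by
      intro i _
      simp only [hw]
      split <;> positivity
    have hsum : ∑ i ∈ Finset.range (r + 1), w i = S := by
      rw [Finset.sum_range_succ]
      simp only [hw, if_pos rfl, hS]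
      congr 1
      refine Finset.sum_congr rfl fun i hi => ?_
      rw [Finset.mem_range] at hi
      rw [if_neg (by omega)]
    have hsump : ∑ i ∈ Finset.range (r + 1), w i ^ p = W := by
      rw [Finset.sum_range_succ]
      simp only [hw, if_pos rfl, hW]
      congr 1
      refine Finset.sum_congr rfl fun i hi => ?_
      rw [Finset.mem_range] at hi
      rw [if_neg (by omega)]
    have := sum_rpow_le (Finset.range (r + 1)) w hw0 hp
    rw [hsum, hsump, Finset.card_range] at this
    simpa using this
  -- integral bound by constant
  have hint1 : ∫⁻ t in Set.Ico a (lam (n + 1)), ENNReal.ofReal (‖F t‖ ^ p)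
      ≤ ENNReal.ofReal (((r : ℝ) + 1) ^ p * W) * ENNReal.ofReal Δ := by
    have hb1 : ∫⁻ t in Set.Ico a (lam (n + 1)), ENNReal.ofReal (‖F t‖ ^ p)
        ≤ ∫⁻ _t in Set.Ico a (lam (n + 1)), ENNReal.ofReal (((r : ℝ) + 1) ^ p * W) := by
      refine setLIntegral_mono measurable_const fun t ht => ?_
      refine ENNReal.ofReal_le_ofReal ?_
      calc ‖F t‖ ^ p ≤ S ^ p := by
            refine Real.rpow_le_rpow (norm_nonneg _) (hptS t ht) (by linarith)
        _ ≤ ((r : ℝ) + 1) ^ p * W := hSp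
    rw [setLIntegral_const, Real.volume_Ico] at hb1
    exact hb1
  refine hint1.trans ?_
  -- algebra
  have hWnn : 0 ≤ ((r : ℝ) + 1) ^ p := Real.rpow_nonneg (by positivity) _
  rw [ENNReal.ofReal_mul hWnn, mul_assoc, ← ENNReal.ofReal_mul hW0]
  refine mul_le_mul_right ?_ _
  -- main term estimate
  have hexp : ∀ j : ℕ, j < r → (c j * h ^ j) ^ p * Δ ≤ h ^ ((j : ℝ) * p + 1) * c j ^ p := by
    intro j _
    have h1 : (c j * h ^ j) ^ p = c j ^ p * h ^ ((j : ℝ) * p) := by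
      rw [Real.mul_rpow (hc0 j) (by positivity), ← Real.rpow_natCast h j,
        ← Real.rpow_mul hh0.le]
    have h2 : h ^ ((j : ℝ) * p + 1) = h ^ ((j : ℝ) * p) * h := by
      rw [Real.rpow_add hh0, Real.rpow_one]
    rw [h1, h2]
    have h3 : 0 ≤ c j ^ p * h ^ ((j : ℝ) * p) := by
      refine mul_nonneg (Real.rpow_nonneg (hc0 j) _) (Real.rpow_nonneg hh0.le _)
    nlinarith [mul_le_mul_of_nonneg_left hΔh h3]
  have hMterm : ENNReal.ofReal ((2 * h ^ (r - 1) * M) ^ p * Δ)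
      ≤ ENNReal.ofReal ((2 * X ^ r) ^ p) * J := by
    have h1 : (2 * h ^ (r - 1) * M) ^ p * Δ
        ≤ (2 ^ p * h ^ (((r : ℝ) - 1) * p + 1)) * M ^ p := by
      have e1 : (2 * h ^ (r - 1) * M) ^ p
          = 2 ^ p * h ^ (((r : ℝ) - 1) * p) * M ^ p := by
        rw [Real.mul_rpow (by positivity) hM0, Real.mul_rpow (by norm_num) (by positivity),
          ← Real.rpow_natCast h (r - 1), ← Real.rpow_mul hh0.le]
        congr 3
        rw [Nat.cast_sub hr, Nat.cast_one]
      have e2 : h ^ (((r : ℝ) - 1) * p + 1) = h ^ (((r : ℝ) - 1) * p) * h := by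
        rw [Real.rpow_add hh0, Real.rpow_one]
      rw [e1, e2]
      have h3 : 0 ≤ 2 ^ p * h ^ (((r : ℝ) - 1) * p) * M ^ p := by positivity
      nlinarith [mul_le_mul_of_nonneg_left hΔh h3]
    refine (ENNReal.ofReal_le_ofReal h1).trans ?_
    rw [ENNReal.ofReal_mul (by positivity)]
    have hhold : ENNReal.ofReal (M ^ p) ≤ ENNReal.ofReal h ^ (p - 1) * J := by
      have := holder_M hp a b hab.le G hGint
      rw [← hM] at this
      refine this.trans (le_of_eq ?_)
      congr 1
    calc ENNReal.ofReal (2 ^ p * h ^ (((r : ℝ) - 1) * p + 1)) * ENNReal.ofReal (M ^ p)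
        ≤ ENNReal.ofReal (2 ^ p * h ^ (((r : ℝ) - 1) * p + 1)) *
            (ENNReal.ofReal h ^ (p - 1) * J) := mul_le_mul_right hhold _
      _ = (ENNReal.ofReal (2 ^ p * h ^ (((r : ℝ) - 1) * p + 1)) *
            ENNReal.ofReal (h ^ (p - 1))) * J := by
          rw [ENNReal.ofReal_rpow_of_nonneg hh0.le (by linarith)]
          ring
      _ ≤ ENNReal.ofReal ((2 * X ^ r) ^ p) * J := by
          refine mul_le_mul_left ?_ _
          rw [← ENNReal.ofReal_mul (by positivity)]
          refine ENNReal.ofReal_le_ofReal ?_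
          have e3 : 2 ^ p * h ^ (((r : ℝ) - 1) * p + 1) * h ^ (p - 1)
              = 2 ^ p * h ^ ((r : ℝ) * p) := by
            rw [mul_assoc, ← Real.rpow_add hh0]
            congr 2
            ring
          have e4 : (2 * X ^ r) ^ p = 2 ^ p * X ^ ((r : ℝ) * p) := by
            rw [Real.mul_rpow (by norm_num) (by positivity),
              ← Real.rpow_natCast X r, ← Real.rpow_mul (by linarith)]
          rw [e3, e4]
          refine mul_le_mul_of_nonneg_left ?_ (by positivity)
          refine Real.rpow_le_rpow hh0.le hhX (by positivity)
  -- combine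
  have hWΔ : W * Δ = (∑ j ∈ Finset.range r, (c j * h ^ j) ^ p * Δ)
      + (2 * h ^ (r - 1) * M) ^ p * Δ := by
    rw [hW, add_mul, Finset.sum_mul]
  rw [hWΔ, ENNReal.ofReal_add (Finset.sum_nonneg fun j _ => by positivity) (by positivity),
    ENNReal.ofReal_sum_of_nonneg fun j _ => by positivity]
  refine add_le_add ?_ hMterm
  refine Finset.sum_le_sum fun j hj => ?_
  rw [Finset.mem_range] at hj
  refine ENNReal.ofReal_le_ofReal ?_
  calc (c j * h ^ j) ^ p * Δ ≤ h ^ ((j : ℝ) * p + 1) * c j ^ p := hexp j hj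
    _ = (lam (n + (r : ℤ)) - lam n) ^ ((j : ℝ) * p + 1) * ‖ddiv lam f n j‖ ^ p := rfl

/-- for `r ≥ 1`, `K > 0` there is `C₁ > 0` depending only on `r, K` such that
for every `1 ≤ p < ∞`, every sequence with steps bounded by `K`, and every admissible
`r`-extension `F` (with `r`-th derivative `G`) of `f`,
`∫_ℝ |F|^p ≤ C₁^p [ ∫_ℝ |F^{(r)}|^p + ‖f‖_{eq,W}^p ]`. -/
theorem stmt15 (r : ℕ) (hr : 1 ≤ r) (K : ℝ) (hK : 0 < K) :
    ∃ C₁ : ℝ, 0 < C₁ ∧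
      ∀ p : ℝ, 1 ≤ p → ∀ lam : ℤ → ℝ, GoodSeq lam →
        (∀ n : ℤ, lam (n + 1) - lam n ≤ K) →
        ∀ f : ℤ → ℂ, ∀ F G : ℝ → ℂ, AdmissibleExt r lam f F G →
        (∫⁻ t, ENNReal.ofReal (‖F t‖ ^ p)) ≤
          ENNReal.ofReal (C₁ ^ p) *
            ((∫⁻ t, ENNReal.ofReal (‖G t‖ ^ p)) + eqWp r p lam f) := by
  refine ⟨3 * ((r : ℝ) + 1) ^ 2 * (max 1 ((r : ℝ) * K)) ^ r, by positivity,
    fun p hp lam hg hstep f F G hadm => ?_⟩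
  set X := max 1 ((r : ℝ) * K) with hX
  have hX1 : (1 : ℝ) ≤ X := le_max_left _ _
  have hXr1 : (1 : ℝ) ≤ X ^ r := one_le_pow₀ hX1
  set C₁ := 3 * ((r : ℝ) + 1) ^ 2 * X ^ r with hC
  have hC1 : (r : ℝ) + 1 ≤ C₁ := by
    rw [hC]
    nlinarith [sq_nonneg ((r : ℝ) + 1), Nat.cast_nonneg (α := ℝ) r]
  set D := 2 * X ^ r with hD
  set IG := ∫⁻ t, ENNReal.ofReal (‖G t‖ ^ p) with hIG
  -- real coefficient inequalities
  have hCp1 : ((r : ℝ) + 1) ^ p ≤ C₁ ^ p :=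
    Real.rpow_le_rpow (by positivity) hC1 (by linarith)
  have hCp2 : ((r : ℝ) + 1) ^ p * D ^ p * (r : ℝ) ≤ C₁ ^ p := by
    have hE : C₁ = ((r : ℝ) + 1) * D * (3 / 2 * ((r : ℝ) + 1)) := by
      rw [hC, hD]; ring
    have hE1 : (1 : ℝ) ≤ 3 / 2 * ((r : ℝ) + 1) := by
      have : (0 : ℝ) ≤ (r : ℝ) := Nat.cast_nonneg r
      nlinarith
    have hrE : (r : ℝ) ≤ (3 / 2 * ((r : ℝ) + 1)) ^ p := by
      have h1 : (3 / 2 * ((r : ℝ) + 1)) ^ (1 : ℝ) ≤ (3 / 2 * ((r : ℝ) + 1)) ^ p :=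
        Real.rpow_le_rpow_of_exponent_le hE1 hp
      rw [Real.rpow_one] at h1
      have : (0 : ℝ) ≤ (r : ℝ) := Nat.cast_nonneg r
      nlinarith
    have key1 : C₁ ^ p = (((r : ℝ) + 1) * D) ^ p * (3 / 2 * ((r : ℝ) + 1)) ^ p := by
      rw [hE]
      exact Real.mul_rpow (by positivity) (by positivity)
    have key2 : (((r : ℝ) + 1) * D) ^ p = ((r : ℝ) + 1) ^ p * D ^ p :=
      Real.mul_rpow (by positivity) (by positivity)
    have h5 := mul_le_mul_of_nonneg_left hrE
      (show (0 : ℝ) ≤ ((r : ℝ) + 1) ^ p * D ^ p by positivity)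
    calc ((r : ℝ) + 1) ^ p * D ^ p * (r : ℝ)
        = (((r : ℝ) + 1) ^ p * D ^ p) * (r : ℝ) := by ring
      _ ≤ (((r : ℝ) + 1) ^ p * D ^ p) * (3 / 2 * ((r : ℝ) + 1)) ^ p := h5
      _ = C₁ ^ p := by rw [key1, key2]
  -- partition of the F-integral
  rw [lintegral_partition lam hg (fun t => ENNReal.ofReal (‖F t‖ ^ p))]
  have hbound := fun n : ℤ => interval_est r hr K hK hp lam hg hstep f F G hadm n
  refine le_trans (ENNReal.tsum_le_tsum hbound) ?_
  set Wn : ℤ → ℝ≥0∞ := fun n => ∑ j ∈ Finset.range r,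
    ENNReal.ofReal ((lam (n + (r : ℤ)) - lam n) ^ ((j : ℝ) * p + 1) *
      ‖ddiv lam f n j‖ ^ p) with hWn
  set Jn : ℤ → ℝ≥0∞ := fun n => ∫⁻ t in Set.Icc (lam n) (lam (n + (r : ℤ))),
    ENNReal.ofReal (‖G t‖ ^ p) with hJn
  have hJsum : ∑' n : ℤ, Jn n ≤ (r : ℝ≥0∞) * IG := by
    have h1 : ∀ n : ℤ, Jn n ≤ ∑ i ∈ Finset.range r,
        ∫⁻ t in Set.Icc (lam (n + (i : ℤ))) (lam (n + (i : ℤ) + 1)),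
          ENNReal.ofReal (‖G t‖ ^ p) :=
      fun n => lintegral_icc_cover_le lam hg.1 _ n r
    refine le_trans (ENNReal.tsum_le_tsum h1) ?_
    rw [Summable.tsum_finsetSum (fun i _ => ENNReal.summable)]
    refine le_of_eq ?_
    calc ∑ i ∈ Finset.range r, ∑' n : ℤ,
          ∫⁻ t in Set.Icc (lam (n + (i : ℤ))) (lam (n + (i : ℤ) + 1)),
            ENNReal.ofReal (‖G t‖ ^ p)
        = ∑ _i ∈ Finset.range r, IG :=
          Finset.sum_congr rfl fun i _ => tsum_icc_pieces lam hg _ i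
      _ = (r : ℝ≥0∞) * IG := by
          rw [Finset.sum_const, Finset.card_range, nsmul_eq_mul]
  have hDS : ∑' n : ℤ, Wn n ≤ eqWp r p lam f := by
    rw [hWn, Summable.tsum_finsetSum (fun j _ => ENNReal.summable)]
    exact le_add_self
  calc ∑' n : ℤ, ENNReal.ofReal (((r : ℝ) + 1) ^ p) *
        (Wn n + ENNReal.ofReal (D ^ p) * Jn n)
      = ENNReal.ofReal (((r : ℝ) + 1) ^ p) *
          ((∑' n : ℤ, Wn n) + ENNReal.ofReal (D ^ p) * ∑' n : ℤ, Jn n) := by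
        rw [ENNReal.tsum_mul_left, ENNReal.tsum_add, ENNReal.tsum_mul_left]
    _ ≤ ENNReal.ofReal (((r : ℝ) + 1) ^ p) * (∑' n : ℤ, Wn n) +
          ENNReal.ofReal (((r : ℝ) + 1) ^ p) * (ENNReal.ofReal (D ^ p) *
            ((r : ℝ≥0∞) * IG)) := by
        rw [mul_add]
        exact add_le_add (le_refl _) (mul_le_mul_right (mul_le_mul_right hJsum _) _)
    _ ≤ ENNReal.ofReal (C₁ ^ p) * eqWp r p lam f + ENNReal.ofReal (C₁ ^ p) * IG := by
        refine add_le_add (mul_le_mul' (ENNReal.ofReal_le_ofReal hCp1) hDS) ?_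
        have e1 : ENNReal.ofReal (((r : ℝ) + 1) ^ p) * (ENNReal.ofReal (D ^ p) *
            ((r : ℝ≥0∞) * IG))
            = (ENNReal.ofReal (((r : ℝ) + 1) ^ p * D ^ p * (r : ℝ))) * IG := by
          rw [ENNReal.ofReal_mul (by positivity), ENNReal.ofReal_mul (by positivity),
            ENNReal.ofReal_natCast]
          ring
        rw [e1]
        exact mul_le_mul_left (ENNReal.ofReal_le_ofReal hCp2) _
    _ = ENNReal.ofReal (C₁ ^ p) * (IG + eqWp r p lam f) := by ring
end

section
/- Let K > 0. There exist constants 0 < c ≤ C depending only on K such that for every real p with 1 ≤ p < ∞, every strictly increasing sequence λ : ℤ → ℝ with λ_n → ±∞ as n → ±∞ and λ_{n+1} − λ_n ≤ K for all n, and every f : ℤ → ℂ: c·(‖f‖_{eq,W}^p)^{1/p} ≤ (‖f‖_{simp,W}^p)^{1/p} ≤ C·(‖f‖_{eq,W}^p)^{1/p}, where ‖f‖_{eq,W}^p := ∑_{n∈ℤ} (λ_{n+2} − λ_n)|f[λ_n,λ_{n+1},λ_{n+2}]|^p + ∑_{n∈ℤ} (λ_{n+2} − λ_n)|f_n|^p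 + ∑_{n∈ℤ} (λ_{n+2} − λ_n)^{p+1}|f[λ_n,λ_{n+1}]|^p and ‖f‖_{simp,W}^p := ∑_{n∈ℤ} (λ_{n+2} − λ_n)|f[λ_n,λ_{n+1},λ_{n+2}]|^p + ∑_{n∈ℤ} (λ_{n+1} − λ_{n−1})|f_n|^p (all quantities in [0,∞]). -/
open MeasureTheory
open scoped ENNReal NNReal

namespace Stmt16Aux


/-- generic telescoping over `Finset.Ico` in `ℤ` -/
lemma tele {M : Type*} [AddCommGroup M] (g : ℤ → M) (a : ℤ) :
    ∀ b, a ≤ b → ∑ j ∈ Finset.Ico a b, (g (j + 1) - g j) = g b - g a := by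
  refine Int.le_induction ?_ ?_
  · simp
  · intro b hb ih
    rw [show Finset.Ico a (b + 1) = insert b (Finset.Ico a b) from by
        ext x; simp only [Finset.mem_Ico, Finset.mem_insert]; omega,
      Finset.sum_insert (by simp), ih]
    abel

lemma Ioc_eq_Ico (a c : ℤ) : Finset.Ioc a c = Finset.Ico (a + 1) (c + 1) := by
  ext x; simp only [Finset.mem_Ioc, Finset.mem_Ico]; omega

/-- reindex an `Ico` sum -/
lemma sum_Ico_shift {M : Type*} [AddCommMonoid M] (g : ℤ → M) (a c : ℤ) :
    ∑ j ∈ Finset.Ico a c, g (j + 1) = ∑ j ∈ Finset.Ico (a + 1) (c + 1), g j := by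
  rw [← Finset.map_add_right_Ico _ _ 1, Finset.sum_map]
  rfl

/-- reindex an `Ioc` sum -/
lemma sum_Ioc_reindex {M : Type*} [AddCommMonoid M] (g : ℤ → M) (a c : ℤ) :
    ∑ i ∈ Finset.Ioc a c, g i = ∑ j ∈ Finset.Ico a c, g (j + 1) := by
  rw [Ioc_eq_Ico, sum_Ico_shift]

/-- weighted Jensen for real rpow -/
lemma jensen {ι : Type*} (s : Finset ι) (a x : ι → ℝ) {p τ : ℝ} (hp : 1 ≤ p)
    (ha : ∀ i ∈ s, 0 ≤ a i) (hx : ∀ i ∈ s, 0 ≤ x i) (hτ : ∑ i ∈ s, a i ≤ τ) :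
    (∑ i ∈ s, a i * x i) ^ p ≤ τ ^ (p - 1) * ∑ i ∈ s, a i * x i ^ p := by
  have hp0 : (0:ℝ) < p := lt_of_lt_of_le one_pos hp
  have hT0 : 0 ≤ ∑ i ∈ s, a i := Finset.sum_nonneg ha
  have hRnn : 0 ≤ ∑ i ∈ s, a i * x i ^ p :=
    Finset.sum_nonneg fun i hi => mul_nonneg (ha i hi) (Real.rpow_nonneg (hx i hi) p)
  rcases eq_or_lt_of_le hT0 with hT | hT
  · have hz : ∀ i ∈ s, a i = 0 := (Finset.sum_eq_zero_iff_of_nonneg ha).1 hT.symm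
    have h1 : ∑ i ∈ s, a i * x i = 0 :=
      Finset.sum_eq_zero fun i hi => by rw [hz i hi, zero_mul]
    have h2 : ∑ i ∈ s, a i * x i ^ p = 0 :=
      Finset.sum_eq_zero fun i hi => by rw [hz i hi, zero_mul]
    rw [h1, h2, Real.zero_rpow hp0.ne', mul_zero]
  · have hτ0 : 0 < τ := lt_of_lt_of_le hT hτ
    set T := ∑ i ∈ s, a i with hTdef
    have key := Real.rpow_arith_mean_le_arith_mean_rpow s (fun i => a i / T) x
      (fun i hi => div_nonneg (ha i hi) hT.le)
      (by rw [← Finset.sum_div, div_self hT.ne']) hx hp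
    have e1 : ∑ i ∈ s, (a i / T) * x i = (∑ i ∈ s, a i * x i) / T := by
      rw [Finset.sum_div]; exact Finset.sum_congr rfl fun i _ => by ring
    have e2 : ∑ i ∈ s, (a i / T) * x i ^ p = (∑ i ∈ s, a i * x i ^ p) / T := by
      rw [Finset.sum_div]; exact Finset.sum_congr rfl fun i _ => by ring
    rw [e1, e2, Real.div_rpow
      (Finset.sum_nonneg fun i hi => mul_nonneg (ha i hi) (hx i hi)) hT.le] at key
    have hTp : (0:ℝ) < T ^ p := Real.rpow_pos_of_pos hT p
    rw [div_le_div_iff₀ hTp hT] at key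
    -- key : (∑ a x)^p * T ≤ (∑ a x^p) * T^p
    have hstep : (∑ i ∈ s, a i * x i) ^ p ≤ T ^ (p - 1) * ∑ i ∈ s, a i * x i ^ p := by
      rw [Real.rpow_sub hT, Real.rpow_one, div_mul_eq_mul_div, le_div_iff₀ hT, mul_comm (T^p)]
      nlinarith [key]
    refine hstep.trans (mul_le_mul_of_nonneg_right ?_ hRnn)
    exact Real.rpow_le_rpow hT.le hτ (by linarith)

/-- `(x+y)^p ≤ 2^p (x^p + y^p)` -/
lemma add2_rpow {x y p : ℝ} (hp : 1 ≤ p) (hx : 0 ≤ x) (hy : 0 ≤ y) :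
    (x + y) ^ p ≤ 2 ^ p * (x ^ p + y ^ p) := by
  have hp0 : (0:ℝ) ≤ p := by linarith
  have px := Real.rpow_nonneg hx p; have py := Real.rpow_nonneg hy p
  have hm0 : 0 ≤ max x y := le_trans hx (le_max_left _ _)
  have h1 : x + y ≤ 2 * max x y := by
    have := le_max_left x y; have := le_max_right x y; linarith
  have h2 : (x + y) ^ p ≤ (2 * max x y) ^ p := Real.rpow_le_rpow (by linarith) h1 hp0
  rw [Real.mul_rpow (by norm_num) hm0] at h2
  refine h2.trans (mul_le_mul_of_nonneg_left ?_ (Real.rpow_nonneg (by norm_num) p))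
  rcases max_cases x y with ⟨h, _⟩ | ⟨h, _⟩ <;> rw [h] <;> linarith

/-- `(x+y+z)^p ≤ 3^p (x^p + y^p + z^p)` -/
lemma add3_rpow {x y z p : ℝ} (hp : 1 ≤ p) (hx : 0 ≤ x) (hy : 0 ≤ y) (hz : 0 ≤ z) :
    (x + y + z) ^ p ≤ 3 ^ p * (x ^ p + y ^ p + z ^ p) := by
  have hp0 : (0:ℝ) ≤ p := by linarith
  have px := Real.rpow_nonneg hx p; have py := Real.rpow_nonneg hy p
  have pz := Real.rpow_nonneg hz p
  have hm0 : 0 ≤ max x (max y z) := le_trans hx (le_max_left _ _)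
  have h1 : x + y + z ≤ 3 * max x (max y z) := by
    have h2 := le_max_left x (max y z)
    have h3 := le_trans (le_max_left y z) (le_max_right x (max y z))
    have h4 := le_trans (le_max_right y z) (le_max_right x (max y z))
    linarith
  have h2 : (x + y + z) ^ p ≤ (3 * max x (max y z)) ^ p :=
    Real.rpow_le_rpow (by linarith) h1 hp0
  rw [Real.mul_rpow (by norm_num) hm0] at h2
  refine h2.trans (mul_le_mul_of_nonneg_left ?_ (Real.rpow_nonneg (by norm_num) p))
  rcases max_cases x (max y z) with ⟨h, _⟩ | ⟨h, _⟩
  · rw [h]; linarith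
  · rw [h]; rcases max_cases y z with ⟨h', _⟩ | ⟨h', _⟩ <;> rw [h'] <;> linarith

/-- disjoint gaps inside `[a,b]` sum to at most `b - a` (finite version) -/
lemma gaps_sum_le {lam : ℤ → ℝ} (hm : StrictMono lam) {a : ℝ} :
    ∀ (N : ℕ) (F : Finset ℤ) (b : ℝ), F.card ≤ N → a ≤ b →
      (∀ m ∈ F, a ≤ lam m ∧ lam (m + 1) ≤ b) →
      ∑ m ∈ F, (lam (m + 1) - lam m) ≤ b - a := by
  intro N
  induction N with
  | zero =>
    intro F b hc hab _
    rw [Nat.le_zero, Finset.card_eq_zero] at hc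
    subst hc; simpa using hab
  | succ N ih =>
    intro F b hc hab hF
    rcases F.eq_empty_or_nonempty with rfl | hne
    · simpa using hab
    · obtain ⟨m0, hmem, hmax⟩ : ∃ m0 ∈ F, ∀ m ∈ F, m ≤ m0 :=
        ⟨F.max' hne, F.max'_mem hne, fun m hm' => F.le_max' m hm'⟩
      have h1 := hF m0 hmem
      have step : ∀ m ∈ F.erase m0, a ≤ lam m ∧ lam (m + 1) ≤ lam m0 := by
        intro m hm'
        obtain ⟨hne', hmF⟩ := Finset.mem_erase.1 hm'
        refine ⟨(hF m hmF).1, ?_⟩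
        have : m < m0 := lt_of_le_of_ne (hmax m hmF) hne'
        exact hm.monotone (by omega)
      have hcard : (F.erase m0).card ≤ N := by
        have := Finset.card_erase_of_mem hmem
        have hpos := Finset.card_pos.mpr hne
        omega
      have h2 := ih (F.erase m0) (lam m0) hcard h1.1 step
      have h3 : ∑ m ∈ F, (lam (m + 1) - lam m) =
          ∑ m ∈ F.erase m0, (lam (m + 1) - lam m) + (lam (m0 + 1) - lam m0) :=
        (Finset.sum_erase_add F _ hmem).symm
      have h4 := h1.2
      rw [h3]
      linarith

/-- disjoint gaps inside `[a,b]`: tsum version -/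
lemma tsum_gaps_le {lam : ℤ → ℝ} (hm : StrictMono lam) (a b : ℝ) (P : ℤ → Prop)
    [DecidablePred P] (hP : ∀ m, P m → a ≤ lam m ∧ lam (m + 1) ≤ b) :
    ∑' m : ℤ, (if P m then ENNReal.ofReal (lam (m + 1) - lam m) else 0) ≤
      ENNReal.ofReal (b - a) := by
  rw [ENNReal.tsum_eq_iSup_sum]
  refine iSup_le fun F => ?_
  rw [← Finset.sum_filter]
  rcases (F.filter P).eq_empty_or_nonempty with he | hne
  · rw [he]; simp
  · have hab : a ≤ b := by
      obtain ⟨m, hmf⟩ := hne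
      have hPm := hP m (Finset.mem_filter.1 hmf).2
      have := hm (show m < m + 1 by omega)
      linarith [hPm.1, hPm.2]
    rw [← ENNReal.ofReal_sum_of_nonneg (fun m _ => by
      have := hm (show m < m + 1 by omega); linarith)]
    exact ENNReal.ofReal_le_ofReal (gaps_sum_le hm (F.filter P).card _ _ le_rfl hab
      (fun m hmf => hP m (Finset.mem_filter.1 hmf).2))

/-- Fubini with bounded-overlap windows -/
lemma fub {lam : ℤ → ℝ} (hm : StrictMono lam) (s₀ : ℤ) (c₁ c₂ : ℝ)
    (t : ℤ → ℝ≥0∞) (s : ℤ → Finset ℤ)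
    (hs : ∀ n, ∀ i ∈ s n, lam i - c₁ ≤ lam (n + s₀) ∧ lam (n + s₀ + 1) ≤ lam i + c₂) :
    ∑' n : ℤ, ENNReal.ofReal (lam (n + s₀ + 1) - lam (n + s₀)) * ∑ i ∈ s n, t i ≤
      ENNReal.ofReal (c₁ + c₂) * ∑' i : ℤ, t i := by
  classical
  set u : ℤ → ℝ≥0∞ := fun n => ENNReal.ofReal (lam (n + s₀ + 1) - lam (n + s₀)) with hu
  have key : ∀ n : ℤ, u n * ∑ i ∈ s n, t i = ∑' i : ℤ, (if i ∈ s n then u n * t i else 0) := by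
    intro n
    rw [tsum_eq_sum (s := s n) (fun i hi => if_neg hi), Finset.mul_sum]
    exact Finset.sum_congr rfl fun i hi => (if_pos hi).symm
  calc ∑' n : ℤ, u n * ∑ i ∈ s n, t i
      = ∑' (n : ℤ) (i : ℤ), (if i ∈ s n then u n * t i else 0) := tsum_congr key
    _ = ∑' (i : ℤ) (n : ℤ), (if i ∈ s n then u n * t i else 0) := ENNReal.tsum_comm
    _ ≤ ∑' i : ℤ, ENNReal.ofReal (c₁ + c₂) * t i := by
        refine ENNReal.tsum_le_tsum fun i => ?_
        have e1 : ∑' n : ℤ, (if i ∈ s n then u n * t i else 0)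
            = (∑' n : ℤ, (if i ∈ s n then u n else 0)) * t i := by
          rw [← ENNReal.tsum_mul_right]
          exact tsum_congr fun n => by split <;> simp
        rw [e1]
        refine mul_le_mul_left ?_ (t i)
        have e2 : ∀ n : ℤ, (if i ∈ s n then u n else 0) ≤
            (fun m => if lam i - c₁ ≤ lam m ∧ lam (m + 1) ≤ lam i + c₂
              then ENNReal.ofReal (lam (m + 1) - lam m) else 0) (n + s₀) := by
          intro n
          by_cases hin : i ∈ s n
          · rw [if_pos hin]
            simp only
            rw [if_pos (hs n i hin)]
          · simp [hin]
        refine le_trans (ENNReal.tsum_le_tsum e2) (le_trans (le_of_eq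
          ((Equiv.addRight s₀).tsum_eq
            (fun m => if lam i - c₁ ≤ lam m ∧ lam (m + 1) ≤ lam i + c₂
              then ENNReal.ofReal (lam (m + 1) - lam m) else 0))) ?_)
        refine le_trans (tsum_gaps_le hm (lam i - c₁) (lam i + c₂) _ (fun m hm' => hm')) ?_
        exact le_of_eq (by congr 1; ring)
    _ = ENNReal.ofReal (c₁ + c₂) * ∑' i : ℤ, t i := ENNReal.tsum_mul_left

/-- composing `^p`-type bounds -/
lemma good_comp {p α β : ℝ} {X Y E : ℝ≥0∞} (hα : 0 ≤ α) (hβ : 0 ≤ β)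
    (h1 : X ≤ ENNReal.ofReal (α ^ p) * Y) (h2 : Y ≤ ENNReal.ofReal (β ^ p) * E) :
    X ≤ ENNReal.ofReal ((α * β) ^ p) * E := by
  refine h1.trans ?_
  calc ENNReal.ofReal (α ^ p) * Y
      ≤ ENNReal.ofReal (α ^ p) * (ENNReal.ofReal (β ^ p) * E) := mul_le_mul_right h2 _
    _ = ENNReal.ofReal ((α * β) ^ p) * E := by
        rw [← mul_assoc, ← ENNReal.ofReal_mul (Real.rpow_nonneg hα p),
          ← Real.mul_rpow hα hβ]

/-- adding `^p`-type bounds -/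
lemma good_add {p α β : ℝ} (hp : 1 ≤ p) {X Y E : ℝ≥0∞} (hα : 0 ≤ α) (hβ : 0 ≤ β)
    (h1 : X ≤ ENNReal.ofReal (α ^ p) * E) (h2 : Y ≤ ENNReal.ofReal (β ^ p) * E) :
    X + Y ≤ ENNReal.ofReal ((α + β) ^ p) * E := by
  have hp0 : (0:ℝ) ≤ p := by linarith
  refine (add_le_add h1 h2).trans ?_
  rw [← add_mul]
  refine mul_le_mul_left ?_ E
  rw [← ENNReal.ofReal_rpow_of_nonneg hα hp0, ← ENNReal.ofReal_rpow_of_nonneg hβ hp0,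
    ← ENNReal.ofReal_rpow_of_nonneg (by linarith) hp0]
  -- a^p + b^p ≤ (a+b)^p  in ℝ≥0∞
  have hppos : (0:ℝ) < p := by linarith
  have h := ENNReal.rpow_add_rpow_le_add (ENNReal.ofReal α) (ENNReal.ofReal β) hp
  have h2' := ENNReal.rpow_le_rpow h (le_of_lt hppos)
  rw [← ENNReal.rpow_mul, one_div_mul_cancel hppos.ne', ENNReal.rpow_one] at h2'
  rwa [ENNReal.ofReal_add hα hβ]



section Core
variable {K p : ℝ} {lam : ℤ → ℝ} {f : ℤ → ℂ}

lemma gap_pos (hm : StrictMono lam) (n : ℤ) : 0 < lam (n + 1) - lam n :=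
  sub_pos.2 (hm (by omega))

lemma gap2_pos (hm : StrictMono lam) (n : ℤ) : 0 < lam (n + 2) - lam n :=
  sub_pos.2 (hm (by omega))

lemma I1 (hm : StrictMono lam) (n : ℤ) :
    f (n + 1) - f n = ((lam (n + 1) - lam n : ℝ) : ℂ) * dd1 lam f n := by
  have hne : ((lam (n + 1) - lam n : ℝ) : ℂ) ≠ 0 :=
    Complex.ofReal_ne_zero.mpr (ne_of_gt (gap_pos hm n))
  rw [dd1, mul_comm, div_mul_cancel₀ _ hne]

lemma I2 (hm : StrictMono lam) (n : ℤ) :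
    dd1 lam f (n + 1) - dd1 lam f n = ((lam (n + 2) - lam n : ℝ) : ℂ) * dd2 lam f n := by
  have hne : ((lam (n + 2) - lam n : ℝ) : ℂ) ≠ 0 :=
    Complex.ofReal_ne_zero.mpr (ne_of_gt (gap2_pos hm n))
  rw [dd2, mul_comm, div_mul_cancel₀ _ hne]


lemma f_diff (hm : StrictMono lam) (a i : ℤ) (hai : a ≤ i) :
    f i - f a = ∑ j ∈ Finset.Ico a i, ((lam (j + 1) - lam j : ℝ) : ℂ) * dd1 lam f j := by
  rw [← tele (fun j => f j) a i hai]
  exact Finset.sum_congr rfl fun j _ => I1 hm j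

lemma dd1_diff (hm : StrictMono lam) (a j : ℤ) (haj : a ≤ j) :
    dd1 lam f j - dd1 lam f a
      = ∑ m ∈ Finset.Ico a j, ((lam (m + 2) - lam m : ℝ) : ℂ) * dd2 lam f m := by
  rw [← tele (fun m => dd1 lam f m) a j haj]
  exact Finset.sum_congr rfl fun m _ => I2 hm m

lemma lam_diff (a i : ℤ) (hai : a ≤ i) :
    lam i - lam a = ∑ j ∈ Finset.Ico a i, (lam (j + 1) - lam j) :=
  (tele lam a i hai).symm

set_option maxHeartbeats 1000000 in
lemma core_f (hK : 0 < K) (hp : 1 ≤ p) (hm : StrictMono lam) (n b : ℤ) (hnb : n < b)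
    (hb1 : 1 ≤ lam b - lam n) (hb2 : lam b - lam n < 1 + K) :
    ‖f n‖ ^ p ≤ (2 * (1 + K) ^ 2) ^ p *
      (∑ i ∈ Finset.Ioc n b, (lam i - lam (i - 1)) * ‖f i‖ ^ p
        + ∑ j ∈ Finset.Ico n b, (lam (j + 1) - lam j) * ‖dd1 lam f j‖ ^ p) := by
  have hp0 : (0:ℝ) < p := by linarith
  have habs : ∀ z : ℂ, 0 ≤ ‖z‖ := fun z => norm_nonneg z
  have hwm : ∀ i : ℤ, 0 ≤ lam i - lam (i - 1) := fun i => by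
    have := hm (show i - 1 < i by omega); linarith
  have hK1 : (1:ℝ) ≤ 1 + K := by linarith
  set R := ∑ j ∈ Finset.Ico n b, (lam (j + 1) - lam j) * ‖dd1 lam f j‖ with hR
  have hRnn : 0 ≤ R :=
    Finset.sum_nonneg fun j _ => mul_nonneg (le_of_lt (gap_pos hm j)) (habs _)
  have hBi : ∀ i ∈ Finset.Ioc n b, ‖f n‖ ≤ ‖f i‖ + R := by
    intro i hi
    obtain ⟨hni, hib⟩ := Finset.mem_Ioc.1 hi
    have h1 : ‖f i - f n‖ ≤ R := by
      rw [f_diff hm n i (le_of_lt hni), hR]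
      refine le_trans (norm_sum_le _ _) ?_
      refine le_trans (Finset.sum_le_sum (fun j _ => ?_))
        (Finset.sum_le_sum_of_subset_of_nonneg
          (Finset.Ico_subset_Ico le_rfl hib)
          (fun j _ _ => mul_nonneg (le_of_lt (gap_pos hm j)) (habs _)))
      rw [norm_mul, Complex.norm_real, Real.norm_of_nonneg (le_of_lt (gap_pos hm j))]
    calc ‖f n‖ = ‖f i - (f i - f n)‖ := by rw [sub_sub_cancel]
      _ ≤ ‖f i‖ + ‖f i - f n‖ := by
          rw [sub_eq_add_neg]
          refine le_trans (norm_add_le _ _) ?_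
          rw [norm_neg]
      _ ≤ ‖f i‖ + R := by linarith
  set W := lam b - lam n with hW
  have hWsum : ∑ i ∈ Finset.Ioc n b, (lam i - lam (i - 1)) = W := by
    rw [sum_Ioc_reindex (fun i => lam i - lam (i - 1)) n b]
    simp only [add_sub_cancel_right]
    exact (lam_diff n b (le_of_lt hnb)).symm
  set Y := ∑ i ∈ Finset.Ioc n b, (lam i - lam (i - 1)) * ‖f i‖ with hY
  have hYnn : 0 ≤ Y := Finset.sum_nonneg fun i _ => mul_nonneg (hwm i) (habs _)
  have hMain : ‖f n‖ ≤ Y + (1 + K) * R := by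
    have h0 : ‖f n‖ ≤ W * ‖f n‖ :=
      le_mul_of_one_le_left (habs _) hb1
    have h1 : W * ‖f n‖
        = ∑ i ∈ Finset.Ioc n b, (lam i - lam (i - 1)) * ‖f n‖ := by
      rw [← Finset.sum_mul, hWsum]
    have h2 : ∑ i ∈ Finset.Ioc n b, (lam i - lam (i - 1)) * ‖f n‖
        ≤ ∑ i ∈ Finset.Ioc n b, (lam i - lam (i - 1)) * (‖f i‖ + R) :=
      Finset.sum_le_sum fun i hi => mul_le_mul_of_nonneg_left (hBi i hi) (hwm i)
    have h3 : ∑ i ∈ Finset.Ioc n b, (lam i - lam (i - 1)) * (‖f i‖ + R)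
        = Y + W * R := by
      simp only [mul_add]
      rw [Finset.sum_add_distrib, ← Finset.sum_mul, hWsum, hY]
    have h4 : W * R ≤ (1 + K) * R := mul_le_mul_of_nonneg_right (le_of_lt hb2) hRnn
    rw [h1] at h0
    rw [h3] at h2
    linarith
  have step1 : ‖f n‖ ^ p ≤ (Y + (1 + K) * R) ^ p :=
    Real.rpow_le_rpow (habs _) hMain hp0.le
  have step2 : (Y + (1 + K) * R) ^ p ≤ 2 ^ p * (Y ^ p + ((1 + K) * R) ^ p) :=
    add2_rpow hp hYnn (mul_nonneg (by linarith) hRnn)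
  set Sf := ∑ i ∈ Finset.Ioc n b, (lam i - lam (i - 1)) * ‖f i‖ ^ p with hSf
  set Sd := ∑ j ∈ Finset.Ico n b, (lam (j + 1) - lam j) * ‖dd1 lam f j‖ ^ p with hSd
  have hSfnn : 0 ≤ Sf := Finset.sum_nonneg fun i _ =>
    mul_nonneg (hwm i) (Real.rpow_nonneg (habs _) p)
  have hSdnn : 0 ≤ Sd := Finset.sum_nonneg fun j _ =>
    mul_nonneg (le_of_lt (gap_pos hm j)) (Real.rpow_nonneg (habs _) p)
  have hjY : Y ^ p ≤ (1 + K) ^ (p - 1) * Sf :=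
    jensen _ _ _ hp (fun i _ => hwm i) (fun i _ => habs _)
      (by rw [hWsum]; exact le_of_lt hb2)
  have hjR : R ^ p ≤ (1 + K) ^ (p - 1) * Sd :=
    jensen _ _ _ hp (fun j _ => le_of_lt (gap_pos hm j)) (fun j _ => habs _)
      (by rw [← lam_diff n b (le_of_lt hnb)]; exact le_of_lt hb2)
  have hmul : ((1 + K) * R) ^ p = (1 + K) ^ p * R ^ p := Real.mul_rpow (by linarith) hRnn
  -- coefficient bounds
  have hpow : (1 + K) ^ (p - 1) ≤ (1 + K) ^ p :=
    Real.rpow_le_rpow_of_exponent_le hK1 (by linarith)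
  have h2p : (0:ℝ) ≤ 2 ^ p := Real.rpow_nonneg (by norm_num) p
  have hKp : (0:ℝ) ≤ (1 + K) ^ p := Real.rpow_nonneg (by linarith) p
  have hc1 : 2 ^ p * (1 + K) ^ (p - 1) ≤ (2 * (1 + K) ^ 2) ^ p := by
    calc 2 ^ p * (1 + K) ^ (p - 1) ≤ 2 ^ p * (1 + K) ^ p :=
          mul_le_mul_of_nonneg_left hpow h2p
      _ = (2 * (1 + K)) ^ p := (Real.mul_rpow (by norm_num) (by linarith)).symm
      _ ≤ (2 * (1 + K) ^ 2) ^ p := by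
          refine Real.rpow_le_rpow (by linarith) ?_ hp0.le
          nlinarith
  have hc2 : 2 ^ p * ((1 + K) ^ p * (1 + K) ^ (p - 1)) ≤ (2 * (1 + K) ^ 2) ^ p := by
    have e : 2 ^ p * ((1 + K) ^ p * (1 + K) ^ p) = (2 * (1 + K) ^ 2) ^ p := by
      rw [← Real.mul_rpow (by linarith) (by linarith), ← Real.mul_rpow (by norm_num)
        (by nlinarith)]
      congr 1; ring
    calc 2 ^ p * ((1 + K) ^ p * (1 + K) ^ (p - 1))
        ≤ 2 ^ p * ((1 + K) ^ p * (1 + K) ^ p) := by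
          refine mul_le_mul_of_nonneg_left (mul_le_mul_of_nonneg_left hpow hKp) h2p
      _ = (2 * (1 + K) ^ 2) ^ p := e
  -- combine
  have hfinal : ‖f n‖ ^ p
      ≤ 2 ^ p * ((1 + K) ^ (p - 1) * Sf) + 2 ^ p * ((1 + K) ^ p * ((1 + K) ^ (p - 1) * Sd)) := by
    have e1 : ‖f n‖ ^ p ≤ 2 ^ p * Y ^ p + 2 ^ p * ((1 + K) ^ p * R ^ p) := by
      rw [hmul] at step2; linarith
    have e2 : 2 ^ p * Y ^ p ≤ 2 ^ p * ((1 + K) ^ (p - 1) * Sf) :=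
      mul_le_mul_of_nonneg_left hjY h2p
    have e3 : 2 ^ p * ((1 + K) ^ p * R ^ p)
        ≤ 2 ^ p * ((1 + K) ^ p * ((1 + K) ^ (p - 1) * Sd)) :=
      mul_le_mul_of_nonneg_left (mul_le_mul_of_nonneg_left hjR hKp) h2p
    linarith
  calc ‖f n‖ ^ p
      ≤ 2 ^ p * ((1 + K) ^ (p - 1) * Sf) + 2 ^ p * ((1 + K) ^ p * ((1 + K) ^ (p - 1) * Sd)) :=
        hfinal
    _ = (2 ^ p * (1 + K) ^ (p - 1)) * Sf + (2 ^ p * ((1 + K) ^ p * (1 + K) ^ (p - 1))) * Sd := by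
        ring
    _ ≤ (2 * (1 + K) ^ 2) ^ p * Sf + (2 * (1 + K) ^ 2) ^ p * Sd := by
        refine add_le_add (mul_le_mul_of_nonneg_right hc1 hSfnn)
          (mul_le_mul_of_nonneg_right hc2 hSdnn)
    _ = (2 * (1 + K) ^ 2) ^ p * (Sf + Sd) := by ring

set_option maxHeartbeats 1000000 in
lemma core_dd1 (hK : 0 < K) (hp : 1 ≤ p) (hm : StrictMono lam) (k b b2 : ℤ)
    (hkb : k < b) (hb1 : 1 ≤ lam b - lam k) (hb2 : lam b - lam k < 1 + K)
    (hbb2 : b < b2) (hb21 : 1 ≤ lam b2 - lam b) (hb22 : lam b2 - lam b < 1 + K) :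
    ‖dd1 lam f k‖ ^ p ≤ (24 * (1 + K) ^ 3) ^ p *
      (‖f k‖ ^ p
        + ∑ i ∈ Finset.Ioc b b2, (lam i - lam (i - 1)) * ‖f i‖ ^ p
        + ∑ m ∈ Finset.Ico k (b2 - 1), (lam (m + 2) - lam m) * ‖dd2 lam f m‖ ^ p) := by
  have hp0 : (0:ℝ) < p := by linarith
  have habs : ∀ z : ℂ, 0 ≤ ‖z‖ := fun z => norm_nonneg z
  have hwm : ∀ i : ℤ, 0 ≤ lam i - lam (i - 1) := fun i => by
    have := hm (show i - 1 < i by omega); linarith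
  have hw2 : ∀ m : ℤ, 0 ≤ lam (m + 2) - lam m := fun m => (gap2_pos hm m).le
  have hK1 : (1:ℝ) ≤ 1 + K := by linarith
  set Sig := ∑ m ∈ Finset.Ico k (b2 - 1), (lam (m + 2) - lam m) * ‖dd2 lam f m‖
    with hSig
  have hSignn : 0 ≤ Sig := Finset.sum_nonneg fun m _ => mul_nonneg (hw2 m) (habs _)
  have stepA : ∀ j, k ≤ j → j ≤ b2 - 1 →
      ‖dd1 lam f j - dd1 lam f k‖ ≤ Sig := by
    intro j hkj hjb
    rw [dd1_diff hm k j hkj, hSig]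
    refine le_trans (norm_sum_le _ _) ?_
    refine le_trans (Finset.sum_le_sum (fun m _ => ?_))
      (Finset.sum_le_sum_of_subset_of_nonneg (Finset.Ico_subset_Ico le_rfl hjb)
        (fun m _ _ => mul_nonneg (hw2 m) (habs _)))
    rw [norm_mul, Complex.norm_real, Real.norm_of_nonneg (hw2 m)]
  have stepB : ∀ i ∈ Finset.Ioc b b2, ‖dd1 lam f k‖
      ≤ ‖f k‖ + ‖f i‖ + (2 + 2 * K) * Sig := by
    intro i hi
    obtain ⟨hbi, hib2⟩ := Finset.mem_Ioc.1 hi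
    have hki : k < i := lt_trans hkb hbi
    set d := lam i - lam k with hd
    have hd1 : 1 ≤ d := by have := hm hbi; rw [hd]; linarith
    have hd2 : d ≤ 2 + 2 * K := by
      have h5 : lam i ≤ lam b2 := hm.monotone hib2
      rw [hd]; linarith
    have hid : ((d : ℝ) : ℂ) * dd1 lam f k
        = (f i - f k) + ∑ j ∈ Finset.Ico k i,
            ((lam (j + 1) - lam j : ℝ) : ℂ) * (dd1 lam f k - dd1 lam f j) := by
      have e1 : ∑ j ∈ Finset.Ico k i,
            ((lam (j + 1) - lam j : ℝ) : ℂ) * (dd1 lam f k - dd1 lam f j)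
          = (∑ j ∈ Finset.Ico k i, ((lam (j + 1) - lam j : ℝ) : ℂ)) * dd1 lam f k
            - ∑ j ∈ Finset.Ico k i, ((lam (j + 1) - lam j : ℝ) : ℂ) * dd1 lam f j := by
        rw [Finset.sum_mul, ← Finset.sum_sub_distrib]
        exact Finset.sum_congr rfl fun j _ => by ring
      have e2 : (∑ j ∈ Finset.Ico k i, ((lam (j + 1) - lam j : ℝ) : ℂ)) = ((d : ℝ) : ℂ) := by
        rw [hd, lam_diff k i (le_of_lt hki)]
        push_cast
        ring
      rw [e1, e2, ← f_diff hm k i (le_of_lt hki)]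
      ring
    have habsd : ‖((d : ℝ) : ℂ) * dd1 lam f k‖
        = d * ‖dd1 lam f k‖ := by
      rw [norm_mul, Complex.norm_real, Real.norm_of_nonneg (by linarith)]
    have hsum : ‖∑ j ∈ Finset.Ico k i,
        ((lam (j + 1) - lam j : ℝ) : ℂ) * (dd1 lam f k - dd1 lam f j)‖ ≤ d * Sig := by
      refine le_trans (norm_sum_le _ _) ?_
      have hterm : ∀ j ∈ Finset.Ico k i,
          ‖((lam (j + 1) - lam j : ℝ) : ℂ) * (dd1 lam f k - dd1 lam f j)‖
            ≤ (lam (j + 1) - lam j) * Sig := by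
        intro j hj
        obtain ⟨hkj, hji⟩ := Finset.mem_Ico.1 hj
        rw [norm_mul, Complex.norm_real, Real.norm_of_nonneg (gap_pos hm j).le]
        refine mul_le_mul_of_nonneg_left ?_ (gap_pos hm j).le
        rw [norm_sub_rev]
        exact stepA j hkj (by omega)
      refine le_trans (Finset.sum_le_sum hterm) ?_
      rw [← Finset.sum_mul, ← lam_diff k i (le_of_lt hki)]
    have hd0 : ‖dd1 lam f k‖ ≤ d * ‖dd1 lam f k‖ :=
      le_mul_of_one_le_left (habs _) hd1
    have htri : d * ‖dd1 lam f k‖ ≤ ‖f i - f k‖ + d * Sig := by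
      rw [← habsd, hid]
      refine le_trans (norm_add_le _ _) ?_
      exact add_le_add_right hsum _
    have hfik : ‖f i - f k‖ ≤ ‖f i‖ + ‖f k‖ := by
      rw [sub_eq_add_neg]
      refine le_trans (norm_add_le _ _) ?_
      rw [norm_neg]
    have hlast : d * Sig ≤ (2 + 2 * K) * Sig := mul_le_mul_of_nonneg_right hd2 hSignn
    linarith
  -- averaging over the far window
  set W := lam b2 - lam b with hW
  have hWsum : ∑ i ∈ Finset.Ioc b b2, (lam i - lam (i - 1)) = W := by
    rw [sum_Ioc_reindex (fun i => lam i - lam (i - 1)) b b2]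
    simp only [add_sub_cancel_right]
    exact (lam_diff b b2 (le_of_lt hbb2)).symm
  set Y := ∑ i ∈ Finset.Ioc b b2, (lam i - lam (i - 1)) * ‖f i‖ with hY
  have hYnn : 0 ≤ Y := Finset.sum_nonneg fun i _ => mul_nonneg (hwm i) (habs _)
  have hMain : ‖dd1 lam f k‖
      ≤ (1 + K) * ‖f k‖ + Y + ((1 + K) * (2 + 2 * K)) * Sig := by
    have h0 : ‖dd1 lam f k‖ ≤ W * ‖dd1 lam f k‖ :=
      le_mul_of_one_le_left (habs _) hb21
    have h1 : W * ‖dd1 lam f k‖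
        = ∑ i ∈ Finset.Ioc b b2, (lam i - lam (i - 1)) * ‖dd1 lam f k‖ := by
      rw [← Finset.sum_mul, hWsum]
    have h2 : ∑ i ∈ Finset.Ioc b b2, (lam i - lam (i - 1)) * ‖dd1 lam f k‖
        ≤ ∑ i ∈ Finset.Ioc b b2, (lam i - lam (i - 1)) *
            (‖f k‖ + ‖f i‖ + (2 + 2 * K) * Sig) :=
      Finset.sum_le_sum fun i hi => mul_le_mul_of_nonneg_left (stepB i hi) (hwm i)
    have h3 : ∑ i ∈ Finset.Ioc b b2, (lam i - lam (i - 1)) *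
          (‖f k‖ + ‖f i‖ + (2 + 2 * K) * Sig)
        = W * (‖f k‖ + (2 + 2 * K) * Sig) + Y := by
      have : ∀ i ∈ Finset.Ioc b b2, (lam i - lam (i - 1)) *
            (‖f k‖ + ‖f i‖ + (2 + 2 * K) * Sig)
          = (lam i - lam (i - 1)) * (‖f k‖ + (2 + 2 * K) * Sig)
            + (lam i - lam (i - 1)) * ‖f i‖ := fun i _ => by ring
      rw [Finset.sum_congr rfl this, Finset.sum_add_distrib, ← Finset.sum_mul, hWsum, hY]
    have h4 : W * (‖f k‖ + (2 + 2 * K) * Sig)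
        ≤ (1 + K) * (‖f k‖ + (2 + 2 * K) * Sig) := by
      refine mul_le_mul_of_nonneg_right (le_of_lt hb22) ?_
      have : 0 ≤ (2 + 2 * K) * Sig := mul_nonneg (by linarith) hSignn
      linarith [habs (f k)]
    rw [h1] at h0
    rw [h3] at h2
    nlinarith [habs (f k), hSignn]
  -- rpow step
  set x1 := (1 + K) * ‖f k‖ with hx1
  set z1 := ((1 + K) * (2 + 2 * K)) * Sig with hz1
  have hx1nn : 0 ≤ x1 := mul_nonneg (by linarith) (habs _)
  have hz1nn : 0 ≤ z1 := mul_nonneg (by nlinarith) hSignn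
  have step1 : ‖dd1 lam f k‖ ^ p ≤ (x1 + Y + z1) ^ p :=
    Real.rpow_le_rpow (habs _) hMain hp0.le
  have step2 : (x1 + Y + z1) ^ p ≤ 3 ^ p * (x1 ^ p + Y ^ p + z1 ^ p) :=
    add3_rpow hp hx1nn hYnn hz1nn
  set Sf := ∑ i ∈ Finset.Ioc b b2, (lam i - lam (i - 1)) * ‖f i‖ ^ p with hSf
  set Sd2 := ∑ m ∈ Finset.Ico k (b2 - 1), (lam (m + 2) - lam m) * ‖dd2 lam f m‖ ^ p
    with hSd2
  have hSfnn : 0 ≤ Sf := Finset.sum_nonneg fun i _ =>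
    mul_nonneg (hwm i) (Real.rpow_nonneg (habs _) p)
  have hSd2nn : 0 ≤ Sd2 := Finset.sum_nonneg fun m _ =>
    mul_nonneg (hw2 m) (Real.rpow_nonneg (habs _) p)
  have hjY : Y ^ p ≤ (1 + K) ^ (p - 1) * Sf :=
    jensen _ _ _ hp (fun i _ => hwm i) (fun i _ => habs _)
      (by rw [hWsum]; exact le_of_lt hb22)
  have hτ2 : ∑ m ∈ Finset.Ico k (b2 - 1), (lam (m + 2) - lam m) ≤ 4 + 4 * K := by
    have hsplit : ∑ m ∈ Finset.Ico k (b2 - 1), (lam (m + 2) - lam m)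
        = (∑ m ∈ Finset.Ico k (b2 - 1), (lam (m + 2) - lam (m + 1)))
          + ∑ m ∈ Finset.Ico k (b2 - 1), (lam (m + 1) - lam m) := by
      rw [← Finset.sum_add_distrib]
      exact Finset.sum_congr rfl fun m _ => by ring
    have hfirst : ∑ m ∈ Finset.Ico k (b2 - 1), (lam (m + 2) - lam (m + 1))
        = lam b2 - lam (k + 1) := by
      have e : ∀ m ∈ Finset.Ico k (b2 - 1), lam (m + 2) - lam (m + 1)
          = (fun j => lam (j + 1) - lam j) (m + 1) := by
        intro m _
        simp only
        rw [show m + 1 + 1 = m + 2 by ring]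
      rw [Finset.sum_congr rfl e, sum_Ico_shift (fun j => lam (j + 1) - lam j) k (b2 - 1),
        show b2 - 1 + 1 = b2 by ring, ← lam_diff (k + 1) b2 (by omega)]
    have hsecond : ∑ m ∈ Finset.Ico k (b2 - 1), (lam (m + 1) - lam m)
        = lam (b2 - 1) - lam k := (lam_diff k (b2 - 1) (by omega)).symm
    have hmono1 : lam k ≤ lam (k + 1) := hm.monotone (by omega)
    have hmono2 : lam (b2 - 1) ≤ lam b2 := hm.monotone (by omega)
    rw [hsplit, hfirst, hsecond]
    linarith
  have hjSig : Sig ^ p ≤ (4 + 4 * K) ^ (p - 1) * Sd2 :=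
    jensen _ _ _ hp (fun m _ => hw2 m) (fun m _ => habs _) hτ2
  have hx1p : x1 ^ p = (1 + K) ^ p * ‖f k‖ ^ p :=
    Real.mul_rpow (by linarith) (habs _)
  have hz1p : z1 ^ p = ((1 + K) * (2 + 2 * K)) ^ p * Sig ^ p :=
    Real.mul_rpow (by nlinarith) hSignn
  -- coefficients
  have h3p : (0:ℝ) ≤ 3 ^ p := Real.rpow_nonneg (by norm_num) p
  have hKp : (0:ℝ) ≤ (1 + K) ^ p := Real.rpow_nonneg (by linarith) p
  have hafk : 0 ≤ ‖f k‖ ^ p := Real.rpow_nonneg (habs _) p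
  have hpow1 : (1 + K) ^ (p - 1) ≤ (1 + K) ^ p :=
    Real.rpow_le_rpow_of_exponent_le hK1 (by linarith)
  have hpow4 : (4 + 4 * K) ^ (p - 1) ≤ (4 + 4 * K) ^ p :=
    Real.rpow_le_rpow_of_exponent_le (by linarith) (by linarith)
  have hc1 : 3 ^ p * (1 + K) ^ p ≤ (24 * (1 + K) ^ 3) ^ p := by
    rw [← Real.mul_rpow (by norm_num) (by linarith)]
    refine Real.rpow_le_rpow (by linarith) ?_ hp0.le
    have h1 : (1 + K) ^ 1 ≤ (1 + K) ^ 3 := pow_le_pow_right₀ hK1 (by norm_num)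
    rw [pow_one] at h1
    nlinarith [h1, pow_nonneg (show (0:ℝ) ≤ 1 + K by linarith) 3]
  have hc2 : 3 ^ p * (1 + K) ^ (p - 1) ≤ (24 * (1 + K) ^ 3) ^ p := by
    refine le_trans (mul_le_mul_of_nonneg_left hpow1 h3p) hc1
  have hc3 : 3 ^ p * (((1 + K) * (2 + 2 * K)) ^ p * (4 + 4 * K) ^ (p - 1))
      ≤ (24 * (1 + K) ^ 3) ^ p := by
    have hKKnn : (0:ℝ) ≤ (1 + K) * (2 + 2 * K) := by nlinarith
    have h1 : 3 ^ p * (((1 + K) * (2 + 2 * K)) ^ p * (4 + 4 * K) ^ (p - 1))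
        ≤ 3 ^ p * (((1 + K) * (2 + 2 * K)) ^ p * (4 + 4 * K) ^ p) :=
      mul_le_mul_of_nonneg_left
        (mul_le_mul_of_nonneg_left hpow4 (Real.rpow_nonneg hKKnn p)) h3p
    refine h1.trans (le_of_eq ?_)
    rw [← Real.mul_rpow hKKnn (by linarith), ← Real.mul_rpow (by norm_num) (by nlinarith)]
    congr 1; ring
  -- combine
  have hKKnn : (0:ℝ) ≤ (1 + K) * (2 + 2 * K) := by nlinarith
  have hfinal : ‖dd1 lam f k‖ ^ p
      ≤ (3 ^ p * (1 + K) ^ p) * ‖f k‖ ^ p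
        + (3 ^ p * (1 + K) ^ (p - 1)) * Sf
        + (3 ^ p * (((1 + K) * (2 + 2 * K)) ^ p * (4 + 4 * K) ^ (p - 1))) * Sd2 := by
    have e2 : 3 ^ p * Y ^ p ≤ 3 ^ p * ((1 + K) ^ (p - 1) * Sf) :=
      mul_le_mul_of_nonneg_left hjY h3p
    have e3 : 3 ^ p * z1 ^ p
        ≤ 3 ^ p * (((1 + K) * (2 + 2 * K)) ^ p * ((4 + 4 * K) ^ (p - 1) * Sd2)) := by
      rw [hz1p]
      exact mul_le_mul_of_nonneg_left
        (mul_le_mul_of_nonneg_left hjSig (Real.rpow_nonneg hKKnn p)) h3p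
    calc ‖dd1 lam f k‖ ^ p ≤ (x1 + Y + z1) ^ p := step1
      _ ≤ 3 ^ p * (x1 ^ p + Y ^ p + z1 ^ p) := step2
      _ = 3 ^ p * x1 ^ p + 3 ^ p * Y ^ p + 3 ^ p * z1 ^ p := by ring
      _ ≤ (3 ^ p * (1 + K) ^ p) * ‖f k‖ ^ p
          + (3 ^ p * (1 + K) ^ (p - 1)) * Sf
          + (3 ^ p * (((1 + K) * (2 + 2 * K)) ^ p * (4 + 4 * K) ^ (p - 1))) * Sd2 := by
        refine add_le_add (add_le_add (le_of_eq (by rw [hx1p]; ring))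
          (e2.trans (le_of_eq (by ring)))) (e3.trans (le_of_eq (by ring)))
  calc ‖dd1 lam f k‖ ^ p
      ≤ (3 ^ p * (1 + K) ^ p) * ‖f k‖ ^ p
        + (3 ^ p * (1 + K) ^ (p - 1)) * Sf
        + (3 ^ p * (((1 + K) * (2 + 2 * K)) ^ p * (4 + 4 * K) ^ (p - 1))) * Sd2 := hfinal
    _ ≤ (24 * (1 + K) ^ 3) ^ p * ‖f k‖ ^ p
        + (24 * (1 + K) ^ 3) ^ p * Sf + (24 * (1 + K) ^ 3) ^ p * Sd2 := by
        refine add_le_add (add_le_add (mul_le_mul_of_nonneg_right hc1 hafk)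
          (mul_le_mul_of_nonneg_right hc2 hSfnn)) (mul_le_mul_of_nonneg_right hc3 hSd2nn)
    _ = (24 * (1 + K) ^ 3) ^ p * (‖f k‖ ^ p + Sf + Sd2) := by ring

end Core

section SumDefs
variable (p : ℝ) (lam : ℤ → ℝ) (f : ℤ → ℂ)

noncomputable def SA : ℝ≥0∞ :=
  ∑' n : ℤ, ENNReal.ofReal ((lam (n + 2) - lam n) * ‖dd2 lam f n‖ ^ p)

noncomputable def SB : ℝ≥0∞ :=
  ∑' n : ℤ, ENNReal.ofReal ((lam (n + 2) - lam n) * ‖f n‖ ^ p)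

noncomputable def SD : ℝ≥0∞ :=
  ∑' n : ℤ, ENNReal.ofReal ((lam (n + 2) - lam n) ^ (p + 1) * ‖dd1 lam f n‖ ^ p)

noncomputable def SBp : ℝ≥0∞ :=
  ∑' n : ℤ, ENNReal.ofReal ((lam (n + 1) - lam (n - 1)) * ‖f n‖ ^ p)

noncomputable def ST0 : ℝ≥0∞ :=
  ∑' n : ℤ, ENNReal.ofReal ((lam (n + 1) - lam n) * ‖dd1 lam f n‖ ^ p)

noncomputable def ST1 : ℝ≥0∞ :=
  ∑' n : ℤ, ENNReal.ofReal ((lam (n + 2) - lam (n + 1)) * ‖dd1 lam f n‖ ^ p)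

noncomputable def SS1 : ℝ≥0∞ :=
  ∑' n : ℤ, ENNReal.ofReal ((lam (n + 2) - lam (n + 1)) * ‖f n‖ ^ p)

end SumDefs

section Windows
variable {K p : ℝ} {lam : ℤ → ℝ} {f : ℤ → ℂ}

lemma next_exists (hm : StrictMono lam)
    (htop : Filter.Tendsto lam Filter.atTop Filter.atTop)
    (hgap : ∀ n : ℤ, lam (n + 1) - lam n ≤ K) (k : ℤ) :
    ∃ b : ℤ, k < b ∧ 1 ≤ lam b - lam k ∧ lam b - lam k < 1 + K := by
  have hinh : ∃ z : ℤ, lam k + 1 ≤ lam z := (htop.eventually_ge_atTop (lam k + 1)).exists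
  have hbdd : ∃ lo : ℤ, ∀ z : ℤ, lam k + 1 ≤ lam z → lo ≤ z :=
    ⟨k, fun z hz => le_of_lt (hm.lt_iff_lt.mp (by linarith))⟩
  obtain ⟨b, hb, hmin⟩ := Int.exists_least_of_bdd hbdd hinh
  refine ⟨b, hm.lt_iff_lt.mp (by linarith), by linarith, ?_⟩
  by_contra hcon
  push_neg at hcon
  have hgb := hgap (b - 1)
  rw [show b - 1 + 1 = b by ring] at hgb
  have hb1 : lam k + 1 ≤ lam (b - 1) := by linarith
  have := hmin (b - 1) hb1
  omega

lemma ofReal_mul_sum (c : ℝ) (hc : 0 ≤ c) (s : Finset ℤ) (g : ℤ → ℝ)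
    (hg : ∀ i ∈ s, 0 ≤ g i) :
    ENNReal.ofReal (c * ∑ i ∈ s, g i) = ENNReal.ofReal c * ∑ i ∈ s, ENNReal.ofReal (g i) := by
  rw [ENNReal.ofReal_mul hc, ENNReal.ofReal_sum_of_nonneg hg]

set_option maxHeartbeats 1000000 in
lemma L_T0 (hK : 0 < K) (hp : 1 ≤ p) (hm : StrictMono lam)
    (htop : Filter.Tendsto lam Filter.atTop Filter.atTop)
    (hgap : ∀ n : ℤ, lam (n + 1) - lam n ≤ K) :
    ST0 p lam f ≤ ENNReal.ofReal ((24 * (1 + K) ^ 3 * (3 + 6 * K)) ^ p)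
      * (SA p lam f + SBp p lam f) := by
  have hp0 : (0:ℝ) < p := by linarith
  have habs : ∀ z : ℂ, 0 ≤ ‖z‖ := fun z => norm_nonneg z
  have hrp : ∀ z : ℂ, 0 ≤ ‖z‖ ^ p := fun z => Real.rpow_nonneg (habs z) p
  have hwm : ∀ i : ℤ, 0 ≤ lam i - lam (i - 1) := fun i => by
    have := hm (show i - 1 < i by omega); linarith
  have hw2 : ∀ m : ℤ, 0 ≤ lam (m + 2) - lam m := fun m => (gap2_pos hm m).le
  set γ : ℝ := 24 * (1 + K) ^ 3 with hγ
  have hγ0 : 0 ≤ γ ^ p := Real.rpow_nonneg (by positivity) p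
  choose nb h1 h2 h3 using next_exists hm htop hgap
  set t1 : ℤ → ℝ≥0∞ :=
    fun i => ENNReal.ofReal ((lam i - lam (i - 1)) * ‖f i‖ ^ p) with ht1
  set t2 : ℤ → ℝ≥0∞ :=
    fun m => ENNReal.ofReal ((lam (m + 2) - lam m) * ‖dd2 lam f m‖ ^ p) with ht2
  have hpt : ∀ k : ℤ,
      ENNReal.ofReal ((lam (k + 1) - lam k) * ‖dd1 lam f k‖ ^ p)
        ≤ ENNReal.ofReal (γ ^ p)
            * ENNReal.ofReal ((lam (k + 1) - lam k) * ‖f k‖ ^ p)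
          + ENNReal.ofReal (γ ^ p) * (ENNReal.ofReal (lam (k + 1) - lam k)
              * ∑ i ∈ Finset.Ioc (nb k) (nb (nb k)), t1 i)
          + ENNReal.ofReal (γ ^ p) * (ENNReal.ofReal (lam (k + 1) - lam k)
              * ∑ m ∈ Finset.Ico k (nb (nb k) - 1), t2 m) := by
    intro k
    have hcore := core_dd1 (f := f) hK hp hm k (nb k) (nb (nb k)) (h1 k) (h2 k) (h3 k)
      (h1 (nb k)) (h2 (nb k)) (h3 (nb k))
    have hgk : 0 ≤ lam (k + 1) - lam k := (gap_pos hm k).le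
    have hs1nn : 0 ≤ ∑ i ∈ Finset.Ioc (nb k) (nb (nb k)),
        (lam i - lam (i - 1)) * ‖f i‖ ^ p :=
      Finset.sum_nonneg fun i _ => mul_nonneg (hwm i) (hrp _)
    have hs2nn : 0 ≤ ∑ m ∈ Finset.Ico k (nb (nb k) - 1),
        (lam (m + 2) - lam m) * ‖dd2 lam f m‖ ^ p :=
      Finset.sum_nonneg fun m _ => mul_nonneg (hw2 m) (hrp _)
    have hreal : (lam (k + 1) - lam k) * ‖dd1 lam f k‖ ^ p
        ≤ γ ^ p * ((lam (k + 1) - lam k) * ‖f k‖ ^ p)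
          + γ ^ p * ((lam (k + 1) - lam k) * ∑ i ∈ Finset.Ioc (nb k) (nb (nb k)),
              (lam i - lam (i - 1)) * ‖f i‖ ^ p)
          + γ ^ p * ((lam (k + 1) - lam k) * ∑ m ∈ Finset.Ico k (nb (nb k) - 1),
              (lam (m + 2) - lam m) * ‖dd2 lam f m‖ ^ p) := by
      refine le_trans (mul_le_mul_of_nonneg_left hcore hgk) (le_of_eq (by ring))
    refine le_trans (ENNReal.ofReal_le_ofReal hreal) ?_
    rw [ENNReal.ofReal_add (by positivity) (by positivity),
      ENNReal.ofReal_add (by positivity) (by positivity)]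
    refine add_le_add (add_le_add ?_ ?_) ?_
    · rw [ENNReal.ofReal_mul hγ0]
    · rw [ENNReal.ofReal_mul hγ0,
        ofReal_mul_sum _ hgk _ _ (fun i _ => mul_nonneg (hwm i) (hrp _))]
    · rw [ENNReal.ofReal_mul hγ0,
        ofReal_mul_sum _ hgk _ _ (fun m _ => mul_nonneg (hw2 m) (hrp _))]
  have hmain := ENNReal.tsum_le_tsum hpt
  rw [ENNReal.tsum_add, ENNReal.tsum_add, ENNReal.tsum_mul_left, ENNReal.tsum_mul_left,
    ENNReal.tsum_mul_left] at hmain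
  -- piece 1
  have hpiece1 : ∑' k : ℤ, ENNReal.ofReal ((lam (k + 1) - lam k) * ‖f k‖ ^ p)
      ≤ SBp p lam f := by
    refine ENNReal.tsum_le_tsum fun k => ENNReal.ofReal_le_ofReal ?_
    refine mul_le_mul_of_nonneg_right ?_ (hrp _)
    have := hm.monotone (show k - 1 ≤ k by omega)
    linarith
  -- piece 2 (Fubini)
  have hpiece2 : ∑' k : ℤ, ENNReal.ofReal (lam (k + 1) - lam k)
      * ∑ i ∈ Finset.Ioc (nb k) (nb (nb k)), t1 i
      ≤ ENNReal.ofReal (2 + 6 * K) * SBp p lam f := by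
    have hs : ∀ n : ℤ, ∀ i ∈ Finset.Ioc (nb n) (nb (nb n)),
        lam i - (2 + 4 * K) ≤ lam (n + 0) ∧ lam (n + 0 + 1) ≤ lam i + 2 * K := by
      intro n i hi
      obtain ⟨hbi, hib2⟩ := Finset.mem_Ioc.1 hi
      have e1 := h2 n; have e2 := h3 n; have e3 := h2 (nb n); have e4 := h3 (nb n)
      have e5 : lam i ≤ lam (nb (nb n)) := hm.monotone hib2
      have e6 : lam (nb n) < lam i := hm hbi
      have e7 := hgap n
      simp only [add_zero]
      constructor <;> linarith
    have hfub := fub hm 0 (2 + 4 * K) (2 * K) t1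
      (fun k => Finset.Ioc (nb k) (nb (nb k))) hs
    simp only [add_zero] at hfub
    refine le_trans hfub ?_
    rw [show (2:ℝ) + 4 * K + 2 * K = 2 + 6 * K by ring]
    refine mul_le_mul_right ?_ _
    refine ENNReal.tsum_le_tsum fun i => ENNReal.ofReal_le_ofReal ?_
    refine mul_le_mul_of_nonneg_right ?_ (hrp _)
    have := hm.monotone (show i ≤ i + 1 by omega)
    linarith
  -- piece 3 (Fubini)
  have hpiece3 : ∑' k : ℤ, ENNReal.ofReal (lam (k + 1) - lam k)
      * ∑ m ∈ Finset.Ico k (nb (nb k) - 1), t2 m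
      ≤ ENNReal.ofReal (2 + 6 * K) * SA p lam f := by
    have hs : ∀ n : ℤ, ∀ m ∈ Finset.Ico n (nb (nb n) - 1),
        lam m - (2 + 4 * K) ≤ lam (n + 0) ∧ lam (n + 0 + 1) ≤ lam m + 2 * K := by
      intro n m hi
      obtain ⟨hnm, hm2⟩ := Finset.mem_Ico.1 hi
      have e1 := h2 n; have e2 := h3 n; have e3 := h2 (nb n); have e4 := h3 (nb n)
      have e5 : lam m ≤ lam (nb (nb n)) := hm.monotone (by omega)
      have e6 : lam n ≤ lam m := hm.monotone hnm
      have e7 : lam (n + 1) ≤ lam (m + 1) := hm.monotone (by omega)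
      have e8 := hgap m
      simp only [add_zero]
      constructor <;> linarith
    have hfub := fub hm 0 (2 + 4 * K) (2 * K) t2
      (fun k => Finset.Ico k (nb (nb k) - 1)) hs
    simp only [add_zero] at hfub
    refine le_trans hfub ?_
    rw [show (2:ℝ) + 4 * K + 2 * K = 2 + 6 * K by ring]
    exact le_of_eq rfl
  -- combine
  have hcomb : ST0 p lam f ≤ ENNReal.ofReal (γ ^ p) * SBp p lam f
      + ENNReal.ofReal (γ ^ p) * (ENNReal.ofReal (2 + 6 * K) * SBp p lam f)
      + ENNReal.ofReal (γ ^ p) * (ENNReal.ofReal (2 + 6 * K) * SA p lam f) := by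
    refine le_trans hmain ?_
    exact add_le_add (add_le_add (mul_le_mul_right hpiece1 _)
      (mul_le_mul_right hpiece2 _)) (mul_le_mul_right hpiece3 _)
  have hlast : ENNReal.ofReal (γ ^ p) * SBp p lam f
      + ENNReal.ofReal (γ ^ p) * (ENNReal.ofReal (2 + 6 * K) * SBp p lam f)
      + ENNReal.ofReal (γ ^ p) * (ENNReal.ofReal (2 + 6 * K) * SA p lam f)
      ≤ ENNReal.ofReal (γ ^ p) * (ENNReal.ofReal (3 + 6 * K) * (SA p lam f + SBp p lam f)) := by
    rw [← mul_add, ← mul_add]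
    refine mul_le_mul_right ?_ _
    have hκ : ENNReal.ofReal (2 + 6 * K) ≤ ENNReal.ofReal (3 + 6 * K) :=
      ENNReal.ofReal_le_ofReal (by linarith)
    have h1' : (1 : ℝ≥0∞) ≤ ENNReal.ofReal (3 + 6 * K) := by
      rw [← ENNReal.ofReal_one]
      exact ENNReal.ofReal_le_ofReal (by linarith)
    calc SBp p lam f + ENNReal.ofReal (2 + 6 * K) * SBp p lam f
          + ENNReal.ofReal (2 + 6 * K) * SA p lam f
        = (1 + ENNReal.ofReal (2 + 6 * K)) * SBp p lam f
          + ENNReal.ofReal (2 + 6 * K) * SA p lam f := by ring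
      _ ≤ ENNReal.ofReal (3 + 6 * K) * SBp p lam f
          + ENNReal.ofReal (3 + 6 * K) * SA p lam f := by
          refine add_le_add (mul_le_mul_left ?_ _) (mul_le_mul_left hκ _)
          rw [← ENNReal.ofReal_one, ← ENNReal.ofReal_add (by norm_num) (by linarith)]
          exact ENNReal.ofReal_le_ofReal (by linarith)
      _ = ENNReal.ofReal (3 + 6 * K) * (SA p lam f + SBp p lam f) := by ring
  refine le_trans (le_trans hcomb hlast) ?_
  have hx : (3 + 6 * K : ℝ) ≤ (3 + 6 * K) ^ p := by
    nth_rewrite 1 [← Real.rpow_one (3 + 6 * K)]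
    exact Real.rpow_le_rpow_of_exponent_le (by linarith) hp
  calc ENNReal.ofReal (γ ^ p) * (ENNReal.ofReal (3 + 6 * K) * (SA p lam f + SBp p lam f))
      ≤ ENNReal.ofReal (γ ^ p)
        * (ENNReal.ofReal ((3 + 6 * K) ^ p) * (SA p lam f + SBp p lam f)) :=
        mul_le_mul_right (mul_le_mul_left (ENNReal.ofReal_le_ofReal hx) _) _
    _ = ENNReal.ofReal ((24 * (1 + K) ^ 3 * (3 + 6 * K)) ^ p) * (SA p lam f + SBp p lam f) := by
        rw [← mul_assoc, ← ENNReal.ofReal_mul hγ0,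
          ← Real.mul_rpow (by positivity) (by linarith)]

set_option maxHeartbeats 1000000 in
lemma L_S1 (hK : 0 < K) (hp : 1 ≤ p) (hm : StrictMono lam)
    (htop : Filter.Tendsto lam Filter.atTop Filter.atTop)
    (hgap : ∀ n : ℤ, lam (n + 1) - lam n ≤ K) :
    SS1 p lam f ≤ ENNReal.ofReal ((2 * (1 + K) ^ 2 * (2 + 6 * K)) ^ p)
      * (SBp p lam f + ST0 p lam f) := by
  have hp0 : (0:ℝ) < p := by linarith
  have habs : ∀ z : ℂ, 0 ≤ ‖z‖ := fun z => norm_nonneg z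
  have hrp : ∀ z : ℂ, 0 ≤ ‖z‖ ^ p := fun z => Real.rpow_nonneg (habs z) p
  have hwm : ∀ i : ℤ, 0 ≤ lam i - lam (i - 1) := fun i => by
    have := hm (show i - 1 < i by omega); linarith
  set γ : ℝ := 2 * (1 + K) ^ 2 with hγ
  have hγ0 : 0 ≤ γ ^ p := Real.rpow_nonneg (by positivity) p
  choose nb h1 h2 h3 using next_exists hm htop hgap
  set t1 : ℤ → ℝ≥0∞ :=
    fun i => ENNReal.ofReal ((lam i - lam (i - 1)) * ‖f i‖ ^ p) with ht1
  set t3 : ℤ → ℝ≥0∞ :=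
    fun j => ENNReal.ofReal ((lam (j + 1) - lam j) * ‖dd1 lam f j‖ ^ p) with ht3
  have hpt : ∀ n : ℤ,
      ENNReal.ofReal ((lam (n + 2) - lam (n + 1)) * ‖f n‖ ^ p)
        ≤ ENNReal.ofReal (γ ^ p) * (ENNReal.ofReal (lam (n + 2) - lam (n + 1))
              * ∑ i ∈ Finset.Ioc n (nb n), t1 i)
          + ENNReal.ofReal (γ ^ p) * (ENNReal.ofReal (lam (n + 2) - lam (n + 1))
              * ∑ j ∈ Finset.Ico n (nb n), t3 j) := by
    intro n
    have hcore := core_f (f := f) hK hp hm n (nb n) (h1 n) (h2 n) (h3 n)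
    have hg : 0 ≤ lam (n + 2) - lam (n + 1) := by
      have := hm (show n + 1 < n + 2 by omega); linarith
    have hreal : (lam (n + 2) - lam (n + 1)) * ‖f n‖ ^ p
        ≤ γ ^ p * ((lam (n + 2) - lam (n + 1)) * ∑ i ∈ Finset.Ioc n (nb n),
              (lam i - lam (i - 1)) * ‖f i‖ ^ p)
          + γ ^ p * ((lam (n + 2) - lam (n + 1)) * ∑ j ∈ Finset.Ico n (nb n),
              (lam (j + 1) - lam j) * ‖dd1 lam f j‖ ^ p) := by
      refine le_trans (mul_le_mul_of_nonneg_left hcore hg) (le_of_eq (by ring))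
    refine le_trans (ENNReal.ofReal_le_ofReal hreal) ?_
    have hs1nn : 0 ≤ ∑ i ∈ Finset.Ioc n (nb n),
        (lam i - lam (i - 1)) * ‖f i‖ ^ p :=
      Finset.sum_nonneg fun i _ => mul_nonneg (hwm i) (hrp _)
    have hs2nn : 0 ≤ ∑ j ∈ Finset.Ico n (nb n),
        (lam (j + 1) - lam j) * ‖dd1 lam f j‖ ^ p :=
      Finset.sum_nonneg fun j _ => mul_nonneg (gap_pos hm j).le (hrp _)
    rw [ENNReal.ofReal_add (by positivity) (by positivity)]
    refine add_le_add ?_ ?_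
    · rw [ENNReal.ofReal_mul hγ0,
        ofReal_mul_sum _ hg _ _ (fun i _ => mul_nonneg (hwm i) (hrp _))]
    · rw [ENNReal.ofReal_mul hγ0,
        ofReal_mul_sum _ hg _ _ (fun j _ => mul_nonneg (gap_pos hm j).le (hrp _))]
  have hmain := ENNReal.tsum_le_tsum hpt
  rw [ENNReal.tsum_add, ENNReal.tsum_mul_left, ENNReal.tsum_mul_left] at hmain
  have hidx : ∀ n : ℤ, n + 1 + 1 = n + 2 := fun n => by ring
  -- piece 1 (Fubini, s₀ = 1)
  have hpiece1 : ∑' n : ℤ, ENNReal.ofReal (lam (n + 2) - lam (n + 1))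
      * ∑ i ∈ Finset.Ioc n (nb n), t1 i
      ≤ ENNReal.ofReal (2 + 6 * K) * SBp p lam f := by
    have hs : ∀ n : ℤ, ∀ i ∈ Finset.Ioc n (nb n),
        lam i - (2 + 4 * K) ≤ lam (n + 1) ∧ lam (n + 1 + 1) ≤ lam i + 2 * K := by
      intro n i hi
      obtain ⟨hni, hib⟩ := Finset.mem_Ioc.1 hi
      have e1 := h2 n; have e2 := h3 n
      have e5 : lam i ≤ lam (nb n) := hm.monotone hib
      have e6 : lam n < lam i := hm hni
      have e7 := hgap n
      have e8 := hgap (n + 1)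
      have e9 : lam n ≤ lam (n + 1) := (hm (show n < n + 1 by omega)).le
      rw [hidx n]
      have e10 : lam (n + 2) ≤ lam (n + 1) + K := by
        have := hgap (n + 1); rw [hidx n] at this; linarith
      constructor <;> linarith
    have hfub := fub hm 1 (2 + 4 * K) (2 * K) t1 (fun n => Finset.Ioc n (nb n)) hs
    simp only [hidx] at hfub
    refine le_trans hfub ?_
    rw [show (2:ℝ) + 4 * K + 2 * K = 2 + 6 * K by ring]
    refine mul_le_mul_right ?_ _
    refine ENNReal.tsum_le_tsum fun i => ENNReal.ofReal_le_ofReal ?_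
    refine mul_le_mul_of_nonneg_right ?_ (hrp _)
    have := hm.monotone (show i ≤ i + 1 by omega)
    linarith
  -- piece 2 (Fubini, s₀ = 1)
  have hpiece2 : ∑' n : ℤ, ENNReal.ofReal (lam (n + 2) - lam (n + 1))
      * ∑ j ∈ Finset.Ico n (nb n), t3 j
      ≤ ENNReal.ofReal (2 + 6 * K) * ST0 p lam f := by
    have hs : ∀ n : ℤ, ∀ j ∈ Finset.Ico n (nb n),
        lam j - (2 + 4 * K) ≤ lam (n + 1) ∧ lam (n + 1 + 1) ≤ lam j + 2 * K := by
      intro n j hj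
      obtain ⟨hnj, hjb⟩ := Finset.mem_Ico.1 hj
      have e1 := h2 n; have e2 := h3 n
      have e5 : lam j ≤ lam (nb n) := hm.monotone (by omega)
      have e6 : lam n ≤ lam j := hm.monotone hnj
      have e7 := hgap n
      have e9 : lam n ≤ lam (n + 1) := (hm (show n < n + 1 by omega)).le
      rw [hidx n]
      have e10 : lam (n + 2) ≤ lam (n + 1) + K := by
        have := hgap (n + 1); rw [hidx n] at this; linarith
      constructor <;> linarith
    have hfub := fub hm 1 (2 + 4 * K) (2 * K) t3 (fun n => Finset.Ico n (nb n)) hs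
    simp only [hidx] at hfub
    refine le_trans hfub ?_
    rw [show (2:ℝ) + 4 * K + 2 * K = 2 + 6 * K by ring]
    exact le_of_eq rfl
  have hcomb := le_trans hmain
    (add_le_add (mul_le_mul_right hpiece1 _) (mul_le_mul_right hpiece2 _))
  have hx : (2 + 6 * K : ℝ) ≤ (2 + 6 * K) ^ p := by
    nth_rewrite 1 [← Real.rpow_one (2 + 6 * K)]
    exact Real.rpow_le_rpow_of_exponent_le (by linarith) hp
  refine le_trans hcomb ?_
  calc ENNReal.ofReal (γ ^ p) * (ENNReal.ofReal (2 + 6 * K) * SBp p lam f)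
        + ENNReal.ofReal (γ ^ p) * (ENNReal.ofReal (2 + 6 * K) * ST0 p lam f)
      = ENNReal.ofReal (γ ^ p) * (ENNReal.ofReal (2 + 6 * K)
          * (SBp p lam f + ST0 p lam f)) := by ring
    _ ≤ ENNReal.ofReal (γ ^ p) * (ENNReal.ofReal ((2 + 6 * K) ^ p)
          * (SBp p lam f + ST0 p lam f)) :=
        mul_le_mul_right (mul_le_mul_left (ENNReal.ofReal_le_ofReal hx) _) _
    _ = ENNReal.ofReal ((2 * (1 + K) ^ 2 * (2 + 6 * K)) ^ p)
          * (SBp p lam f + ST0 p lam f) := by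
        rw [← mul_assoc, ← ENNReal.ofReal_mul hγ0,
          ← Real.mul_rpow (by positivity) (by linarith)]

set_option maxHeartbeats 1000000 in
lemma L_T1 (hK : 0 < K) (hp : 1 ≤ p) (hm : StrictMono lam)
    (hgap : ∀ n : ℤ, lam (n + 1) - lam n ≤ K) :
    ST1 p lam f ≤ ENNReal.ofReal (2 ^ p) * ST0 p lam f
      + ENNReal.ofReal ((4 * K) ^ p) * SA p lam f := by
  have hp0 : (0:ℝ) < p := by linarith
  have habs : ∀ z : ℂ, 0 ≤ ‖z‖ := fun z => norm_nonneg z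
  have hrp : ∀ z : ℂ, 0 ≤ ‖z‖ ^ p := fun z => Real.rpow_nonneg (habs z) p
  have hidx : ∀ n : ℤ, n + 1 + 1 = n + 2 := fun n => by ring
  have h2p : (0:ℝ) ≤ 2 ^ p := Real.rpow_nonneg (by norm_num) p
  have h4Kp : (0:ℝ) ≤ (4 * K) ^ p := Real.rpow_nonneg (by linarith) p
  have hpt : ∀ n : ℤ,
      ENNReal.ofReal ((lam (n + 2) - lam (n + 1)) * ‖dd1 lam f n‖ ^ p)
        ≤ ENNReal.ofReal (2 ^ p)
            * ENNReal.ofReal ((lam (n + 2) - lam (n + 1)) * ‖dd1 lam f (n + 1)‖ ^ p)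
          + ENNReal.ofReal ((4 * K) ^ p)
            * ENNReal.ofReal ((lam (n + 2) - lam n) * ‖dd2 lam f n‖ ^ p) := by
    intro n
    have hg1 : 0 < lam (n + 2) - lam (n + 1) := by
      have := hm (show n + 1 < n + 2 by omega); linarith
    have hw : 0 < lam (n + 2) - lam n := gap2_pos hm n
    have hwK : lam (n + 2) - lam n ≤ 2 * K := by
      have e1 := hgap n
      have e2 := hgap (n + 1)
      rw [hidx n] at e2
      linarith
    have htri : ‖dd1 lam f n‖ ≤ ‖dd1 lam f (n + 1)‖
        + (lam (n + 2) - lam n) * ‖dd2 lam f n‖ := by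
      have hI := I2 (f := f) hm n
      have : dd1 lam f n = dd1 lam f (n + 1)
          - ((lam (n + 2) - lam n : ℝ) : ℂ) * dd2 lam f n := by
        rw [← hI]; ring
      rw [this, sub_eq_add_neg]
      refine le_trans (norm_add_le _ _) ?_
      rw [norm_neg, norm_mul, Complex.norm_real, Real.norm_of_nonneg hw.le]
    have hstep : ‖dd1 lam f n‖ ^ p
        ≤ 2 ^ p * ‖dd1 lam f (n + 1)‖ ^ p
          + 2 ^ p * (((lam (n + 2) - lam n) * ‖dd2 lam f n‖) ^ p) := by
      refine le_trans (Real.rpow_le_rpow (habs _) htri hp0.le) ?_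
      have := add2_rpow (x := ‖dd1 lam f (n + 1)‖)
        (y := (lam (n + 2) - lam n) * ‖dd2 lam f n‖) hp (habs _)
        (mul_nonneg hw.le (habs _))
      linarith
    have hwp : ((lam (n + 2) - lam n) * ‖dd2 lam f n‖) ^ p
        = (lam (n + 2) - lam n) ^ p * ‖dd2 lam f n‖ ^ p :=
      Real.mul_rpow hw.le (habs _)
    have hcoef : (lam (n + 2) - lam (n + 1)) * (2 ^ p * (lam (n + 2) - lam n) ^ p)
        ≤ (4 * K) ^ p * (lam (n + 2) - lam n) := by
      have e1 : (lam (n + 2) - lam n) ^ p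
          = (lam (n + 2) - lam n) ^ (p - 1) * (lam (n + 2) - lam n) := by
        rw [← Real.rpow_add_one hw.ne' (p - 1)]
        norm_num
      have e2 : (lam (n + 2) - lam n) ^ (p - 1) ≤ (2 * K) ^ (p - 1) :=
        Real.rpow_le_rpow hw.le hwK (by linarith)
      have e3 : (lam (n + 2) - lam (n + 1)) ≤ 2 * K := by
        have := hgap (n + 1); rw [hidx n] at this; linarith
      have e4 : (0:ℝ) ≤ (2 * K) ^ (p - 1) := Real.rpow_nonneg (by linarith) _
      have e5 : 2 ^ p * (2 * K) ^ (p - 1) * (2 * K) = (4 * K) ^ p := by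
        have h1 : (2 * K) ^ (p - 1) * (2 * K) = (2 * K) ^ p := by
          rw [← Real.rpow_add_one (ne_of_gt (by linarith : (0:ℝ) < 2 * K)) (p - 1)]
          norm_num
        calc 2 ^ p * (2 * K) ^ (p - 1) * (2 * K)
            = 2 ^ p * ((2 * K) ^ (p - 1) * (2 * K)) := by ring
          _ = 2 ^ p * (2 * K) ^ p := by rw [h1]
          _ = (4 * K) ^ p := by
              rw [← Real.mul_rpow (by norm_num) (by linarith)]
              congr 1
              ring
      calc (lam (n + 2) - lam (n + 1)) * (2 ^ p * (lam (n + 2) - lam n) ^ p)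
          = 2 ^ p * (lam (n + 2) - lam n) ^ (p - 1)
            * ((lam (n + 2) - lam (n + 1)) * (lam (n + 2) - lam n)) := by
            rw [e1]; ring
        _ ≤ 2 ^ p * (2 * K) ^ (p - 1) * ((2 * K) * (lam (n + 2) - lam n)) := by
            refine mul_le_mul (by nlinarith [mul_le_mul_of_nonneg_left e2 h2p]) ?_
              (by nlinarith [hw.le]) (by positivity)
            exact mul_le_mul_of_nonneg_right e3 hw.le
        _ = (4 * K) ^ p * (lam (n + 2) - lam n) := by rw [← e5]; ring
    have hreal : (lam (n + 2) - lam (n + 1)) * ‖dd1 lam f n‖ ^ p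
        ≤ 2 ^ p * ((lam (n + 2) - lam (n + 1)) * ‖dd1 lam f (n + 1)‖ ^ p)
          + (4 * K) ^ p * ((lam (n + 2) - lam n) * ‖dd2 lam f n‖ ^ p) := by
      have h5 := mul_le_mul_of_nonneg_left hstep hg1.le
      have h6 : (lam (n + 2) - lam (n + 1))
            * (2 ^ p * (((lam (n + 2) - lam n) * ‖dd2 lam f n‖) ^ p))
          ≤ (4 * K) ^ p * ((lam (n + 2) - lam n) * ‖dd2 lam f n‖ ^ p) := by
        rw [hwp]
        calc (lam (n + 2) - lam (n + 1))
              * (2 ^ p * ((lam (n + 2) - lam n) ^ p * ‖dd2 lam f n‖ ^ p))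
            = ((lam (n + 2) - lam (n + 1)) * (2 ^ p * (lam (n + 2) - lam n) ^ p))
              * ‖dd2 lam f n‖ ^ p := by ring
          _ ≤ ((4 * K) ^ p * (lam (n + 2) - lam n)) * ‖dd2 lam f n‖ ^ p :=
              mul_le_mul_of_nonneg_right hcoef (hrp _)
          _ = (4 * K) ^ p * ((lam (n + 2) - lam n) * ‖dd2 lam f n‖ ^ p) := by
              ring
      nlinarith [h5, h6]
    refine le_trans (ENNReal.ofReal_le_ofReal hreal) ?_
    rw [ENNReal.ofReal_add (by positivity) (by positivity),
      ENNReal.ofReal_mul h2p, ENNReal.ofReal_mul h4Kp]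
  have hmain := ENNReal.tsum_le_tsum hpt
  rw [ENNReal.tsum_add, ENNReal.tsum_mul_left, ENNReal.tsum_mul_left] at hmain
  refine le_trans hmain ?_
  refine add_le_add (mul_le_mul_right (le_of_eq ?_) _) (le_of_eq rfl)
  have e : ∀ n : ℤ, ENNReal.ofReal ((lam (n + 2) - lam (n + 1))
        * ‖dd1 lam f (n + 1)‖ ^ p)
      = (fun m => ENNReal.ofReal ((lam (m + 1) - lam m) * ‖dd1 lam f m‖ ^ p))
        (n + 1) := by
    intro n
    simp only
    rw [hidx n]
  rw [tsum_congr e]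
  exact (Equiv.addRight (1 : ℤ)).tsum_eq
    (fun m => ENNReal.ofReal ((lam (m + 1) - lam m) * ‖dd1 lam f m‖ ^ p))

set_option maxHeartbeats 1000000 in
lemma L_D (hK : 0 < K) (hp : 1 ≤ p) (hm : StrictMono lam)
    (hgap : ∀ n : ℤ, lam (n + 1) - lam n ≤ K) :
    SD p lam f ≤ ENNReal.ofReal ((2 * K) ^ p) * (ST0 p lam f + ST1 p lam f) := by
  have hp0 : (0:ℝ) < p := by linarith
  have habs : ∀ z : ℂ, 0 ≤ ‖z‖ := fun z => norm_nonneg z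
  have hrp : ∀ z : ℂ, 0 ≤ ‖z‖ ^ p := fun z => Real.rpow_nonneg (habs z) p
  have hidx : ∀ n : ℤ, n + 1 + 1 = n + 2 := fun n => by ring
  have h2Kp : (0:ℝ) ≤ (2 * K) ^ p := Real.rpow_nonneg (by linarith) p
  have hpt : ∀ n : ℤ,
      ENNReal.ofReal ((lam (n + 2) - lam n) ^ (p + 1) * ‖dd1 lam f n‖ ^ p)
        ≤ ENNReal.ofReal ((2 * K) ^ p)
            * (ENNReal.ofReal ((lam (n + 1) - lam n) * ‖dd1 lam f n‖ ^ p)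
              + ENNReal.ofReal ((lam (n + 2) - lam (n + 1)) * ‖dd1 lam f n‖ ^ p)) := by
    intro n
    have hw : 0 < lam (n + 2) - lam n := gap2_pos hm n
    have hwK : lam (n + 2) - lam n ≤ 2 * K := by
      have e1 := hgap n
      have e2 := hgap (n + 1)
      rw [hidx n] at e2
      linarith
    have hreal : (lam (n + 2) - lam n) ^ (p + 1) * ‖dd1 lam f n‖ ^ p
        ≤ (2 * K) ^ p * ((lam (n + 1) - lam n) * ‖dd1 lam f n‖ ^ p
          + (lam (n + 2) - lam (n + 1)) * ‖dd1 lam f n‖ ^ p) := by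
      have e1 : (lam (n + 2) - lam n) ^ (p + 1)
          = (lam (n + 2) - lam n) ^ p * (lam (n + 2) - lam n) :=
        Real.rpow_add_one hw.ne' p
      have e2 : (lam (n + 2) - lam n) ^ p ≤ (2 * K) ^ p :=
        Real.rpow_le_rpow hw.le hwK hp0.le
      have e3 : (lam (n + 2) - lam n) = (lam (n + 1) - lam n) + (lam (n + 2) - lam (n + 1)) := by
        ring
      calc (lam (n + 2) - lam n) ^ (p + 1) * ‖dd1 lam f n‖ ^ p
          = (lam (n + 2) - lam n) ^ p
            * ((lam (n + 2) - lam n) * ‖dd1 lam f n‖ ^ p) := by rw [e1]; ring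
        _ ≤ (2 * K) ^ p * ((lam (n + 2) - lam n) * ‖dd1 lam f n‖ ^ p) :=
            mul_le_mul_of_nonneg_right e2 (mul_nonneg hw.le (hrp _))
        _ = (2 * K) ^ p * ((lam (n + 1) - lam n) * ‖dd1 lam f n‖ ^ p
            + (lam (n + 2) - lam (n + 1)) * ‖dd1 lam f n‖ ^ p) := by
            rw [e3]; ring
    refine le_trans (ENNReal.ofReal_le_ofReal hreal) ?_
    rw [ENNReal.ofReal_mul h2Kp, ENNReal.ofReal_add
      (mul_nonneg (gap_pos hm n).le (hrp _))
      (mul_nonneg (by have := hm (show n + 1 < n + 2 by omega); linarith) (hrp _))]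
  have hmain := ENNReal.tsum_le_tsum hpt
  rw [ENNReal.tsum_mul_left, ENNReal.tsum_add] at hmain
  exact hmain

lemma L_B (hp : 1 ≤ p) (hm : StrictMono lam) :
    SB p lam f ≤ SBp p lam f + SS1 p lam f := by
  have hp0 : (0:ℝ) < p := by linarith
  have habs : ∀ z : ℂ, 0 ≤ ‖z‖ := fun z => norm_nonneg z
  have hrp : ∀ z : ℂ, 0 ≤ ‖z‖ ^ p := fun z => Real.rpow_nonneg (habs z) p
  have hpt : ∀ n : ℤ,
      ENNReal.ofReal ((lam (n + 2) - lam n) * ‖f n‖ ^ p)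
        ≤ ENNReal.ofReal ((lam (n + 1) - lam (n - 1)) * ‖f n‖ ^ p)
          + ENNReal.ofReal ((lam (n + 2) - lam (n + 1)) * ‖f n‖ ^ p) := by
    intro n
    have e1 : (lam (n + 2) - lam n) * ‖f n‖ ^ p
        = (lam (n + 1) - lam n) * ‖f n‖ ^ p
          + (lam (n + 2) - lam (n + 1)) * ‖f n‖ ^ p := by ring
    rw [e1, ENNReal.ofReal_add (mul_nonneg (gap_pos hm n).le (hrp _))
      (mul_nonneg (by have := hm (show n + 1 < n + 2 by omega); linarith) (hrp _))]
    refine add_le_add (ENNReal.ofReal_le_ofReal ?_) (le_refl _)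
    refine mul_le_mul_of_nonneg_right ?_ (hrp _)
    have := hm.monotone (show n - 1 ≤ n by omega)
    linarith
  refine le_trans (ENNReal.tsum_le_tsum hpt) (le_of_eq ENNReal.tsum_add)

set_option maxHeartbeats 1000000 in
lemma L_easy (hK : 0 < K) (hp : 1 ≤ p) (hm : StrictMono lam) :
    SBp p lam f ≤ SB p lam f + ENNReal.ofReal (2 ^ p) * (SB p lam f + SD p lam f) := by
  have hp0 : (0:ℝ) < p := by linarith
  have habs : ∀ z : ℂ, 0 ≤ ‖z‖ := fun z => norm_nonneg z
  have hrp : ∀ z : ℂ, 0 ≤ ‖z‖ ^ p := fun z => Real.rpow_nonneg (habs z) p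
  have h2p : (0:ℝ) ≤ 2 ^ p := Real.rpow_nonneg (by norm_num) p
  have hpt : ∀ n : ℤ,
      ENNReal.ofReal ((lam (n + 1) - lam (n - 1)) * ‖f n‖ ^ p)
        ≤ ENNReal.ofReal ((lam (n + 2) - lam n) * ‖f n‖ ^ p)
          + ENNReal.ofReal (2 ^ p)
            * (ENNReal.ofReal ((lam (n + 1) - lam (n - 1)) * ‖f (n - 1)‖ ^ p)
              + ENNReal.ofReal ((lam (n + 1) - lam (n - 1)) ^ (p + 1)
                  * ‖dd1 lam f (n - 1)‖ ^ p)) := by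
    intro n
    have ha : 0 < lam n - lam (n - 1) := by
      have := hm (show n - 1 < n by omega); linarith
    have hg0 : 0 < lam (n + 1) - lam n := gap_pos hm n
    have hwb : 0 < lam (n + 1) - lam (n - 1) := by linarith
    have htri : ‖f n‖ ≤ ‖f (n - 1)‖
        + (lam n - lam (n - 1)) * ‖dd1 lam f (n - 1)‖ := by
      have hI := I1 (f := f) hm (n - 1)
      rw [show n - 1 + 1 = n by ring] at hI
      have : f n = f (n - 1) + ((lam n - lam (n - 1) : ℝ) : ℂ) * dd1 lam f (n - 1) := by
        rw [← hI]; ring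
      rw [this]
      refine le_trans (norm_add_le _ _) ?_
      rw [norm_mul, Complex.norm_real, Real.norm_of_nonneg ha.le]
    have hstep : ‖f n‖ ^ p
        ≤ 2 ^ p * ‖f (n - 1)‖ ^ p
          + 2 ^ p * (((lam n - lam (n - 1)) * ‖dd1 lam f (n - 1)‖) ^ p) := by
      refine le_trans (Real.rpow_le_rpow (habs _) htri hp0.le) ?_
      have := add2_rpow (x := ‖f (n - 1)‖)
        (y := (lam n - lam (n - 1)) * ‖dd1 lam f (n - 1)‖) hp (habs _)
        (mul_nonneg ha.le (habs _))
      linarith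
    have hreal : (lam (n + 1) - lam (n - 1)) * ‖f n‖ ^ p
        ≤ (lam (n + 2) - lam n) * ‖f n‖ ^ p
          + 2 ^ p * ((lam (n + 1) - lam (n - 1)) * ‖f (n - 1)‖ ^ p
            + (lam (n + 1) - lam (n - 1)) ^ (p + 1) * ‖dd1 lam f (n - 1)‖ ^ p) := by
      have hsplit : (lam (n + 1) - lam (n - 1)) * ‖f n‖ ^ p
          = (lam n - lam (n - 1)) * ‖f n‖ ^ p
            + (lam (n + 1) - lam n) * ‖f n‖ ^ p := by ring
      have hb1 : (lam (n + 1) - lam n) * ‖f n‖ ^ p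
          ≤ (lam (n + 2) - lam n) * ‖f n‖ ^ p := by
        refine mul_le_mul_of_nonneg_right ?_ (hrp _)
        have := hm.monotone (show n + 1 ≤ n + 2 by omega)
        linarith
      have hb2 : (lam n - lam (n - 1)) * ‖f n‖ ^ p
          ≤ 2 ^ p * ((lam (n + 1) - lam (n - 1)) * ‖f (n - 1)‖ ^ p
            + (lam (n + 1) - lam (n - 1)) ^ (p + 1) * ‖dd1 lam f (n - 1)‖ ^ p) := by
        have hmul := mul_le_mul_of_nonneg_left hstep ha.le
        have hb3 : (lam n - lam (n - 1)) * (2 ^ p * ‖f (n - 1)‖ ^ p)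
            ≤ 2 ^ p * ((lam (n + 1) - lam (n - 1)) * ‖f (n - 1)‖ ^ p) := by
          have : (lam n - lam (n - 1)) ≤ (lam (n + 1) - lam (n - 1)) := by linarith
          nlinarith [hrp (f (n - 1)), h2p, mul_le_mul_of_nonneg_right this (hrp (f (n - 1)))]
        have hb4 : (lam n - lam (n - 1))
              * (2 ^ p * (((lam n - lam (n - 1)) * ‖dd1 lam f (n - 1)‖) ^ p))
            ≤ 2 ^ p * ((lam (n + 1) - lam (n - 1)) ^ (p + 1)
              * ‖dd1 lam f (n - 1)‖ ^ p) := by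
          rw [Real.mul_rpow ha.le (habs _)]
          have e1 : (lam n - lam (n - 1)) * (lam n - lam (n - 1)) ^ p
              = (lam n - lam (n - 1)) ^ (p + 1) := by
            rw [Real.rpow_add_one ha.ne' p]; ring
          have e2 : (lam n - lam (n - 1)) ^ (p + 1) ≤ (lam (n + 1) - lam (n - 1)) ^ (p + 1) :=
            Real.rpow_le_rpow ha.le (by linarith) (by linarith)
          calc (lam n - lam (n - 1)) * (2 ^ p * ((lam n - lam (n - 1)) ^ p
                * ‖dd1 lam f (n - 1)‖ ^ p))
              = 2 ^ p * ((lam n - lam (n - 1)) ^ (p + 1)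
                * ‖dd1 lam f (n - 1)‖ ^ p) := by rw [← e1]; ring
            _ ≤ 2 ^ p * ((lam (n + 1) - lam (n - 1)) ^ (p + 1)
                * ‖dd1 lam f (n - 1)‖ ^ p) := by
                refine mul_le_mul_of_nonneg_left (mul_le_mul_of_nonneg_right e2 (hrp _)) h2p
        nlinarith [hmul, hb3, hb4]
      rw [hsplit]
      linarith
    refine le_trans (ENNReal.ofReal_le_ofReal hreal) ?_
    rw [ENNReal.ofReal_add (mul_nonneg (gap2_pos hm n).le (hrp _)) (by positivity),
      ENNReal.ofReal_mul h2p, ENNReal.ofReal_add (mul_nonneg hwb.le (hrp _)) (by positivity)]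
  have hmain := ENNReal.tsum_le_tsum hpt
  rw [ENNReal.tsum_add, ENNReal.tsum_mul_left, ENNReal.tsum_add] at hmain
  refine le_trans hmain ?_
  refine add_le_add (le_refl _) (mul_le_mul_right (add_le_add (le_of_eq ?_) (le_of_eq ?_)) _)
  · have e : ∀ n : ℤ, ENNReal.ofReal ((lam (n + 1) - lam (n - 1))
          * ‖f (n - 1)‖ ^ p)
        = (fun m => ENNReal.ofReal ((lam (m + 2) - lam m) * ‖f m‖ ^ p))
          (n + -1) := by
      intro n
      simp only
      rw [show n + -1 + 2 = n + 1 by ring, show n + -1 = n - 1 by ring]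
    rw [tsum_congr e]
    exact (Equiv.addRight (-1 : ℤ)).tsum_eq
      (fun m => ENNReal.ofReal ((lam (m + 2) - lam m) * ‖f m‖ ^ p))
  · have e : ∀ n : ℤ, ENNReal.ofReal ((lam (n + 1) - lam (n - 1)) ^ (p + 1)
          * ‖dd1 lam f (n - 1)‖ ^ p)
        = (fun m => ENNReal.ofReal ((lam (m + 2) - lam m) ^ (p + 1)
            * ‖dd1 lam f m‖ ^ p)) (n + -1) := by
      intro n
      simp only
      rw [show n + -1 + 2 = n + 1 by ring, show n + -1 = n - 1 by ring]
    rw [tsum_congr e]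
    exact (Equiv.addRight (-1 : ℤ)).tsum_eq
      (fun m => ENNReal.ofReal ((lam (m + 2) - lam m) ^ (p + 1)
        * ‖dd1 lam f m‖ ^ p))

end Windows

end Stmt16Aux

open Stmt16Aux

/-- for every `K > 0` there are constants `0 < c ≤ C` depending only on `K`
such that (for `r = 2`, steps bounded by `K`) the norms `(‖f‖_{eq,W}^p)^{1/p}` and
`(‖f‖_{simp,W}^p)^{1/p}` are equivalent, where
`‖f‖_{eq,W}^p = ∑ (λ_{n+2}-λ_n)|f[λ_n,λ_{n+1},λ_{n+2}]|^p + ∑ (λ_{n+2}-λ_n)|f_n|^p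
  + ∑ (λ_{n+2}-λ_n)^{p+1}|f[λ_n,λ_{n+1}]|^p` and
`‖f‖_{simp,W}^p = ∑ (λ_{n+2}-λ_n)|f[λ_n,λ_{n+1},λ_{n+2}]|^p + ∑ (λ_{n+1}-λ_{n-1})|f_n|^p`. -/
theorem stmt16 (K : ℝ) (hK : 0 < K) :
    ∃ c C : ℝ, 0 < c ∧ c ≤ C ∧
      ∀ p : ℝ, 1 ≤ p → ∀ lam : ℤ → ℝ, GoodSeq lam →
        (∀ n : ℤ, lam (n + 1) - lam n ≤ K) → ∀ f : ℤ → ℂ,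
        ENNReal.ofReal c *
            ((∑' n : ℤ, ENNReal.ofReal ((lam (n + 2) - lam n) *
                ‖dd2 lam f n‖ ^ p)) +
              (∑' n : ℤ, ENNReal.ofReal ((lam (n + 2) - lam n) *
                ‖f n‖ ^ p)) +
              ∑' n : ℤ, ENNReal.ofReal ((lam (n + 2) - lam n) ^ (p + 1) *
                ‖dd1 lam f n‖ ^ p)) ^ (1 / p) ≤
          ((∑' n : ℤ, ENNReal.ofReal ((lam (n + 2) - lam n) *
              ‖dd2 lam f n‖ ^ p)) +
            ∑' n : ℤ, ENNReal.ofReal ((lam (n + 1) - lam (n - 1)) *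
              ‖f n‖ ^ p)) ^ (1 / p) ∧
        ((∑' n : ℤ, ENNReal.ofReal ((lam (n + 2) - lam n) *
              ‖dd2 lam f n‖ ^ p)) +
            ∑' n : ℤ, ENNReal.ofReal ((lam (n + 1) - lam (n - 1)) *
              ‖f n‖ ^ p)) ^ (1 / p) ≤
          ENNReal.ofReal C *
            ((∑' n : ℤ, ENNReal.ofReal ((lam (n + 2) - lam n) *
                ‖dd2 lam f n‖ ^ p)) +
              (∑' n : ℤ, ENNReal.ofReal ((lam (n + 2) - lam n) *
                ‖f n‖ ^ p)) +
              ∑' n : ℤ, ENNReal.ofReal ((lam (n + 2) - lam n) ^ (p + 1) *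
                ‖dd1 lam f n‖ ^ p)) ^ (1 / p) := by
  classical
  set β₀ : ℝ := 24 * (1 + K) ^ 3 * (3 + 6 * K) with hβ₀def
  set β₁ : ℝ := 2 * (1 + K) ^ 2 * (2 + 6 * K) with hβ₁def
  have hβ₀0 : (0:ℝ) ≤ β₀ := by rw [hβ₀def]; positivity
  have hβ₁0 : (0:ℝ) ≤ β₁ := by rw [hβ₁def]; positivity
  set Γ : ℝ := 1 + (1 + β₁ * (1 + β₀)) + 2 * K * (β₀ + (2 * β₀ + 4 * K)) with hΓdef
  have hΓ1 : 1 ≤ Γ := by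
    have h1 : 0 ≤ β₁ * (1 + β₀) := mul_nonneg hβ₁0 (by linarith)
    have h2 : 0 ≤ 2 * K * (β₀ + (2 * β₀ + 4 * K)) :=
      mul_nonneg (by linarith) (by linarith)
    rw [hΓdef]
    linarith
  have hΓ0 : (0:ℝ) < Γ := by linarith
  have hΓinv : Γ⁻¹ ≤ 1 := by
    rw [inv_eq_one_div, div_le_one hΓ0]
    exact hΓ1
  refine ⟨Γ⁻¹, 4, inv_pos.mpr hΓ0, by linarith, ?_⟩
  intro p hp lam hgood hgap f
  obtain ⟨hm, hbot, htop⟩ := hgood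
  have hp0 : (0:ℝ) < p := by linarith
  have hp0' : (0:ℝ) ≤ 1 / p := by positivity
  set E : ℝ≥0∞ := SA p lam f + SBp p lam f with hE
  set E' : ℝ≥0∞ := SA p lam f + SB p lam f + SD p lam f with hE'
  have hT0E : ST0 p lam f ≤ ENNReal.ofReal (β₀ ^ p) * E := L_T0 hK hp hm htop hgap
  have hSA_E : SA p lam f ≤ ENNReal.ofReal ((1:ℝ) ^ p) * E := by
    rw [Real.one_rpow, ENNReal.ofReal_one, one_mul, hE]
    exact le_self_add
  have hSBp_E : SBp p lam f ≤ ENNReal.ofReal ((1:ℝ) ^ p) * E := by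
    rw [Real.one_rpow, ENNReal.ofReal_one, one_mul, hE]
    exact le_add_self
  have hsum1 : SBp p lam f + ST0 p lam f ≤ ENNReal.ofReal ((1 + β₀) ^ p) * E :=
    good_add hp (by norm_num) hβ₀0 hSBp_E hT0E
  have hS1E : SS1 p lam f ≤ ENNReal.ofReal ((β₁ * (1 + β₀)) ^ p) * E :=
    good_comp hβ₁0 (by linarith) (L_S1 hK hp hm htop hgap) hsum1
  have hT1E : ST1 p lam f ≤ ENNReal.ofReal ((2 * β₀ + 4 * K) ^ p) * E := by
    refine le_trans (L_T1 hK hp hm hgap) ?_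
    have h1 : ENNReal.ofReal ((2:ℝ) ^ p) * ST0 p lam f
        ≤ ENNReal.ofReal ((2 * β₀) ^ p) * E :=
      good_comp (by norm_num) hβ₀0 (le_refl _) hT0E
    have h2 : ENNReal.ofReal ((4 * K) ^ p) * SA p lam f
        ≤ ENNReal.ofReal ((4 * K) ^ p) * E := by
      refine mul_le_mul_right ?_ _
      rw [hE]; exact le_self_add
    refine le_trans (add_le_add h1 h2) ?_
    exact good_add hp (by positivity) (by linarith) (le_refl _) (le_refl _)
  have hDE : SD p lam f
      ≤ ENNReal.ofReal ((2 * K * (β₀ + (2 * β₀ + 4 * K))) ^ p) * E := by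
    refine good_comp (by linarith) (by linarith) (L_D hK hp hm hgap) ?_
    exact good_add hp hβ₀0 (by linarith) hT0E hT1E
  have hBE : SB p lam f ≤ ENNReal.ofReal ((1 + β₁ * (1 + β₀)) ^ p) * E := by
    refine le_trans (L_B hp hm) ?_
    exact good_add hp (by norm_num) (mul_nonneg hβ₁0 (by linarith)) hSBp_E hS1E
  have hb10 : (0:ℝ) ≤ β₁ * (1 + β₀) := mul_nonneg hβ₁0 (by linarith)
  have hb20 : (0:ℝ) ≤ 2 * K * (β₀ + (2 * β₀ + 4 * K)) :=
    mul_nonneg (by linarith) (by linarith)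
  have hkey1 : E' ≤ ENNReal.ofReal (Γ ^ p) * E := by
    have h1 : SA p lam f + SB p lam f
        ≤ ENNReal.ofReal ((1 + (1 + β₁ * (1 + β₀))) ^ p) * E :=
      good_add hp (by norm_num) (by linarith) hSA_E hBE
    exact good_add hp (by linarith) hb20 h1 hDE
  have hSA_E' : SA p lam f ≤ ENNReal.ofReal ((1:ℝ) ^ p) * E' := by
    rw [Real.one_rpow, ENNReal.ofReal_one, one_mul, hE']
    exact le_trans le_self_add le_self_add
  have hSB_E' : SB p lam f ≤ ENNReal.ofReal ((1:ℝ) ^ p) * E' := by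
    rw [Real.one_rpow, ENNReal.ofReal_one, one_mul, hE']
    exact le_trans le_add_self le_self_add
  have hSBSD_E' : SB p lam f + SD p lam f ≤ ENNReal.ofReal ((1:ℝ) ^ p) * E' := by
    rw [Real.one_rpow, ENNReal.ofReal_one, one_mul, hE', add_assoc]
    exact le_add_self
  have hkey2 : E ≤ ENNReal.ofReal ((4:ℝ) ^ p) * E' := by
    have hBp : SBp p lam f ≤ ENNReal.ofReal (((1:ℝ) + 2 * 1) ^ p) * E' := by
      refine le_trans (L_easy hK hp hm) ?_
      have h2 : ENNReal.ofReal ((2:ℝ) ^ p) * (SB p lam f + SD p lam f)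
          ≤ ENNReal.ofReal (((2:ℝ) * 1) ^ p) * E' :=
        good_comp (by norm_num) (by norm_num) (le_refl _) hSBSD_E'
      exact good_add hp (by norm_num) (by norm_num) hSB_E' h2
    have hfin := good_add hp (by norm_num) (by norm_num) hSA_E' hBp
    rwa [show (1:ℝ) + (1 + 2 * 1) = 4 by norm_num] at hfin
  -- rpow manipulations
  have hpow : ∀ (X Y : ℝ≥0∞) (c : ℝ), 0 ≤ c → X ≤ ENNReal.ofReal (c ^ p) * Y →
      X ^ (1 / p) ≤ ENNReal.ofReal c * Y ^ (1 / p) := by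
    intro X Y c hc hXY
    have h1 := ENNReal.rpow_le_rpow hXY hp0'
    rw [ENNReal.mul_rpow_of_nonneg _ _ hp0',
      ← ENNReal.ofReal_rpow_of_nonneg hc hp0.le,
      ← ENNReal.rpow_mul, mul_one_div_cancel hp0.ne', ENNReal.rpow_one] at h1
    exact h1
  constructor
  · show ENNReal.ofReal Γ⁻¹ * E' ^ (1 / p) ≤ E ^ (1 / p)
    have h1 := hpow E' E Γ (le_of_lt hΓ0) hkey1
    calc ENNReal.ofReal Γ⁻¹ * E' ^ (1 / p)
        ≤ ENNReal.ofReal Γ⁻¹ * (ENNReal.ofReal Γ * E ^ (1 / p)) := mul_le_mul_right h1 _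
      _ = (ENNReal.ofReal Γ⁻¹ * ENNReal.ofReal Γ) * E ^ (1 / p) := by rw [mul_assoc]
      _ = E ^ (1 / p) := by
          rw [← ENNReal.ofReal_mul (inv_nonneg.mpr (le_of_lt hΓ0)),
            inv_mul_cancel₀ hΓ0.ne', ENNReal.ofReal_one, one_mul]
  · show E ^ (1 / p) ≤ ENNReal.ofReal 4 * E' ^ (1 / p)
    exact hpow E E' 4 (by norm_num) hkey2
end
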